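/- arXiv:0903.3220 — 10 statements merged into one kernel-verified Lean document; each statement's English description precedes it below -/
import Mathlib

section
/- Let W₁ be a polynomial in the variables x₁,…,x_r over ℂ and W₂ a polynomial in the disjoint variables y₁,…,y_s over ℂ, and let W = W₁ + W₂, viewed as a polynomial in all r+s variables. Then there is an isomorphism of ℂ-algebras ℂ[x₁,…,x_r,y₁,…,y_s]/J(W) ≅ (ℂ[x₁,…,x_r]/J(W₁)) ⊗_ℂ (ℂ[y₁,…,y_s]/J(W₂)), where J(f) denotes the Jacobian ideal of f, i.e. the ideal generated by all first-order partial derivatives of f. -/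
open MvPolynomial

lemma pderiv_rename_of_not_mem {σ τ : Type*} [DecidableEq τ] {f : σ → τ} {i : τ}
    (h : i ∉ Set.range f) (q : MvPolynomial σ ℂ) :
    pderiv i (rename f q) = 0 := by
  induction q using MvPolynomial.induction_on with
  | C a => simp
  | add p q hp hq => simp [hp, hq]
  | mul_X p n hp =>
    simp [map_mul, hp, pderiv_X_of_ne (show f n ≠ i from fun e => h ⟨n, e⟩)]

noncomputable def sumTensorEquiv (r s : ℕ) : MvPolynomial (Fin r ⊕ Fin s) ℂ ≃ₐ[ℂ]
    TensorProduct ℂ (MvPolynomial (Fin r) ℂ) (MvPolynomial (Fin s) ℂ) :=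
  AlgEquiv.ofAlgHom
    (aeval (Sum.elim (fun i => (X i : MvPolynomial (Fin r) ℂ) ⊗ₜ 1)
                     (fun j => 1 ⊗ₜ (X j : MvPolynomial (Fin s) ℂ))))
    (Algebra.TensorProduct.productMap
      ((rename Sum.inl : MvPolynomial (Fin r) ℂ →ₐ[ℂ] MvPolynomial (Fin r ⊕ Fin s) ℂ))
      ((rename Sum.inr : MvPolynomial (Fin s) ℂ →ₐ[ℂ] MvPolynomial (Fin r ⊕ Fin s) ℂ)))
    (by ext i <;> simp [Algebra.TensorProduct.productMap_apply_tmul])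
    (by ext (i|j) <;> simp)

lemma sumTensorEquiv_comp_inl (r s : ℕ) :
    (sumTensorEquiv r s).toAlgHom.comp (rename Sum.inl) =
      (Algebra.TensorProduct.includeLeft :
        MvPolynomial (Fin r) ℂ →ₐ[ℂ] TensorProduct ℂ (MvPolynomial (Fin r) ℂ) (MvPolynomial (Fin s) ℂ)) := by
  ext i
  simp [sumTensorEquiv]

lemma sumTensorEquiv_comp_inr (r s : ℕ) :
    (sumTensorEquiv r s).toAlgHom.comp (rename Sum.inr) =
      (Algebra.TensorProduct.includeRight :
        MvPolynomial (Fin s) ℂ →ₐ[ℂ] TensorProduct ℂ (MvPolynomial (Fin r) ℂ) (MvPolynomial (Fin s) ℂ)) := by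
  ext j
  simp [sumTensorEquiv]

lemma idealMapMapAlg {R A B C : Type*} [CommSemiring R] [CommSemiring A] [CommSemiring B]
    [CommSemiring C] [Algebra R A] [Algebra R B] [Algebra R C]
    (f : A →ₐ[R] B) (g : B →ₐ[R] C) (I : Ideal A) :
    Ideal.map g (Ideal.map f I) = Ideal.map (g.comp f) I :=
  Ideal.map_map f.toRingHom g.toRingHom

/-- The Milnor ring of a sum of singularities in disjoint variables is the
tensor product of the Milnor rings: `ℂ[x,y]/J(W₁+W₂) ≅ ℂ[x]/J(W₁) ⊗ ℂ[y]/J(W₂)`. -/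
theorem milnor_ring_of_sum_of_singularities (r s : ℕ)
    (W₁ : MvPolynomial (Fin r) ℂ) (W₂ : MvPolynomial (Fin s) ℂ) :
    Nonempty
      ((MvPolynomial (Fin r ⊕ Fin s) ℂ ⧸
          (Ideal.span (Set.range fun i : Fin r ⊕ Fin s =>
            pderiv i (rename Sum.inl W₁ + rename Sum.inr W₂)) :
            Ideal (MvPolynomial (Fin r ⊕ Fin s) ℂ)))
        ≃ₐ[ℂ]
       TensorProduct ℂ
        (MvPolynomial (Fin r) ℂ ⧸
          (Ideal.span (Set.range fun i : Fin r => pderiv i W₁) :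
            Ideal (MvPolynomial (Fin r) ℂ)))
        (MvPolynomial (Fin s) ℂ ⧸
          (Ideal.span (Set.range fun i : Fin s => pderiv i W₂) :
            Ideal (MvPolynomial (Fin s) ℂ)))) := by
  classical
  let I : Ideal (MvPolynomial (Fin r) ℂ) :=
    Ideal.span (Set.range fun i : Fin r => pderiv i W₁)
  let J : Ideal (MvPolynomial (Fin s) ℂ) :=
    Ideal.span (Set.range fun i : Fin s => pderiv i W₂)
  let Psi := Algebra.TensorProduct.map (Ideal.Quotient.mkₐ ℂ I) (Ideal.Quotient.mkₐ ℂ J)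
  let Phi := Psi.comp (sumTensorEquiv r s).toAlgHom
  have hPsisurj : Function.Surjective Psi := by
    intro z
    induction z using TensorProduct.induction_on with
    | zero => exact ⟨0, map_zero Psi⟩
    | tmul a b =>
      obtain ⟨a, rfl⟩ := Ideal.Quotient.mkₐ_surjective ℂ I a
      obtain ⟨b, rfl⟩ := Ideal.Quotient.mkₐ_surjective ℂ J b
      exact ⟨a ⊗ₜ b, rfl⟩
    | add x y hx hy =>
      obtain ⟨x, rfl⟩ := hx; obtain ⟨y, rfl⟩ := hy
      exact ⟨x + y, map_add Psi _ _⟩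
  have hPhisurj : Function.Surjective Phi := hPsisurj.comp (sumTensorEquiv r s).surjective
  have hd : (fun i : Fin r ⊕ Fin s => pderiv i (rename Sum.inl W₁ + rename Sum.inr W₂)) =
      Sum.elim (fun i : Fin r => rename Sum.inl (pderiv i W₁))
        (fun j : Fin s => rename Sum.inr (pderiv j W₂)) := by
    funext i
    cases i with
    | inl i =>
      rw [map_add, pderiv_rename Sum.inl_injective,
        pderiv_rename_of_not_mem (by simp [Set.range, Sum.inl.injEq]), add_zero, Sum.elim_inl]
    | inr j =>
      rw [map_add, pderiv_rename Sum.inr_injective,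
        pderiv_rename_of_not_mem (by simp [Set.range]), zero_add, Sum.elim_inr]
  have hkerPsi : RingHom.ker Psi =
      I.map (Algebra.TensorProduct.includeLeft :
        MvPolynomial (Fin r) ℂ →ₐ[ℂ] TensorProduct ℂ (MvPolynomial (Fin r) ℂ) (MvPolynomial (Fin s) ℂ)) ⊔
      J.map (Algebra.TensorProduct.includeRight :
        MvPolynomial (Fin s) ℂ →ₐ[ℂ] TensorProduct ℂ (MvPolynomial (Fin r) ℂ) (MvPolynomial (Fin s) ℂ)) := by
    rw [show Psi = Algebra.TensorProduct.map (Ideal.Quotient.mkₐ ℂ I) (Ideal.Quotient.mkₐ ℂ J) from rfl,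
      Algebra.TensorProduct.map_ker _ _ (Ideal.Quotient.mkₐ_surjective ℂ I)
        (Ideal.Quotient.mkₐ_surjective ℂ J)]
    have h1 : RingHom.ker (Ideal.Quotient.mkₐ ℂ I) = I := Ideal.mk_ker
    have h2 : RingHom.ker (Ideal.Quotient.mkₐ ℂ J) = J := Ideal.mk_ker
    rw [h1, h2]
  have hmap : Ideal.map (sumTensorEquiv r s).toAlgHom
      (Ideal.span (Set.range fun i : Fin r ⊕ Fin s =>
        pderiv i (rename Sum.inl W₁ + rename Sum.inr W₂))) = RingHom.ker Psi := by
    rw [hkerPsi, hd, Set.Sum.elim_range, Ideal.span_union, Ideal.map_sup]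
    congr 1
    · rw [show (Set.range fun i : Fin r => rename Sum.inl (pderiv i W₁)) =
          (rename Sum.inl : MvPolynomial (Fin r) ℂ →ₐ[ℂ] MvPolynomial (Fin r ⊕ Fin s) ℂ) ''
            (Set.range fun i : Fin r => pderiv i W₁) by
            rw [← Set.range_comp]; rfl,
        ← Ideal.map_span, idealMapMapAlg, sumTensorEquiv_comp_inl r s]
    · rw [show (Set.range fun j : Fin s => rename Sum.inr (pderiv j W₂)) =
          (rename Sum.inr : MvPolynomial (Fin s) ℂ →ₐ[ℂ] MvPolynomial (Fin r ⊕ Fin s) ℂ) ''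
            (Set.range fun j : Fin s => pderiv j W₂) by
            rw [← Set.range_comp]; rfl,
        ← Ideal.map_span, idealMapMapAlg, sumTensorEquiv_comp_inr r s]
  have hker : RingHom.ker Phi = Ideal.span (Set.range fun i : Fin r ⊕ Fin s =>
      pderiv i (rename Sum.inl W₁ + rename Sum.inr W₂)) := by
    have h1 : RingHom.ker Phi = Ideal.comap (sumTensorEquiv r s).toAlgHom (RingHom.ker Psi) := rfl
    rw [h1, ← hmap, Ideal.comap_map_of_bijective (sumTensorEquiv r s).toAlgHom
      (show Function.Bijective (sumTensorEquiv r s).toAlgHom from (sumTensorEquiv r s).bijective)]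
  exact ⟨(Ideal.quotientEquivAlgOfEq ℂ hker.symm).trans
    (Ideal.quotientKerAlgEquivOfSurjective hPhisurj)⟩
end

section
/- The quotient ring ℂ[X,Y]/(3X²Y, X³ + 7Y⁶) is a finite-dimensional ℂ-vector space of dimension 15. -/
open MvPolynomial

namespace MilnorE19T

noncomputable section

abbrev R2 : Type := MvPolynomial (Fin 2) ℂ

def g1 : R2 := (3 : R2) * X 0 ^ 2 * X 1
def g2 : R2 := X 0 ^ 3 + 7 * X 1 ^ 6

def I : Ideal R2 := Ideal.span {g1, g2}

abbrev Q : Type := R2 ⧸ I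

/-- exponent finsupp for `x^a y^b` -/
def e (a b : ℕ) : Fin 2 →₀ ℕ := Finsupp.single 0 a + Finsupp.single 1 b

lemma e_apply (a b : ℕ) (i : Fin 2) : e a b i = if i = 0 then a else b := by
  fin_cases i <;> simp [e, Finsupp.single_apply]

lemma e_add (a b c d : ℕ) : e a b + e c d = e (a + c) (b + d) := by
  ext i; fin_cases i <;> simp [e_apply]

lemma e_le_e {a b c d : ℕ} : e a b ≤ e c d ↔ a ≤ c ∧ b ≤ d := by
  rw [Finsupp.le_def]
  constructor
  · intro h; exact ⟨by simpa [e_apply] using h 0, by simpa [e_apply] using h 1⟩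
  · rintro ⟨h1, h2⟩ i; fin_cases i <;> simpa [e_apply]

lemma e_inj {a b c d : ℕ} : e a b = e c d ↔ a = c ∧ b = d := by
  constructor
  · intro h
    exact ⟨by simpa [e_apply] using DFunLike.congr_fun h 0,
           by simpa [e_apply] using DFunLike.congr_fun h 1⟩
  · rintro ⟨rfl, rfl⟩; rfl

lemma e_sub (a b c d : ℕ) : e a b - e c d = e (a - c) (b - d) := by
  ext i; fin_cases i <;> simp [Finsupp.tsub_apply, e_apply]

lemma eq_e (n : Fin 2 →₀ ℕ) : n = e (n 0) (n 1) := by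
  ext i; fin_cases i <;> simp [e_apply]

def mono (p : ℕ × ℕ) : R2 := monomial (e p.1 p.2) 1

lemma g1_eq : g1 = monomial (e 2 1) 3 := by
  rw [g1, (map_ofNat (C : ℂ →+* R2) 3).symm, X_pow_eq_monomial, C_mul_monomial,
    show X (1 : Fin 2) = monomial (Finsupp.single 1 1) (1 : ℂ) from rfl,
    monomial_mul, e]
  norm_num

lemma e_single0 (a : ℕ) : e a 0 = Finsupp.single 0 a := by
  ext i; fin_cases i <;> simp [e_apply, Finsupp.single_apply]

lemma e_single1 (b : ℕ) : e 0 b = Finsupp.single 1 b := by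
  ext i; fin_cases i <;> simp [e_apply, Finsupp.single_apply]

lemma g2_eq : g2 = monomial (e 3 0) 1 + monomial (e 0 6) 7 := by
  rw [g2, (map_ofNat (C : ℂ →+* R2) 7).symm, X_pow_eq_monomial, X_pow_eq_monomial,
    C_mul_monomial, e_single0, e_single1, mul_one]

/-- the 15 basis exponents -/
def S : Finset (ℕ × ℕ) :=
  {(0,0),(0,1),(0,2),(0,3),(0,4),(0,5),(0,6),
   (1,0),(1,1),(1,2),(1,3),(1,4),(1,5),(1,6),(2,0)}

lemma mem_S_iff (a b : ℕ) : (a, b) ∈ S ↔ (a ≤ 1 ∧ b ≤ 6) ∨ (a = 2 ∧ b = 0) := by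
  constructor
  · intro h
    simp only [S, Finset.mem_insert, Finset.mem_singleton, Prod.mk.injEq] at h
    omega
  · rintro (⟨h1, h2⟩ | ⟨rfl, rfl⟩)
    · interval_cases a <;> interval_cases b <;> decide
    · decide

/-- dual functionals -/
def lam (p : ℕ × ℕ) : R2 →ₗ[ℂ] ℂ :=
  lcoeff ℂ (e p.1 p.2) - (if p.2 = 6 then (7 : ℂ) else 0) • lcoeff ℂ (e (p.1 + 3) 0)

lemma lam_vanish (p : ℕ × ℕ) (h1 : p.1 ≤ 2) (h2 : p.2 ≤ 6) (h3 : 2 ≤ p.1 → p.2 = 0)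
    {f : R2} (hf : f ∈ I) : lam p f = 0 := by
  obtain ⟨a, b, rfl⟩ := Ideal.mem_span_pair.mp hf
  have hg1 : ∀ m : Fin 2 →₀ ℕ, ¬ (e 2 1 ≤ m) → coeff m (a * g1) = 0 := by
    intro m hm
    rw [g1_eq, coeff_mul_monomial', if_neg hm]
  have key1 : lam p (a * g1) = 0 := by
    simp only [lam, LinearMap.sub_apply, LinearMap.smul_apply, lcoeff_apply, smul_eq_mul]
    rw [hg1 _ (by rw [e_le_e]; rintro ⟨u, w⟩; have := h3 u; omega),
      hg1 _ (by rw [e_le_e]; omega)]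
    ring
  have key2 : lam p (b * g2) = 0 := by
    have expand : ∀ m : Fin 2 →₀ ℕ, coeff m (b * g2) =
        (if e 3 0 ≤ m then coeff (m - e 3 0) b * 1 else 0) +
        (if e 0 6 ≤ m then coeff (m - e 0 6) b * 7 else 0) := by
      intro m
      rw [g2_eq, mul_add, coeff_add, coeff_mul_monomial', coeff_mul_monomial']
    have c2 : coeff (e (p.1 + 3) 0) (b * g2) = coeff (e p.1 0) b := by
      rw [expand, if_pos (by rw [e_le_e]; omega), if_neg (by rw [e_le_e]; omega), e_sub]
      simp
    have c1 : coeff (e p.1 p.2) (b * g2)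
        = (if p.2 = 6 then (7 : ℂ) else 0) * coeff (e p.1 0) b := by
      rw [expand, if_neg (by rw [e_le_e]; omega)]
      by_cases h6 : p.2 = 6
      · rw [if_pos (by rw [e_le_e]; omega), e_sub, Nat.sub_zero,
          show p.2 - 6 = 0 by omega, if_pos h6]
        ring
      · rw [if_neg (by rw [e_le_e]; omega), if_neg h6]
        ring
    simp only [lam, LinearMap.sub_apply, LinearMap.smul_apply, lcoeff_apply, smul_eq_mul,
      c1, c2]
    ring
  rw [map_add, key1, key2, add_zero]

lemma lam_mono (p q : ℕ × ℕ) (hq : q.1 ≤ 2) :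
    lam p (mono q) = if q = p then 1 else 0 := by
  simp only [lam, mono, LinearMap.sub_apply, LinearMap.smul_apply, lcoeff_apply,
    smul_eq_mul, coeff_monomial]
  have n1 : e q.1 q.2 ≠ e (p.1 + 3) 0 := fun hh => by
    obtain ⟨u, w⟩ := e_inj.mp hh; omega
  by_cases h : q = p
  · subst h
    rw [if_pos rfl, if_neg n1, if_pos rfl]
    ring
  · have n2 : e q.1 q.2 ≠ e p.1 p.2 := fun hh =>
      h (by obtain ⟨u, w⟩ := e_inj.mp hh; exact Prod.ext u w)
    rw [if_neg n2, if_neg n1, if_neg h]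
    ring

-- membership facts
lemma mono_mem_I {a b : ℕ} (ha : 2 ≤ a) (hb : 1 ≤ b) : mono (a, b) ∈ I := by
  have : mono (a, b) = (C (1/3 : ℂ) * mono (a - 2, b - 1)) * g1 := by
    rw [mono, mono, g1_eq, C_mul_monomial, monomial_mul, e_add]
    have : a - 2 + 2 = a ∧ b - 1 + 1 = b := by omega
    rw [this.1, this.2]
    norm_num
  rw [this]
  exact Ideal.mul_mem_left _ _ (Ideal.subset_span (by left; rfl))

lemma g2_mem_I : g2 ∈ I := Ideal.subset_span (by right; rfl)

lemma mono_mul_g2 (a b : ℕ) :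
    mono (a, b) * g2 = monomial (e (a + 3) b) 1 + monomial (e a (b + 6)) 7 := by
  rw [mono, g2_eq, mul_add, monomial_mul, monomial_mul, e_add, e_add]
  norm_num

lemma mono_mem_I' {a b : ℕ} (hb : 7 ≤ b) (ha : a ≤ 1) : mono (a, b) ∈ I := by
  have key : mono (a, b) = C (1/7 : ℂ) * (mono (a, b - 6) * g2)
      - C (1/7 : ℂ) * mono (a + 3, b - 6) := by
    rw [mono_mul_g2]
    have hb6 : b - 6 + 6 = b := by omega
    rw [hb6]
    simp only [mono, mul_add, C_mul_monomial]
    norm_num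
  rw [key]
  exact Submodule.sub_mem _ (Ideal.mul_mem_left _ _ (Ideal.mul_mem_left _ _ g2_mem_I))
    (Ideal.mul_mem_left _ _ (mono_mem_I (by omega) (by omega)))

-- basis vectors
def v (p : {x : ℕ × ℕ // x ∈ S}) : Q := Ideal.Quotient.mk I (mono p.1)

lemma span_v : Submodule.span ℂ (Set.range v) = ⊤ := by
  rw [eq_top_iff]
  rintro q -
  obtain ⟨f, rfl⟩ := Ideal.Quotient.mk_surjective q
  have hmono : ∀ a b : ℕ, Ideal.Quotient.mk I (mono (a, b)) ∈ Submodule.span ℂ (Set.range v) := by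
    intro a b
    by_cases hS : (a, b) ∈ S
    · exact Submodule.subset_span ⟨⟨(a, b), hS⟩, rfl⟩
    by_cases hI : 2 ≤ a ∧ 1 ≤ b
    · rw [Ideal.Quotient.eq_zero_iff_mem.mpr (mono_mem_I hI.1 hI.2)]
      exact Submodule.zero_mem _
    by_cases hBig : 7 ≤ b
    · have ha1 : a ≤ 1 := by
        by_contra h; exact hI ⟨by omega, by omega⟩
      rw [Ideal.Quotient.eq_zero_iff_mem.mpr (mono_mem_I' hBig ha1)]
      exact Submodule.zero_mem _
    -- remaining: b = 0 and a ≥ 3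
    have hb0 : b = 0 ∧ 3 ≤ a := by
      rw [mem_S_iff] at hS
      omega
    obtain ⟨rfl, ha3⟩ := hb0
    have key : (Ideal.Quotient.mk I) (mono (a, 0))
        = (-7 : ℂ) • (Ideal.Quotient.mk I) (mono (a - 3, 6)) := by
      have heq : mono (a, 0) = mono (a - 3, 0) * g2 - C (7 : ℂ) * mono (a - 3, 6) := by
        rw [mono_mul_g2]
        have h3 : a - 3 + 3 = a := by omega
        rw [h3]
        simp only [mono, C_mul_monomial, mul_one]
        ring
      rw [heq, map_sub, Ideal.Quotient.eq_zero_iff_mem.mpr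
        (Ideal.mul_mem_left _ _ g2_mem_I), zero_sub]
      rw [show C (7 : ℂ) * mono (a - 3, 6) = (7 : ℂ) • mono (a - 3, 6) by
        rw [smul_eq_C_mul]]
      rw [← Ideal.Quotient.mkₐ_eq_mk (R₁ := ℂ), map_smul]
      simp [Ideal.Quotient.mkₐ_eq_mk]
    rw [key]
    apply Submodule.smul_mem
    by_cases h2 : a - 3 ≤ 1
    · refine Submodule.subset_span ⟨⟨(a - 3, 6), ?_⟩, rfl⟩
      rw [mem_S_iff]
      omega
    · rw [Ideal.Quotient.eq_zero_iff_mem.mpr (mono_mem_I (by omega) (by omega))]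
      exact Submodule.zero_mem _
  -- now a general polynomial
  have hsplit : Ideal.Quotient.mk I f
      = ∑ m ∈ f.support, Ideal.Quotient.mk I (monomial m (coeff m f)) := by
    conv_lhs => rw [as_sum f]
    rw [map_sum]
  rw [hsplit]
  apply Submodule.sum_mem
  intro m hm
  have : (monomial m) (coeff m f) = (coeff m f) • mono (m 0, m 1) := by
    show (monomial m) (coeff m f) = (coeff m f) • monomial (e (m 0) (m 1)) 1
    rw [smul_monomial, smul_eq_mul, mul_one, ← eq_e m]
  rw [this, ← Ideal.Quotient.mkₐ_eq_mk (R₁ := ℂ), map_smul]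
  exact Submodule.smul_mem _ _ (by rw [Ideal.Quotient.mkₐ_eq_mk]; exact hmono _ _)

lemma indep_v : LinearIndependent ℂ v := by
  rw [Fintype.linearIndependent_iff]
  intro g hg i
  have hS' : ∀ p ∈ S, p.1 ≤ 2 ∧ p.2 ≤ 6 ∧ (2 ≤ p.1 → p.2 = 0) := by decide
  have hS : ∀ p : {x : ℕ × ℕ // x ∈ S}, p.1.1 ≤ 2 ∧ p.1.2 ≤ 6 ∧ (2 ≤ p.1.1 → p.1.2 = 0) :=
    fun p => hS' p.1 p.2
  have hsum : (∑ j, g j • mono j.1) ∈ I := by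
    rw [← Ideal.Quotient.eq_zero_iff_mem, ← Ideal.Quotient.mkₐ_eq_mk (R₁ := ℂ), map_sum]
    simp only [map_smul, Ideal.Quotient.mkₐ_eq_mk]
    exact hg
  have := lam_vanish i.1 (hS i).1 (hS i).2.1 (hS i).2.2 hsum
  rw [map_sum] at this
  simp only [map_smul, smul_eq_mul] at this
  rw [Finset.sum_congr rfl (fun j _ => by
    rw [lam_mono i.1 j.1 (hS j).1])] at this
  simpa [mul_ite, Subtype.coe_inj, Finset.sum_ite_eq] using this

def bas : Module.Basis {x : ℕ × ℕ // x ∈ S} ℂ Q := Module.Basis.mk indep_v (by rw [span_v])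

lemma card_S : Fintype.card {x : ℕ × ℕ // x ∈ S} = 15 := by
  rw [Fintype.card_coe]; rfl

theorem main : FiniteDimensional ℂ Q ∧ Module.finrank ℂ Q = 15 := by
  have h1 : FiniteDimensional ℂ Q := Module.Finite.of_basis bas
  refine ⟨h1, ?_⟩
  rw [Module.finrank_eq_card_basis bas, card_S]

end

end MilnorE19T

theorem milnor_ring_E19T_dim :
    FiniteDimensional ℂ (MvPolynomial (Fin 2) ℂ ⧸
      Ideal.span ({(3 : MvPolynomial (Fin 2) ℂ) * X 0 ^ 2 * X 1, X 0 ^ 3 + 7 * X 1 ^ 6} : Set (MvPolynomial (Fin 2) ℂ))) ∧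
    Module.finrank ℂ (MvPolynomial (Fin 2) ℂ ⧸
      Ideal.span ({(3 : MvPolynomial (Fin 2) ℂ) * X 0 ^ 2 * X 1, X 0 ^ 3 + 7 * X 1 ^ 6} : Set (MvPolynomial (Fin 2) ℂ))) = 15 :=
  MilnorE19T.main
end

section
/- The quotient ring ℂ[X,Y,Z]/(2X + Z³, 3Y²Z, Y³ + 3XZ²) is a finite-dimensional ℂ-vector space of dimension 13. -/
open MvPolynomial

noncomputable section Q11Taux

abbrev R3 : Type := MvPolynomial (Fin 3) ℂ

/-- indicator basis vector in normal-form space, zero if z-exponent exceeds 5 -/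
def ind (q : ℕ × ℕ) : (ℕ × ℕ) →₀ ℂ := if q.2 ≤ 5 then Finsupp.single q 1 else 0

/-- normal form of the monomial y^j z^m in the Milnor ring -/
def nf : ℕ → ℕ → ((ℕ × ℕ) →₀ ℂ)
  | 0, m => ind (0, m)
  | 1, m => ind (1, m)
  | 2, 0 => ind (2, 0)
  | 2, _+1 => 0
  | 3, 0 => (3/2 : ℂ) • ind (0, 5)
  | 3, _+1 => 0
  | 4, 0 => (3/2 : ℂ) • ind (1, 5)
  | 4, _+1 => 0
  | _+5, _ => 0

lemma nf_R2 (j m : ℕ) : nf (j + 2) (m + 1) = 0 := by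
  match j with
  | 0 => rfl
  | 1 => rfl
  | 2 => rfl
  | n+3 => rfl

lemma nf_R3 (j m : ℕ) : nf (j + 3) m = (3/2 : ℂ) • nf j (m + 5) := by
  match j, m with
  | 0, 0 => rfl
  | 0, m+1 =>
      show (0 : (ℕ × ℕ) →₀ ℂ) = (3/2 : ℂ) • ind (0, m+1+5)
      rw [ind, if_neg (by omega)]; simp
  | 1, 0 => rfl
  | 1, m+1 =>
      show (0 : (ℕ × ℕ) →₀ ℂ) = (3/2 : ℂ) • ind (1, m+1+5)
      rw [ind, if_neg (by omega)]; simp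
  | 2, m =>
      show (0 : (ℕ × ℕ) →₀ ℂ) = (3/2 : ℂ) • nf 2 (m+5)
      rw [show m + 5 = (m+4)+1 from rfl]; simp [nf]
  | 3, m =>
      show (0 : (ℕ × ℕ) →₀ ℂ) = (3/2 : ℂ) • nf 3 (m+5)
      rw [show m + 5 = (m+4)+1 from rfl]; simp [nf]
  | 4, m =>
      show (0 : (ℕ × ℕ) →₀ ℂ) = (3/2 : ℂ) • nf 4 (m+5)
      rw [show m + 5 = (m+4)+1 from rfl]; simp [nf]
  | n+5, m =>
      show (0 : (ℕ × ℕ) →₀ ℂ) = (3/2 : ℂ) • nf (n+5) (m+5)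
      simp [nf]

/-- value of the normal-form map on a monomial exponent -/
def v (d : Fin 3 →₀ ℕ) : (ℕ × ℕ) →₀ ℂ :=
  ((-1 : ℂ)/2) ^ (d 0) • nf (d 1) (d 2 + 3 * d 0)

/-- the normal-form linear map -/
def φ : MvPolynomial (Fin 3) ℂ →ₗ[ℂ] ((ℕ × ℕ) →₀ ℂ) :=
  (basisMonomials (Fin 3) ℂ).constr ℂ v

lemma phi_monomial (d : Fin 3 →₀ ℕ) (r : ℂ) : φ (monomial d r) = r • v d := by
  have h1 : monomial d r = r • monomial d 1 := by rw [smul_monomial, smul_eq_mul, mul_one]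
  rw [h1, map_smul]
  congr 1
  have h2 := (basisMonomials (Fin 3) ℂ).constr_basis ℂ v d
  rwa [coe_basisMonomials] at h2

lemma g1_eq : (2 : R3) * X 0 + X 2 ^ 3
    = monomial (Finsupp.single 0 1) 2 + monomial (Finsupp.single 2 3) 1 := by
  rw [← map_ofNat (C : ℂ →+* R3) 2, ← pow_one (X 0 : R3), C_mul_X_pow_eq_monomial,
    X_pow_eq_monomial]

lemma g2_eq : (3 : R3) * X 1 ^ 2 * X 2
    = monomial (Finsupp.single 1 2 + Finsupp.single 2 1) 3 := by
  rw [← map_ofNat (C : ℂ →+* R3) 3, ← pow_one (X 2 : R3), C_mul_X_pow_eq_monomial,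
    X_pow_eq_monomial, monomial_mul, mul_one]

lemma g3_eq : (X 1 : R3) ^ 3 + 3 * X 0 * X 2 ^ 2
    = monomial (Finsupp.single 1 3) 1 + monomial (Finsupp.single 0 1 + Finsupp.single 2 2) 3 := by
  rw [← map_ofNat (C : ℂ →+* R3) 3, ← pow_one (X 0 : R3), C_mul_X_pow_eq_monomial,
    X_pow_eq_monomial, X_pow_eq_monomial, monomial_mul, mul_one]

lemma phi_mul_g1 (d : Fin 3 →₀ ℕ) (r : ℂ) :
    φ (monomial d r * ((2 : R3) * X 0 + X 2 ^ 3)) = 0 := by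
  rw [g1_eq, mul_add, monomial_mul, monomial_mul, map_add, phi_monomial, phi_monomial]
  unfold v
  norm_num [Finsupp.add_apply, Finsupp.single_apply, Fin.ext_iff]
  rw [show d 2 + 3 * (d 0 + 1) = d 2 + 3 + 3 * d 0 by ring, smul_smul, smul_smul, ← add_smul,
    show r * 2 * (-(1/2) : ℂ) ^ (d 0 + 1) + r * (-(1/2)) ^ (d 0) = 0 by ring, zero_smul]

lemma phi_mul_g2 (d : Fin 3 →₀ ℕ) (r : ℂ) :
    φ (monomial d r * ((3 : R3) * X 1 ^ 2 * X 2)) = 0 := by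
  rw [g2_eq, monomial_mul, phi_monomial]
  unfold v
  norm_num [Finsupp.add_apply, Finsupp.single_apply, Fin.ext_iff]
  exact Or.inr (by rw [show d 2 + 1 + 3 * d 0 = (d 2 + 3 * d 0) + 1 by ring]; exact nf_R2 _ _)

lemma phi_mul_g3 (d : Fin 3 →₀ ℕ) (r : ℂ) :
    φ (monomial d r * ((X 1 : R3) ^ 3 + 3 * X 0 * X 2 ^ 2)) = 0 := by
  rw [g3_eq, mul_add, monomial_mul, monomial_mul, map_add, phi_monomial, phi_monomial]
  unfold v
  norm_num [Finsupp.add_apply, Finsupp.single_apply, Fin.ext_iff]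
  rw [nf_R3 (d 1) (d 2 + 3 * d 0),
    show d 2 + 2 + 3 * (d 0 + 1) = (d 2 + 3 * d 0) + 5 by ring,
    smul_smul, smul_smul, smul_smul, ← add_smul,
    show r * (-(1/2) : ℂ) ^ (d 0) * (3/2) + r * 3 * (-(1/2)) ^ (d 0 + 1) = 0 by ring, zero_smul]

/-- the generating set of the Jacobian ideal -/
abbrev gens : Set R3 :=
  {(2 : R3) * X 0 + X 2 ^ 3, 3 * X 1 ^ 2 * X 2, X 1 ^ 3 + 3 * X 0 * X 2 ^ 2}

lemma phi_mul_gen (g : R3) (hg : g ∈ gens) (p : R3) : φ (p * g) = 0 := by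
  have : φ.comp (LinearMap.mulRight ℂ g) = 0 := by
    apply (basisMonomials (Fin 3) ℂ).ext
    intro d
    rw [coe_basisMonomials]
    simp only [LinearMap.comp_apply, LinearMap.mulRight_apply, LinearMap.zero_apply]
    rcases hg with h | h | h <;> subst h
    · exact phi_mul_g1 d 1
    · exact phi_mul_g2 d 1
    · exact phi_mul_g3 d 1
  have h2 := congrArg (fun f : R3 →ₗ[ℂ] ((ℕ × ℕ) →₀ ℂ) => f p) this
  simpa using h2

lemma phi_ideal (p : R3) (hp : p ∈ Ideal.span gens) : φ p = 0 := by
  have key : ∀ x, x ∈ Ideal.span gens → ∀ q : R3, φ (q * x) = 0 := by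
    intro x hx
    refine Submodule.span_induction ?_ ?_ ?_ ?_ hx
    · intro y hy q; exact phi_mul_gen y hy q
    · intro q; simp
    · intro y z _ _ hy hz q; rw [mul_add, map_add, hy q, hz q, add_zero]
    · intro a y _ hy q
      rw [smul_eq_mul, show q * (a * y) = (q * a) * y by ring]
      exact hy (q * a)
  have := key p hp 1
  simpa using this

/-- the 13 basis monomials -/
def MM : Fin 13 → R3 :=
  ![1, X 2, X 2^2, X 2^3, X 2^4, X 2^5,
    X 1, X 1 * X 2, X 1 * X 2^2, X 1 * X 2^3, X 1 * X 2^4, X 1 * X 2^5, X 1^2]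

def qp : Fin 13 → ℕ × ℕ :=
  ![(0,0),(0,1),(0,2),(0,3),(0,4),(0,5),(1,0),(1,1),(1,2),(1,3),(1,4),(1,5),(2,0)]

lemma qp_inj : Function.Injective qp := by decide

lemma phi_yz (j k : ℕ) : φ ((X 1 : R3) ^ j * X 2 ^ k) = nf j k := by
  rw [X_pow_eq_monomial, X_pow_eq_monomial, monomial_mul, mul_one, phi_monomial]
  unfold v
  norm_num [Finsupp.add_apply, Finsupp.single_apply, Fin.ext_iff]

lemma phi_MM (i : Fin 13) : φ (MM i) = Finsupp.single (qp i) 1 := by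
  fin_cases i
  · show φ ((1 : R3)) = Finsupp.single ((0:ℕ),(0:ℕ)) 1
    rw [show (1 : R3) = X 1 ^ 0 * X 2 ^ 0 by ring, phi_yz]
    norm_num [nf, ind]
  · show φ ((X 2 : R3)) = Finsupp.single ((0:ℕ),(1:ℕ)) 1
    rw [show (X 2 : R3) = X 1 ^ 0 * X 2 ^ 1 by ring, phi_yz]
    norm_num [nf, ind]
  · show φ ((X 2 : R3) ^ 2) = Finsupp.single ((0:ℕ),(2:ℕ)) 1
    rw [show (X 2 : R3) ^ 2 = X 1 ^ 0 * X 2 ^ 2 by ring, phi_yz]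
    norm_num [nf, ind]
  · show φ ((X 2 : R3) ^ 3) = Finsupp.single ((0:ℕ),(3:ℕ)) 1
    rw [show (X 2 : R3) ^ 3 = X 1 ^ 0 * X 2 ^ 3 by ring, phi_yz]
    norm_num [nf, ind]
  · show φ ((X 2 : R3) ^ 4) = Finsupp.single ((0:ℕ),(4:ℕ)) 1
    rw [show (X 2 : R3) ^ 4 = X 1 ^ 0 * X 2 ^ 4 by ring, phi_yz]
    norm_num [nf, ind]
  · show φ ((X 2 : R3) ^ 5) = Finsupp.single ((0:ℕ),(5:ℕ)) 1
    rw [show (X 2 : R3) ^ 5 = X 1 ^ 0 * X 2 ^ 5 by ring, phi_yz]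
    norm_num [nf, ind]
  · show φ ((X 1 : R3)) = Finsupp.single ((1:ℕ),(0:ℕ)) 1
    rw [show (X 1 : R3) = X 1 ^ 1 * X 2 ^ 0 by ring, phi_yz]
    norm_num [nf, ind]
  · show φ ((X 1 : R3) * X 2) = Finsupp.single ((1:ℕ),(1:ℕ)) 1
    rw [show (X 1 : R3) * X 2 = X 1 ^ 1 * X 2 ^ 1 by ring, phi_yz]
    norm_num [nf, ind]
  · show φ ((X 1 : R3) * X 2 ^ 2) = Finsupp.single ((1:ℕ),(2:ℕ)) 1
    rw [show (X 1 : R3) * X 2 ^ 2 = X 1 ^ 1 * X 2 ^ 2 by ring, phi_yz]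
    norm_num [nf, ind]
  · show φ ((X 1 : R3) * X 2 ^ 3) = Finsupp.single ((1:ℕ),(3:ℕ)) 1
    rw [show (X 1 : R3) * X 2 ^ 3 = X 1 ^ 1 * X 2 ^ 3 by ring, phi_yz]
    norm_num [nf, ind]
  · show φ ((X 1 : R3) * X 2 ^ 4) = Finsupp.single ((1:ℕ),(4:ℕ)) 1
    rw [show (X 1 : R3) * X 2 ^ 4 = X 1 ^ 1 * X 2 ^ 4 by ring, phi_yz]
    norm_num [nf, ind]
  · show φ ((X 1 : R3) * X 2 ^ 5) = Finsupp.single ((1:ℕ),(5:ℕ)) 1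
    rw [show (X 1 : R3) * X 2 ^ 5 = X 1 ^ 1 * X 2 ^ 5 by ring, phi_yz]
    norm_num [nf, ind]
  · show φ ((X 1 : R3) ^ 2) = Finsupp.single ((2:ℕ),(0:ℕ)) 1
    rw [show (X 1 : R3) ^ 2 = X 1 ^ 2 * X 2 ^ 0 by ring, phi_yz]
    norm_num [nf, ind]

abbrev Igen : Ideal R3 := Ideal.span gens

abbrev QQ : Type := R3 ⧸ Igen

def pr : R3 →ₐ[ℂ] QQ := Ideal.Quotient.mkₐ ℂ Igen

def aa : QQ := pr (X 0)
def bb : QQ := pr (X 1)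
def cc : QQ := pr (X 2)

/-- the candidate basis of the quotient -/
def NN : Fin 13 → QQ := fun i => bb ^ (qp i).1 * cc ^ (qp i).2

lemma pr_gen (g : R3) (hg : g ∈ gens) : pr g = 0 :=
  Ideal.Quotient.eq_zero_iff_mem.2 (Ideal.subset_span hg)

lemma rel1 : (2 : QQ) * aa + cc ^ 3 = 0 := by
  have h := pr_gen _ (Set.mem_insert _ _)
  simpa [aa, cc, map_ofNat] using h

lemma rel2 : (3 : QQ) * bb ^ 2 * cc = 0 := by
  have h := pr_gen ((3 : R3) * X 1 ^ 2 * X 2) (by simp [gens])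
  simpa [bb, cc, map_ofNat] using h

lemma rel3 : bb ^ 3 + 3 * aa * cc ^ 2 = 0 := by
  have h := pr_gen ((X 1 : R3) ^ 3 + 3 * X 0 * X 2 ^ 2) (by simp [gens])
  simpa [aa, bb, cc, map_ofNat] using h

lemma smul_num (r : ℂ) (x : QQ) : r • x = algebraMap ℂ QQ r * x := Algebra.smul_def r x

lemma cancel_smul (r : ℂ) (hr : r ≠ 0) (x : QQ) (h : r • x = 0) : x = 0 := by
  have h2 : (r⁻¹ * r) • x = 0 := by rw [mul_smul, h, smul_zero]
  rwa [inv_mul_cancel₀ hr, one_smul] at h2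

lemma smul_shift (r : ℂ) (hr : r ≠ 0) (x y : QQ) (h : r • x = y) : x = r⁻¹ • y := by
  rw [← h, smul_smul, inv_mul_cancel₀ hr, one_smul]

lemma hb2c : bb ^ 2 * cc = 0 := by
  refine cancel_smul 3 (by norm_num) _ ?_
  rw [smul_num, map_ofNat]
  linear_combination rel2

lemma hc6 : cc ^ 6 = 0 := by
  refine cancel_smul 9 (by norm_num) _ ?_
  rw [smul_num, map_ofNat]
  linear_combination 9 * cc ^ 3 * rel1 + 2 * bb * rel2 - 6 * cc * rel3

lemma hb3 : bb ^ 3 = (3/2 : ℂ) • cc ^ 5 := by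
  have h2 : (2:ℂ) • bb ^ 3 = (3:ℂ) • cc ^ 5 := by
    rw [smul_num, smul_num, map_ofNat, map_ofNat]
    linear_combination 2 * rel3 - 3 * cc ^ 2 * rel1
  rw [show (3/2 : ℂ) = 2⁻¹ * 3 by norm_num, ← smul_smul]
  exact smul_shift 2 two_ne_zero _ _ h2

lemma ha : aa = (-(2⁻¹) : ℂ) • cc ^ 3 := by
  have h2 : (2:ℂ) • aa = (-1:ℂ) • cc ^ 3 := by
    rw [smul_num, smul_num, map_ofNat, map_neg, map_one]
    linear_combination rel1
  rw [show (-(2⁻¹) : ℂ) = 2⁻¹ * (-1) by norm_num, ← smul_smul]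
  exact smul_shift 2 two_ne_zero _ _ h2

/-- the span of the candidate basis -/
abbrev WW : Submodule ℂ QQ := Submodule.span ℂ (Set.range NN)

lemma NN_mem (i : Fin 13) : NN i ∈ WW := Submodule.subset_span ⟨i, rfl⟩

lemma hWmul (u : QQ) (hu : ∀ i, NN i * u ∈ WW) : ∀ x ∈ WW, x * u ∈ WW := by
  intro x hx
  refine Submodule.span_induction ?_ ?_ ?_ ?_ hx
  · rintro y ⟨i, rfl⟩; exact hu i
  · rw [zero_mul]; exact WW.zero_mem
  · intro y z _ _ hy hz; rw [add_mul]; exact WW.add_mem hy hz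
  · intro r y _ hy; rw [smul_mul_assoc]; exact WW.smul_mem r hy

set_option maxHeartbeats 1000000 in
lemma hWc : ∀ x ∈ WW, x * cc ∈ WW := by
  refine hWmul cc ?_
  intro i
  fin_cases i
  · exact (show bb^0*cc^0*cc = NN 1 by show _ = bb^0*cc^1; ring) ▸ NN_mem 1
  · exact (show bb^0*cc^1*cc = NN 2 by show _ = bb^0*cc^2; ring) ▸ NN_mem 2
  · exact (show bb^0*cc^2*cc = NN 3 by show _ = bb^0*cc^3; ring) ▸ NN_mem 3
  · show bb^0*cc^3*cc ∈ WW
    have h4 : NN 4 = bb^0*cc^4 := by simp [NN, qp]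
    rw [show bb^0*cc^3*cc = bb^0*cc^4 by ring, ← h4]; exact NN_mem 4
  · show bb^0*cc^4*cc ∈ WW
    have h5 : NN 5 = bb^0*cc^5 := by simp [NN, qp]
    rw [show bb^0*cc^4*cc = bb^0*cc^5 by ring, ← h5]; exact NN_mem 5
  · show bb^0*cc^5*cc ∈ WW
    rw [show bb^0*cc^5*cc = cc^6 by ring, hc6]; exact WW.zero_mem
  · show bb^1*cc^0*cc ∈ WW
    have h7 : NN 7 = bb^1*cc^1 := by simp [NN, qp]
    rw [show bb^1*cc^0*cc = bb^1*cc^1 by ring, ← h7]; exact NN_mem 7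
  · show bb^1*cc^1*cc ∈ WW
    have h8 : NN 8 = bb^1*cc^2 := by simp [NN, qp]
    rw [show bb^1*cc^1*cc = bb^1*cc^2 by ring, ← h8]; exact NN_mem 8
  · show bb^1*cc^2*cc ∈ WW
    have h9 : NN 9 = bb^1*cc^3 := by simp [NN, qp]
    rw [show bb^1*cc^2*cc = bb^1*cc^3 by ring, ← h9]; exact NN_mem 9
  · show bb^1*cc^3*cc ∈ WW
    have h10 : NN 10 = bb^1*cc^4 := by simp [NN, qp]
    rw [show bb^1*cc^3*cc = bb^1*cc^4 by ring, ← h10]; exact NN_mem 10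
  · show bb^1*cc^4*cc ∈ WW
    have h11 : NN 11 = bb^1*cc^5 := by simp [NN, qp]
    rw [show bb^1*cc^4*cc = bb^1*cc^5 by ring, ← h11]; exact NN_mem 11
  · show bb^1*cc^5*cc ∈ WW
    rw [show bb^1*cc^5*cc = bb*cc^6 by ring, hc6, mul_zero]; exact WW.zero_mem
  · show bb^2*cc^0*cc ∈ WW
    rw [show bb^2*cc^0*cc = bb^2*cc by ring, hb2c]; exact WW.zero_mem

lemma hWb : ∀ x ∈ WW, x * bb ∈ WW := by
  refine hWmul bb ?_
  intro i
  fin_cases i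
  · exact (show bb^0*cc^0*bb = NN 6 by show _ = bb^1*cc^0; ring) ▸ NN_mem 6
  · exact (show bb^0*cc^1*bb = NN 7 by show _ = bb^1*cc^1; ring) ▸ NN_mem 7
  · exact (show bb^0*cc^2*bb = NN 8 by show _ = bb^1*cc^2; ring) ▸ NN_mem 8
  · exact (show bb^0*cc^3*bb = NN 9 by show _ = bb^1*cc^3; ring) ▸ NN_mem 9
  · exact (show bb^0*cc^4*bb = NN 10 by show _ = bb^1*cc^4; ring) ▸ NN_mem 10
  · exact (show bb^0*cc^5*bb = NN 11 by show _ = bb^1*cc^5; ring) ▸ NN_mem 11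
  · exact (show bb^1*cc^0*bb = NN 12 by show _ = bb^2*cc^0; ring) ▸ NN_mem 12
  · show bb^1*cc^1*bb ∈ WW
    rw [show bb^1*cc^1*bb = (bb^2*cc)*cc^0 by ring, hb2c, zero_mul]; exact WW.zero_mem
  · show bb^1*cc^2*bb ∈ WW
    rw [show bb^1*cc^2*bb = (bb^2*cc)*cc^1 by ring, hb2c, zero_mul]; exact WW.zero_mem
  · show bb^1*cc^3*bb ∈ WW
    rw [show bb^1*cc^3*bb = (bb^2*cc)*cc^2 by ring, hb2c, zero_mul]; exact WW.zero_mem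
  · show bb^1*cc^4*bb ∈ WW
    rw [show bb^1*cc^4*bb = (bb^2*cc)*cc^3 by ring, hb2c, zero_mul]; exact WW.zero_mem
  · show bb^1*cc^5*bb ∈ WW
    rw [show bb^1*cc^5*bb = (bb^2*cc)*cc^4 by ring, hb2c, zero_mul]; exact WW.zero_mem
  · show bb^2*cc^0*bb ∈ WW
    rw [show bb^2*cc^0*bb = bb^3 by ring, hb3]
    exact WW.smul_mem _ ((show NN 5 = cc^5 by show bb^0*cc^5 = _; ring) ▸ NN_mem 5)

lemma hWa : ∀ x ∈ WW, x * aa ∈ WW := by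
  intro x hx
  rw [ha, mul_smul_comm, show x * cc ^ 3 = ((x * cc) * cc) * cc by ring]
  exact WW.smul_mem _ (hWc _ (hWc _ (hWc _ hx)))

lemma one_mem_W : (1 : QQ) ∈ WW :=
  (show NN 0 = 1 by show bb^0*cc^0 = 1; ring) ▸ NN_mem 0

lemma top_le_W : ∀ q : QQ, q ∈ WW := by
  intro q
  obtain ⟨p, rfl⟩ := Ideal.Quotient.mkₐ_surjective ℂ Igen q
  show pr p ∈ WW
  induction p using MvPolynomial.induction_on with
  | C r =>
    have : pr (C r) = r • (1 : QQ) := by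
      simp [pr, Algebra.algebraMap_eq_smul_one]
    rw [this]
    exact WW.smul_mem r one_mem_W
  | add p q hp hq =>
    rw [map_add]; exact WW.add_mem hp hq
  | mul_X p n hp =>
    rw [map_mul]
    fin_cases n
    · exact hWa _ hp
    · exact hWb _ hp
    · exact hWc _ hp

lemma NN_eq_pr_MM (i : Fin 13) : NN i = pr (MM i) := by
  fin_cases i
  · show bb^0*cc^0 = pr 1; simp
  · show bb^0*cc^1 = pr (X 2); simp [cc]
  · show bb^0*cc^2 = pr (X 2^2); simp [cc]
  · show bb^0*cc^3 = pr (X 2^3); simp [cc]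
  · show bb^0*cc^4 = pr (X 2^4); simp [cc]
  · show bb^0*cc^5 = pr (X 2^5); simp [cc]
  · show bb^1*cc^0 = pr (X 1); simp [bb]
  · show bb^1*cc^1 = pr (X 1 * X 2); simp [bb, cc]
  · show bb^1*cc^2 = pr (X 1 * X 2^2); simp [bb, cc]
  · show bb^1*cc^3 = pr (X 1 * X 2^3); simp [bb, cc]
  · show bb^1*cc^4 = pr (X 1 * X 2^4); simp [bb, cc]
  · show bb^1*cc^5 = pr (X 1 * X 2^5); simp [bb, cc]
  · show bb^2*cc^0 = pr (X 1^2); simp [bb]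

lemma NN_indep : LinearIndependent ℂ NN := by
  rw [Fintype.linearIndependent_iff]
  intro g hg
  have hmem : (∑ i, g i • MM i) ∈ Igen := by
    rw [← Ideal.Quotient.eq_zero_iff_mem]
    have h1 : Ideal.Quotient.mk Igen (∑ i, g i • MM i) = pr (∑ i, g i • MM i) := rfl
    rw [h1, map_sum]
    simp_rw [map_smul, ← NN_eq_pr_MM]
    exact hg
  have h0 : φ (∑ i, g i • MM i) = 0 := phi_ideal _ hmem
  rw [map_sum] at h0
  simp_rw [map_smul, phi_MM] at h0
  intro i
  have h2 := congrArg (fun f : (ℕ × ℕ) →₀ ℂ => f (qp i)) h0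
  simpa [Finsupp.finset_sum_apply, Finsupp.single_apply, qp_inj.eq_iff,
    Finset.sum_ite_eq'] using h2

/-- the monomial basis of the Milnor ring -/
def BB : Module.Basis (Fin 13) ℂ QQ :=
  Module.Basis.mk NN_indep (fun q _ => top_le_W q)

lemma main_result : FiniteDimensional ℂ QQ ∧ Module.finrank ℂ QQ = 13 := by
  refine ⟨Module.Finite.of_basis BB, ?_⟩
  rw [Module.finrank_eq_card_basis BB]
  simp


end Q11Taux

theorem milnor_ring_Q11T_dim :
    FiniteDimensional ℂ (MvPolynomial (Fin 3) ℂ ⧸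
      Ideal.span ({(2 : MvPolynomial (Fin 3) ℂ) * X 0 + X 2 ^ 3, 3 * X 1 ^ 2 * X 2, X 1 ^ 3 + 3 * X 0 * X 2 ^ 2} : Set (MvPolynomial (Fin 3) ℂ))) ∧
    Module.finrank ℂ (MvPolynomial (Fin 3) ℂ ⧸
      Ideal.span ({(2 : MvPolynomial (Fin 3) ℂ) * X 0 + X 2 ^ 3, 3 * X 1 ^ 2 * X 2, X 1 ^ 3 + 3 * X 0 * X 2 ^ 2} : Set (MvPolynomial (Fin 3) ℂ))) = 13 := by
  exact main_result
end

section
/- The quotient ring ℂ[X,Y,Z]/(2X + Y², 2XY + Z⁴, YZ³) is a finite-dimensional ℂ-vector space of dimension 13. -/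
open MvPolynomial

set_option maxHeartbeats 1000000
set_option synthInstance.maxHeartbeats 400000

noncomputable section MilnorAux

abbrev P3 : Type := MvPolynomial (Fin 3) ℂ

def mg1 : P3 := (2 : P3) * X 0 + X 1 ^ 2
def mg2 : P3 := 2 * X 0 * X 1 + X 2 ^ 4
def mg3 : P3 := X 1 * X 2 ^ 3

def I3 : Ideal P3 := Ideal.span {mg1, mg2, mg3}

def pv : Fin 3 → Polynomial ℂ :=
  ![Polynomial.C (-(1/2)) * Polynomial.X ^ 8, Polynomial.X ^ 4, Polynomial.X ^ 3]

def phi : P3 →ₐ[ℂ] Polynomial ℂ := aeval pv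

lemma two_eq : (2:Polynomial ℂ) = Polynomial.C 2 := (map_ofNat Polynomial.C 2).symm

lemma phi_g1 : phi mg1 = 0 := by
  simp [phi, mg1, pv]
  rw [two_eq, ← mul_assoc, ← Polynomial.C_mul]
  norm_num
  ring

lemma phi_g2 : phi mg2 = 0 := by
  simp [phi, mg2, pv]
  rw [two_eq]
  ring_nf
  rw [← Polynomial.C_mul]
  norm_num

lemma phi_g3 : phi mg3 = Polynomial.X ^ 13 := by
  simp [phi, mg3, pv]; ring

lemma phi_X (j : Fin 3) : phi (X j) = pv j := aeval_X _ j

/-- the coefficients at the semigroup gaps 1, 2, 5 vanish on the range of `phi`. -/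
lemma phi_gaps (f : P3) : (phi f).coeff 1 = 0 ∧ (phi f).coeff 2 = 0 ∧ (phi f).coeff 5 = 0 := by
  induction f using MvPolynomial.induction_on with
  | C a => simp [phi, Polynomial.coeff_C]
  | add p q hp hq => simp [map_add, hp.1, hq.1, hp.2.1, hq.2.1, hp.2.2, hq.2.2]
  | mul_X p i hp =>
    rw [map_mul, phi_X]
    have key : ∀ (k : ℕ) (q : Polynomial ℂ), 3 ≤ k → (k ≤ 5 → q.coeff (5 - k) = 0) →
        ((q * Polynomial.X ^ k).coeff 1 = 0 ∧ (q * Polynomial.X ^ k).coeff 2 = 0 ∧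
         (q * Polynomial.X ^ k).coeff 5 = 0) := by
      intro k q hk h5
      refine ⟨?_, ?_, ?_⟩ <;> rw [Polynomial.coeff_mul_X_pow']
      · rw [if_neg (by omega)]
      · rw [if_neg (by omega)]
      · by_cases hk5 : k ≤ 5
        · rw [if_pos hk5]; exact h5 hk5
        · rw [if_neg hk5]
    have hpv : pv i = Polynomial.C (-(1/2)) * Polynomial.X ^ 8 ∨
        pv i = Polynomial.X ^ 4 ∨ pv i = Polynomial.X ^ 3 := by
      fin_cases i
      · left; rfl
      · right; left; rfl
      · right; right; rfl
    rcases hpv with h | h | h <;> rw [h]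
    · rw [show phi p * (Polynomial.C (-(1/2)) * Polynomial.X ^ 8)
          = (Polynomial.C (-(1/2)) * phi p) * Polynomial.X ^ 8 by ring]
      exact key 8 _ (by norm_num) (by omega)
    · exact key 4 _ (by norm_num) (fun _ => by norm_num [hp.1])
    · exact key 3 _ (by norm_num) (fun _ => by norm_num [hp.2.1])

lemma mem_decomp {x : P3} (hx : x ∈ I3) : ∃ p : P3, phi x = phi p * Polynomial.X ^ 13 := by
  rw [I3, show ({mg1, mg2, mg3} : Set P3) = insert mg1 (insert mg2 {mg3}) from rfl] at hx
  rw [Ideal.mem_span_insert] at hx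
  obtain ⟨a, z, hz, rfl⟩ := hx
  rw [Ideal.mem_span_insert] at hz
  obtain ⟨b, w, hw, rfl⟩ := hz
  rw [Ideal.mem_span_singleton'] at hw
  obtain ⟨c, rfl⟩ := hw
  exact ⟨c, by simp [map_add, map_mul, phi_g1, phi_g2, phi_g3, mul_assoc]⟩

/-- the 13 basis monomials -/
def bm : Fin 13 → P3 :=
  ![1, X 2, X 2 ^ 2, X 2 ^ 3, X 2 ^ 4, X 2 ^ 5, X 2 ^ 6,
    X 1, X 1 * X 2, X 1 * X 2 ^ 2,
    X 1 ^ 2, X 1 ^ 2 * X 2, X 1 ^ 2 * X 2 ^ 2]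

def kv : Fin 13 → ℕ := ![0, 3, 6, 9, 12, 15, 18, 4, 7, 10, 8, 11, 14]

lemma kv_inj : Function.Injective kv := by decide

lemma phi_bm (i : Fin 13) : phi (bm i) = Polynomial.X ^ kv i := by
  fin_cases i
  · show phi 1 = Polynomial.X ^ 0
    simp
  · show phi (X 2) = Polynomial.X ^ 3
    rw [phi_X]; rfl
  · show phi (X 2 ^ 2) = Polynomial.X ^ 6
    rw [map_pow, phi_X]; show (Polynomial.X ^ 3) ^ 2 = _; ring
  · show phi (X 2 ^ 3) = Polynomial.X ^ 9
    rw [map_pow, phi_X]; show (Polynomial.X ^ 3) ^ 3 = _; ring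
  · show phi (X 2 ^ 4) = Polynomial.X ^ 12
    rw [map_pow, phi_X]; show (Polynomial.X ^ 3) ^ 4 = _; ring
  · show phi (X 2 ^ 5) = Polynomial.X ^ 15
    rw [map_pow, phi_X]; show (Polynomial.X ^ 3) ^ 5 = _; ring
  · show phi (X 2 ^ 6) = Polynomial.X ^ 18
    rw [map_pow, phi_X]; show (Polynomial.X ^ 3) ^ 6 = _; ring
  · show phi (X 1) = Polynomial.X ^ 4
    rw [phi_X]; rfl
  · show phi (X 1 * X 2) = Polynomial.X ^ 7
    rw [map_mul, phi_X, phi_X]; show Polynomial.X ^ 4 * Polynomial.X ^ 3 = _; ring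
  · show phi (X 1 * X 2 ^ 2) = Polynomial.X ^ 10
    rw [map_mul, map_pow, phi_X, phi_X]
    show Polynomial.X ^ 4 * (Polynomial.X ^ 3) ^ 2 = _; ring
  · show phi (X 1 ^ 2) = Polynomial.X ^ 8
    rw [map_pow, phi_X]; show (Polynomial.X ^ 4) ^ 2 = _; ring
  · show phi (X 1 ^ 2 * X 2) = Polynomial.X ^ 11
    rw [map_mul, map_pow, phi_X, phi_X]
    show (Polynomial.X ^ 4) ^ 2 * Polynomial.X ^ 3 = _; ring
  · show phi (X 1 ^ 2 * X 2 ^ 2) = Polynomial.X ^ 14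
    rw [map_mul, map_pow, map_pow, phi_X, phi_X]
    show (Polynomial.X ^ 4) ^ 2 * (Polynomial.X ^ 3) ^ 2 = _; ring

def qmk : P3 →ₐ[ℂ] (P3 ⧸ I3) := Ideal.Quotient.mkₐ ℂ I3

def bq : Fin 13 → P3 ⧸ I3 := fun i => qmk (bm i)

lemma hg1 : mg1 ∈ I3 := Ideal.subset_span (by simp)
lemma hg2 : mg2 ∈ I3 := Ideal.subset_span (by simp)
lemma hg3 : mg3 ∈ I3 := Ideal.subset_span (by simp)

lemma hY3Z4 : (X 1 : P3) ^ 3 - X 2 ^ 4 ∈ I3 := by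
  have h : (X 1 : P3) ^ 3 - X 2 ^ 4 = X 1 * mg1 - mg2 := by
    simp only [mg1, mg2]; ring
  rw [h]
  exact sub_mem (I3.mul_mem_left _ hg1) hg2

lemma hZ7 : (X 2 : P3) ^ 7 ∈ I3 := by
  have h : (X 2 : P3) ^ 7 = X 1 ^ 2 * mg3 - X 2 ^ 3 * (X 1 * mg1 - mg2) := by
    simp only [mg1, mg2, mg3]; ring
  rw [h]
  exact sub_mem (I3.mul_mem_left _ hg3) (I3.mul_mem_left _ (sub_mem (I3.mul_mem_left _ hg1) hg2))

lemma mk_eq_zero {x : P3} (hx : x ∈ I3) : qmk x = 0 :=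
  (Ideal.Quotient.eq_zero_iff_mem).2 hx

lemma mk_eq_mk {x y : P3} (h : x - y ∈ I3) : qmk x = qmk y := Ideal.Quotient.eq.mpr h

def sp13 : Submodule ℂ (P3 ⧸ I3) := Submodule.span ℂ (Set.range bq)

lemma span_YZ : ∀ b c : ℕ, qmk (X 1 ^ b * X 2 ^ c) ∈ sp13 := by
  intro b
  induction b using Nat.strong_induction_on with
  | _ b ih =>
    intro c
    match b, ih with
    | 0, _ =>
      by_cases hc : c ≤ 6
      · interval_cases c
        · exact Submodule.subset_span ⟨0, by show qmk ((1 : P3)) = qmk (X 1 ^ 0 * X 2 ^ 0); exact congrArg qmk (by ring)⟩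
        · exact Submodule.subset_span ⟨1, by show qmk ((X 2 : P3)) = qmk (X 1 ^ 0 * X 2 ^ 1); exact congrArg qmk (by ring)⟩
        · exact Submodule.subset_span ⟨2, by show qmk ((X 2 : P3) ^ 2) = qmk (X 1 ^ 0 * X 2 ^ 2); exact congrArg qmk (by ring)⟩
        · exact Submodule.subset_span ⟨3, by show qmk ((X 2 : P3) ^ 3) = qmk (X 1 ^ 0 * X 2 ^ 3); exact congrArg qmk (by ring)⟩
        · exact Submodule.subset_span ⟨4, by show qmk ((X 2 : P3) ^ 4) = qmk (X 1 ^ 0 * X 2 ^ 4); exact congrArg qmk (by ring)⟩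
        · exact Submodule.subset_span ⟨5, by show qmk ((X 2 : P3) ^ 5) = qmk (X 1 ^ 0 * X 2 ^ 5); exact congrArg qmk (by ring)⟩
        · exact Submodule.subset_span ⟨6, by show qmk ((X 2 : P3) ^ 6) = qmk (X 1 ^ 0 * X 2 ^ 6); exact congrArg qmk (by ring)⟩
      · have hc7 : 7 ≤ c := by omega
        have hx : (X 1 : P3) ^ 0 * X 2 ^ c = X 2 ^ (c - 7) * X 2 ^ 7 := by
          rw [pow_sub_mul_pow _ hc7]; ring
        rw [hx, map_mul, mk_eq_zero hZ7, mul_zero]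
        exact zero_mem _
    | 1, _ =>
      by_cases hc : c ≤ 2
      · interval_cases c
        · exact Submodule.subset_span ⟨7, by show qmk ((X 1 : P3)) = qmk (X 1 ^ 1 * X 2 ^ 0); exact congrArg qmk (by ring)⟩
        · exact Submodule.subset_span ⟨8, by show qmk ((X 1 : P3) * X 2) = qmk (X 1 ^ 1 * X 2 ^ 1); exact congrArg qmk (by ring)⟩
        · exact Submodule.subset_span ⟨9, by show qmk ((X 1 : P3) * X 2 ^ 2) = qmk (X 1 ^ 1 * X 2 ^ 2); exact congrArg qmk (by ring)⟩
      · have hc3 : 3 ≤ c := by omega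
        have hx : (X 1 : P3) ^ 1 * X 2 ^ c = X 2 ^ (c - 3) * mg3 := by
          rw [mg3, show (X 2 : P3) ^ c = X 2 ^ (c-3) * X 2 ^ 3 from (pow_sub_mul_pow _ hc3).symm]
          ring
        rw [hx, map_mul, mk_eq_zero hg3, mul_zero]
        exact zero_mem _
    | 2, _ =>
      by_cases hc : c ≤ 2
      · interval_cases c
        · exact Submodule.subset_span ⟨10, by show qmk ((X 1 : P3) ^ 2) = qmk (X 1 ^ 2 * X 2 ^ 0); exact congrArg qmk (by ring)⟩
        · exact Submodule.subset_span ⟨11, by show qmk ((X 1 : P3) ^ 2 * X 2) = qmk (X 1 ^ 2 * X 2 ^ 1); exact congrArg qmk (by ring)⟩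
        · exact Submodule.subset_span ⟨12, by show qmk ((X 1 : P3) ^ 2 * X 2 ^ 2) = qmk (X 1 ^ 2 * X 2 ^ 2); rfl⟩
      · have hc3 : 3 ≤ c := by omega
        have hx : (X 1 : P3) ^ 2 * X 2 ^ c = (X 1 * X 2 ^ (c - 3)) * mg3 := by
          rw [mg3, show (X 2 : P3) ^ c = X 2 ^ (c-3) * X 2 ^ 3 from (pow_sub_mul_pow _ hc3).symm]
          ring
        rw [hx, map_mul, mk_eq_zero hg3, mul_zero]
        exact zero_mem _
    | (b + 3), ih =>
      have key : qmk (X 1 ^ (b + 3) * X 2 ^ c) = qmk (X 1 ^ b * X 2 ^ (c + 4)) := by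
        refine mk_eq_mk ?_
        have hmem : (X 1 : P3) ^ (b+3) * X 2 ^ c - X 1 ^ b * X 2 ^ (c+4)
            = (X 1 ^ b * X 2 ^ c) * (X 1 ^ 3 - X 2 ^ 4) := by ring
        rw [hmem]
        exact I3.mul_mem_left _ hY3Z4
      rw [key]
      exact ih b (by omega) (c + 4)

lemma half_smul (x : P3 ⧸ I3) : (2⁻¹:ℂ) • ((2:P3 ⧸ I3) * x) = x := by
  rw [show ((2:P3 ⧸ I3)) = algebraMap ℂ _ (2:ℂ) from (map_ofNat (algebraMap ℂ _) 2).symm,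
    ← Algebra.smul_def, smul_smul]
  norm_num

lemma mkX0 : qmk (X 0) = (-(1/2) : ℂ) • qmk (X 1) ^ 2 := by
  have h0 : 2 * qmk (X 0) + qmk (X 1) ^ 2 = 0 := by
    have h := mk_eq_zero hg1
    rw [mg1, map_add, map_mul, map_pow, map_ofNat] at h
    exact h
  have h1 : qmk (X 0) = (2⁻¹:ℂ) • (2 * qmk (X 0)) := (half_smul _).symm
  rw [h1, show (2:P3 ⧸ I3) * qmk (X 0) = -(qmk (X 1) ^ 2) by linear_combination h0,
    smul_neg, ← neg_smul]
  norm_num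

lemma span_monomial (d : Fin 3 →₀ ℕ) : qmk (monomial d 1) ∈ sp13 := by
  have hm : (monomial d 1 : P3) = X 0 ^ d 0 * X 1 ^ d 1 * X 2 ^ d 2 := by
    rw [monomial_eq]
    rw [Finsupp.prod_fintype _ _ (fun i => pow_zero _)]
    simp [Fin.prod_univ_three]
  have key : qmk (monomial d 1)
      = ((-(1/2):ℂ)) ^ d 0 • qmk (X 1 ^ (2 * d 0 + d 1) * X 2 ^ d 2) := by
    rw [hm]
    calc qmk (X 0 ^ d 0 * X 1 ^ d 1 * X 2 ^ d 2)
        = (qmk (X 0)) ^ d 0 * (qmk (X 1)) ^ d 1 * (qmk (X 2)) ^ d 2 := by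
          rw [map_mul, map_mul, map_pow, map_pow, map_pow]
      _ = ((-(1/2):ℂ)) ^ d 0 • ((qmk (X 1)) ^ (2 * d 0 + d 1) * (qmk (X 2)) ^ d 2) := by
          rw [mkX0, smul_pow, smul_mul_assoc, smul_mul_assoc]
          exact congrArg (fun t => ((-(1/2):ℂ)) ^ d 0 • t)
            (by rw [← pow_mul, mul_comm (2 : ℕ) (d 0), ← pow_add])
      _ = ((-(1/2):ℂ)) ^ d 0 • qmk (X 1 ^ (2 * d 0 + d 1) * X 2 ^ d 2) := by
          rw [map_mul, map_pow, map_pow]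
  rw [key]
  exact Submodule.smul_mem _ _ (span_YZ _ _)

lemma span_top : sp13 = ⊤ := by
  rw [eq_top_iff]
  rintro q -
  obtain ⟨f, rfl⟩ := Ideal.Quotient.mkₐ_surjective ℂ I3 q
  rw [show (Ideal.Quotient.mkₐ ℂ I3) f = qmk f from rfl]
  rw [f.as_sum, map_sum]
  refine Submodule.sum_mem _ fun d hd => ?_
  have h : (monomial d (coeff d f) : P3) = (coeff d f) • monomial d 1 := by
    rw [smul_monomial, smul_eq_mul, mul_one]
  rw [h, map_smul]
  exact Submodule.smul_mem _ _ (span_monomial d)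

lemma bq_li : LinearIndependent ℂ bq := by
  rw [Fintype.linearIndependent_iff]
  intro g hg
  have hmem : (∑ i, g i • bm i) ∈ I3 := by
    rw [← Ideal.Quotient.eq_zero_iff_mem]
    have h : Ideal.Quotient.mk I3 (∑ i, g i • bm i) = ∑ i, g i • bq i := by
      show qmk (∑ i, g i • bm i) = _
      rw [map_sum]
      exact Finset.sum_congr rfl fun i _ => by simp only [map_smul]; rfl
    rw [h, hg]
  obtain ⟨p, hp⟩ := mem_decomp hmem
  have hsum : phi (∑ i, g i • bm i) = ∑ i, Polynomial.C (g i) * Polynomial.X ^ kv i := by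
    rw [map_sum]
    congr 1
    ext i
    rw [map_smul, phi_bm, Polynomial.smul_eq_C_mul]
  rw [hsum] at hp
  intro i
  have hci := congrArg (fun q => Polynomial.coeff q (kv i)) hp
  have hL : (∑ j, Polynomial.C (g j) * Polynomial.X ^ kv j).coeff (kv i) = g i := by
    rw [Polynomial.finset_sum_coeff, Finset.sum_eq_single i]
    · rw [Polynomial.coeff_C_mul, Polynomial.coeff_X_pow, if_pos rfl, mul_one]
    · intro j _ hj
      rw [Polynomial.coeff_C_mul, Polynomial.coeff_X_pow,
        if_neg (fun h : kv i = kv j => hj (kv_inj h).symm), mul_zero]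
    · intro h; exact absurd (Finset.mem_univ i) h
  have hR : (phi p * Polynomial.X ^ 13).coeff (kv i) = 0 := by
    rw [Polynomial.coeff_mul_X_pow']
    obtain ⟨h1, h2, h5⟩ := phi_gaps p
    fin_cases i
    · show (if 13 ≤ 0 then (phi p).coeff (0 - 13) else 0) = 0; norm_num
    · show (if 13 ≤ 3 then (phi p).coeff (3 - 13) else 0) = 0; norm_num
    · show (if 13 ≤ 6 then (phi p).coeff (6 - 13) else 0) = 0; norm_num
    · show (if 13 ≤ 9 then (phi p).coeff (9 - 13) else 0) = 0; norm_num
    · show (if 13 ≤ 12 then (phi p).coeff (12 - 13) else 0) = 0; norm_num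
    · show (if 13 ≤ 15 then (phi p).coeff (15 - 13) else 0) = 0; norm_num [h2]
    · show (if 13 ≤ 18 then (phi p).coeff (18 - 13) else 0) = 0; norm_num [h5]
    · show (if 13 ≤ 4 then (phi p).coeff (4 - 13) else 0) = 0; norm_num
    · show (if 13 ≤ 7 then (phi p).coeff (7 - 13) else 0) = 0; norm_num
    · show (if 13 ≤ 10 then (phi p).coeff (10 - 13) else 0) = 0; norm_num
    · show (if 13 ≤ 8 then (phi p).coeff (8 - 13) else 0) = 0; norm_num
    · show (if 13 ≤ 11 then (phi p).coeff (11 - 13) else 0) = 0; norm_num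
    · show (if 13 ≤ 14 then (phi p).coeff (14 - 13) else 0) = 0; norm_num [h1]
  rw [hL, hR] at hci
  exact hci

def bqBasis : Module.Basis (Fin 13) ℂ (P3 ⧸ I3) :=
  Module.Basis.mk bq_li (by rw [show Submodule.span ℂ (Set.range bq) = sp13 from rfl, span_top])

end MilnorAux

theorem milnor_ring_S11T_dim :
    FiniteDimensional ℂ (MvPolynomial (Fin 3) ℂ ⧸
      Ideal.span ({(2 : MvPolynomial (Fin 3) ℂ) * X 0 + X 1 ^ 2, 2 * X 0 * X 1 + X 2 ^ 4, X 1 * X 2 ^ 3} : Set (MvPolynomial (Fin 3) ℂ))) ∧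
    Module.finrank ℂ (MvPolynomial (Fin 3) ℂ ⧸
      Ideal.span ({(2 : MvPolynomial (Fin 3) ℂ) * X 0 + X 1 ^ 2, 2 * X 0 * X 1 + X 2 ^ 4, X 1 * X 2 ^ 3} : Set (MvPolynomial (Fin 3) ℂ))) = 13 := by
  have hfd : FiniteDimensional ℂ (P3 ⧸ I3) := Module.Finite.of_basis bqBasis
  have hfr : Module.finrank ℂ (P3 ⧸ I3) = 13 := by
    rw [Module.finrank_eq_card_basis bqBasis, Fintype.card_fin]
  exact ⟨hfd, hfr⟩
end

section
/- The quotient ring ℂ[X,Y]/(3X²Y + Y⁴, X³ + 4XY³) is a finite-dimensional ℂ-vector space of dimension 12. -/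
open MvPolynomial
noncomputable section

def MxZ : Matrix (Fin 12) (Fin 12) ℤ := Matrix.of fun r c =>
  if r.val = c.val + 4 then 1 else if r.val = 7 ∧ c.val = 8 then -4 else 0
def MyZ : Matrix (Fin 12) (Fin 12) ℤ := Matrix.of fun r c =>
  if c.val % 4 ≤ 2 ∧ r.val = c.val + 1 then 1 else if r.val = 9 ∧ c.val = 3 then -3 else 0

def MxC : Matrix (Fin 12) (Fin 12) ℂ := (Int.castRingHom ℂ).mapMatrix MxZ
def MyC : Matrix (Fin 12) (Fin 12) ℂ := (Int.castRingHom ℂ).mapMatrix MyZ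

set_option maxHeartbeats 1000000 in
lemma hcommZ : MxZ * MyZ = MyZ * MxZ := by decide
set_option maxHeartbeats 1000000 in
lemma hg1Z : 3 * MxZ ^ 2 * MyZ + MyZ ^ 4 = 0 := by decide
set_option maxHeartbeats 1000000 in
lemma hg2Z : MxZ ^ 3 + 4 * MxZ * MyZ ^ 3 = 0 := by decide

lemma hcommC : MxC * MyC = MyC * MxC := by
  have := congrArg (Int.castRingHom ℂ).mapMatrix hcommZ
  simpa [MxC, MyC, map_mul] using this
lemma hg1C : 3 * MxC ^ 2 * MyC + MyC ^ 4 = 0 := by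
  have := congrArg (Int.castRingHom ℂ).mapMatrix hg1Z
  simpa [MxC, MyC, map_mul, map_add, map_pow, map_ofNat] using this
lemma hg2C : MxC ^ 3 + 4 * MxC * MyC ^ 3 = 0 := by
  have := congrArg (Int.castRingHom ℂ).mapMatrix hg2Z
  simpa [MxC, MyC, map_mul, map_add, map_pow, map_ofNat] using this

def Sadj : Subalgebra ℂ (Matrix (Fin 12) (Fin 12) ℂ) := Algebra.adjoin ℂ {MxC, MyC}

lemma hcommS : ∀ a ∈ ({MxC, MyC} : Set (Matrix (Fin 12) (Fin 12) ℂ)), ∀ b ∈ ({MxC, MyC} : Set _), a * b = b * a := by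
  rintro a (rfl | rfl) b (rfl | rfl) <;> simp [hcommC]

instance : CommRing Sadj := { Sadj.toRing with mul_comm := (Algebra.adjoinCommRingOfComm ℂ hcommS).mul_comm }

def rep : MvPolynomial (Fin 2) ℂ →ₐ[ℂ] Matrix (Fin 12) (Fin 12) ℂ :=
  Sadj.val.comp (aeval fun i : Fin 2 => if i = 0 then
      (⟨MxC, Algebra.subset_adjoin (by simp)⟩ : Sadj)
    else ⟨MyC, Algebra.subset_adjoin (by simp)⟩)

lemma rep_X0 : rep (X 0) = MxC := by simp [rep]
lemma rep_X1 : rep (X 1) = MyC := by simp [rep]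

lemma rep_g1 : rep (3 * X 0 ^ 2 * X 1 + X 1 ^ 4) = 0 := by
  simp only [map_add, map_mul, map_pow, map_ofNat, rep_X0, rep_X1]
  exact hg1C

lemma rep_g2 : rep (X 0 ^ 3 + 4 * X 0 * X 1 ^ 3) = 0 := by
  simp only [map_add, map_mul, map_pow, map_ofNat, rep_X0, rep_X1]
  exact hg2C

abbrev Iz : Ideal (MvPolynomial (Fin 2) ℂ) :=
  Ideal.span ({(3 : MvPolynomial (Fin 2) ℂ) * X 0 ^ 2 * X 1 + X 1 ^ 4, X 0 ^ 3 + 4 * X 0 * X 1 ^ 3} : Set (MvPolynomial (Fin 2) ℂ))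

lemma rep_vanish : ∀ a ∈ Iz, rep a = 0 := by
  intro a ha
  have hle : Iz ≤ RingHom.ker (rep : MvPolynomial (Fin 2) ℂ →ₐ[ℂ] _).toRingHom := by
    rw [Ideal.span_le]
    rintro p (rfl | rfl)
    · exact rep_g1
    · simpa using rep_g2
  exact hle ha

def repQ : (MvPolynomial (Fin 2) ℂ ⧸ Iz) →ₐ[ℂ] Matrix (Fin 12) (Fin 12) ℂ :=
  Ideal.Quotient.liftₐ Iz rep rep_vanish

def Lmap : (MvPolynomial (Fin 2) ℂ ⧸ Iz) →ₗ[ℂ] (Fin 12 → ℂ) where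
  toFun q := (repQ q).mulVec (Pi.single 0 1)
  map_add' a b := by
    show (repQ (a + b)).mulVec _ = (repQ a).mulVec _ + (repQ b).mulVec _
    rw [map_add, Matrix.add_mulVec]
  map_smul' c q := by
    show (repQ (c • q)).mulVec _ = c • (repQ q).mulVec _
    rw [map_smul, Matrix.smul_mulVec]

lemma col_step (MZ : Matrix (Fin 12) (Fin 12) ℤ) (c k : Fin 12)
    (h : ∀ r, MZ r c = (Pi.single k 1 : Fin 12 → ℤ) r) :
    ((Int.castRingHom ℂ).mapMatrix MZ).mulVec (Pi.single c 1) = Pi.single k 1 := by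
  funext r
  have : ((Int.castRingHom ℂ).mapMatrix MZ) r c = (((Pi.single k 1 : Fin 12 → ℤ) r : ℤ) : ℂ) := by
    simp [RingHom.mapMatrix_apply, Matrix.map_apply, h r]
  simp only [Matrix.mulVec_single, mul_one, this]
  rcases eq_or_ne r k with rfl | hr
  · simp [h r]
  · simp [Pi.single_apply, hr, h r]

lemma colx (c k : Fin 12) (hk : k.val = c.val + 4) :
    MxC.mulVec (Pi.single c 1) = Pi.single k 1 := by
  apply col_step
  intro r
  fin_cases c <;> fin_cases k <;> simp_all <;> revert r <;> decide

lemma coly (c k : Fin 12) (hc : c.val % 4 ≤ 2) (hk : k.val = c.val + 1) :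
    MyC.mulVec (Pi.single c 1) = Pi.single k 1 := by
  apply col_step
  intro r
  fin_cases c <;> fin_cases k <;> simp_all <;> revert r <;> decide

lemma Lmap_mk (p : MvPolynomial (Fin 2) ℂ) :
    Lmap (Ideal.Quotient.mk Iz p) = (rep p).mulVec (Pi.single 0 1) := by
  show (repQ _).mulVec _ = _
  rw [repQ, Ideal.Quotient.liftₐ_apply]
  rfl

lemma hstepx (p : MvPolynomial (Fin 2) ℂ) (k k' : Fin 12)
    (h : Lmap (Ideal.Quotient.mk Iz p) = Pi.single k 1) (hk : k'.val = k.val + 4) :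
    Lmap (Ideal.Quotient.mk Iz (X 0 * p)) = Pi.single k' 1 := by
  rw [Lmap_mk, map_mul, rep_X0, ← Matrix.mulVec_mulVec, ← Lmap_mk, h, colx k k' hk]

lemma hstepy (p : MvPolynomial (Fin 2) ℂ) (k k' : Fin 12)
    (h : Lmap (Ideal.Quotient.mk Iz p) = Pi.single k 1) (hkc : k.val % 4 ≤ 2)
    (hk : k'.val = k.val + 1) :
    Lmap (Ideal.Quotient.mk Iz (X 1 * p)) = Pi.single k' 1 := by
  rw [Lmap_mk, map_mul, rep_X1, ← Matrix.mulVec_mulVec, ← Lmap_mk, h, coly k k' hkc hk]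

lemma Lsurj : Function.Surjective Lmap := by
  rw [← LinearMap.range_eq_top, eq_top_iff, ← (Pi.basisFun ℂ (Fin 12)).span_eq, Submodule.span_le]
  rintro v ⟨k, rfl⟩
  simp only [Pi.basisFun_apply]
  have h0 : Lmap (Ideal.Quotient.mk Iz 1) = Pi.single 0 1 := by
    rw [Lmap_mk, map_one, Matrix.one_mulVec]
  have h1 := hstepy _ _ 1 h0 (by decide) (by decide)
  have h2 := hstepy _ _ 2 h1 (by decide) (by decide)
  have h3 := hstepy _ _ 3 h2 (by decide) (by decide)
  have h4 := hstepx _ _ 4 h0 (by decide)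
  have h5 := hstepx _ _ 5 h1 (by decide)
  have h6 := hstepx _ _ 6 h2 (by decide)
  have h7 := hstepx _ _ 7 h3 (by decide)
  have h8 := hstepx _ _ 8 h4 (by decide)
  have h9 := hstepx _ _ 9 h5 (by decide)
  have h10 := hstepx _ _ 10 h6 (by decide)
  have h11 := hstepx _ _ 11 h7 (by decide)
  fin_cases k
  exacts [⟨_, h0⟩, ⟨_, h1⟩, ⟨_, h2⟩, ⟨_, h3⟩, ⟨_, h4⟩, ⟨_, h5⟩, ⟨_, h6⟩, ⟨_, h7⟩,
    ⟨_, h8⟩, ⟨_, h9⟩, ⟨_, h10⟩, ⟨_, h11⟩]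

abbrev mkq : MvPolynomial (Fin 2) ℂ →+* (MvPolynomial (Fin 2) ℂ ⧸ Iz) := Ideal.Quotient.mk Iz

def bp : Fin 12 → MvPolynomial (Fin 2) ℂ :=
  ![1, X 1, X 1^2, X 1^3, X 0, X 0*X 1, X 0*X 1^2, X 0*X 1^3,
    X 0^2, X 0^2*X 1, X 0^2*X 1^2, X 0^2*X 1^3]

def Msub : Submodule ℂ (MvPolynomial (Fin 2) ℂ ⧸ Iz) :=
  Submodule.span ℂ (Set.range fun k => mkq (bp k))

lemma mk_C_mul (c : ℂ) (p : MvPolynomial (Fin 2) ℂ) :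
    mkq (C c * p) = c • mkq p := by
  rw [MvPolynomial.C_mul', ← Ideal.Quotient.mkₐ_eq_mk ℂ, map_smul]

lemma mk_zero_of_scaled (c : ℂ) (hc : c ≠ 0) (p : MvPolynomial (Fin 2) ℂ)
    (h : C c * p ∈ Iz) : mkq p = 0 := by
  have h0 : c • mkq p = 0 := by rw [← mk_C_mul]; exact Ideal.Quotient.eq_zero_iff_mem.mpr h
  rw [← inv_smul_smul₀ hc (mkq p), h0, smul_zero]

lemma basis_mem (k : Fin 12) : mkq (bp k) ∈ Msub := Submodule.subset_span ⟨k, rfl⟩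

lemma mem_of_eq_basis (k : Fin 12) (p : MvPolynomial (Fin 2) ℂ) (h : bp k = p) :
    mkq p ∈ Msub := h ▸ basis_mem k

lemma red_zero (n : Fin 2) (k : Fin 12) (m a b : MvPolynomial (Fin 2) ℂ) (hm : bp k = m)
    (h : a * (3 * X 0 ^ 2 * X 1 + X 1 ^ 4) + b * (X 0 ^ 3 + 4 * X 0 * X 1 ^ 3)
        = 11 * (X n * m)) : mkq (X n * bp k) ∈ Msub := by
  have h11 : (C (11:ℂ) : MvPolynomial (Fin 2) ℂ) = 11 := map_ofNat _ _
  rw [mk_zero_of_scaled 11 (by norm_num) _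
    (Ideal.mem_span_pair.mpr ⟨a, b, by rw [h11, hm]; exact h⟩)]
  exact Submodule.zero_mem _

lemma red_smul (n : Fin 2) (k k' : Fin 12) (c : ℂ) (c' m m' : MvPolynomial (Fin 2) ℂ)
    (hc : (C c : MvPolynomial (Fin 2) ℂ) = c') (hm : bp k = m) (hm' : bp k' = m')
    (h : X n * m - c' * m' ∈ Iz) : mkq (X n * bp k) ∈ Msub := by
  have he : mkq (X n * bp k) = c • mkq (bp k') := by
    rw [← mk_C_mul]
    exact Ideal.Quotient.eq.mpr (by rw [hc, hm, hm']; exact h)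
  rw [he]
  exact Submodule.smul_mem _ _ (basis_mem k')

lemma mulX_mem (n : Fin 2) (k : Fin 12) : mkq (X n * bp k) ∈ Msub := by
  fin_cases n <;> fin_cases k
  -- X 0 * basis monomials
  · exact mem_of_eq_basis 4 _ (by show (X 0 : MvPolynomial (Fin 2) ℂ) = X 0 * 1; ring)
  · exact mem_of_eq_basis 5 _ (by show (X 0 * X 1 : MvPolynomial (Fin 2) ℂ) = X 0 * X 1; ring)
  · exact mem_of_eq_basis 6 _ (by show (X 0 * X 1^2 : MvPolynomial (Fin 2) ℂ) = X 0 * X 1^2; ring)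
  · exact mem_of_eq_basis 7 _ (by show (X 0 * X 1^3 : MvPolynomial (Fin 2) ℂ) = X 0 * X 1^3; ring)
  · exact mem_of_eq_basis 8 _ (by show (X 0^2 : MvPolynomial (Fin 2) ℂ) = X 0 * X 0; ring)
  · exact mem_of_eq_basis 9 _ (by show (X 0^2*X 1 : MvPolynomial (Fin 2) ℂ) = X 0 * (X 0 * X 1); ring)
  · exact mem_of_eq_basis 10 _ (by show (X 0^2*X 1^2 : MvPolynomial (Fin 2) ℂ) = X 0 * (X 0 * X 1^2); ring)
  · exact mem_of_eq_basis 11 _ (by show (X 0^2*X 1^3 : MvPolynomial (Fin 2) ℂ) = X 0 * (X 0 * X 1^3); ring)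
  · -- x·x² = x³ ≡ -4 xy³
    refine red_smul 0 8 7 (-4) (-4) (X 0^2) (X 0*X 1^3) (by rw [map_neg, map_ofNat]) rfl rfl
      (Ideal.mem_span_pair.mpr ⟨0, 1, by ring⟩)
  · -- x·x²y = x³y ≡ 0
    exact red_zero 0 9 (X 0^2*X 1) (4 * X 0) (-(X 1)) rfl (by ring)
  · exact red_zero 0 10 (X 0^2*X 1^2) (4 * X 0 * X 1) (-(X 1^2)) rfl (by ring)
  · exact red_zero 0 11 (X 0^2*X 1^3) (4 * X 0 * X 1^2) (-(X 1^3)) rfl (by ring)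
  -- X 1 * basis monomials
  · exact mem_of_eq_basis 1 _ (by show (X 1 : MvPolynomial (Fin 2) ℂ) = X 1 * 1; ring)
  · exact mem_of_eq_basis 2 _ (by show (X 1^2 : MvPolynomial (Fin 2) ℂ) = X 1 * X 1; ring)
  · exact mem_of_eq_basis 3 _ (by show (X 1^3 : MvPolynomial (Fin 2) ℂ) = X 1 * X 1^2; ring)
  · -- y·y³ = y⁴ ≡ -3 x²y
    refine red_smul 1 3 9 (-3) (-3) (X 1^3) (X 0^2*X 1) (by rw [map_neg, map_ofNat]) rfl rfl
      (Ideal.mem_span_pair.mpr ⟨1, 0, by ring⟩)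
  · exact mem_of_eq_basis 5 _ (by show (X 0*X 1 : MvPolynomial (Fin 2) ℂ) = X 1 * X 0; ring)
  · exact mem_of_eq_basis 6 _ (by show (X 0*X 1^2 : MvPolynomial (Fin 2) ℂ) = X 1 * (X 0 * X 1); ring)
  · exact mem_of_eq_basis 7 _ (by show (X 0*X 1^3 : MvPolynomial (Fin 2) ℂ) = X 1 * (X 0 * X 1^2); ring)
  · -- y·xy³ = xy⁴ ≡ 0
    exact red_zero 1 7 (X 0*X 1^3) (-(X 0)) (3 * X 1) rfl (by ring)
  · exact mem_of_eq_basis 9 _ (by show (X 0^2*X 1 : MvPolynomial (Fin 2) ℂ) = X 1 * X 0^2; ring)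
  · exact mem_of_eq_basis 10 _ (by show (X 0^2*X 1^2 : MvPolynomial (Fin 2) ℂ) = X 1 * (X 0^2 * X 1); ring)
  · exact mem_of_eq_basis 11 _ (by show (X 0^2*X 1^3 : MvPolynomial (Fin 2) ℂ) = X 1 * (X 0^2 * X 1^2); ring)
  · -- y·x²y³ = x²y⁴ ≡ 0
    exact red_zero 1 11 (X 0^2*X 1^3) (-(X 0^2)) (3 * X 0 * X 1) rfl (by ring)

lemma mul_X_mem_of_mem (n : Fin 2) (q : MvPolynomial (Fin 2) ℂ ⧸ Iz) (hq : q ∈ Msub) :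
    q * mkq (X n) ∈ Msub := by
  induction hq using Submodule.span_induction with
  | mem x hx =>
    obtain ⟨k, rfl⟩ := hx
    rw [← map_mul]
    have : (bp k * X n : MvPolynomial (Fin 2) ℂ) = X n * bp k := mul_comm _ _
    rw [this]
    exact mulX_mem n k
  | zero => rw [zero_mul]; exact Submodule.zero_mem _
  | add x y hx hy ihx ihy => rw [add_mul]; exact Submodule.add_mem _ ihx ihy
  | smul a x hx ih => rw [smul_mul_assoc]; exact Submodule.smul_mem _ _ ih

lemma span_top_s8 : Msub = ⊤ := by
  rw [eq_top_iff]
  rintro q -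
  obtain ⟨p, rfl⟩ := Ideal.Quotient.mk_surjective q
  induction p using MvPolynomial.induction_on with
  | C a =>
    have : (C a : MvPolynomial (Fin 2) ℂ) = C a * 1 := (mul_one _).symm
    rw [this, mk_C_mul]
    exact Submodule.smul_mem _ _ (basis_mem 0)
  | add p q hp hq => rw [map_add]; exact Submodule.add_mem _ hp hq
  | mul_X p n hp => rw [map_mul]; exact mul_X_mem_of_mem n _ hp

lemma fd : FiniteDimensional ℂ (MvPolynomial (Fin 2) ℂ ⧸ Iz) :=
  ⟨Submodule.fg_def.mpr ⟨_, Set.finite_range _, span_top_s8⟩⟩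

theorem milnor_ring_Z12_dim :
    FiniteDimensional ℂ (MvPolynomial (Fin 2) ℂ ⧸
      Ideal.span ({(3 : MvPolynomial (Fin 2) ℂ) * X 0 ^ 2 * X 1 + X 1 ^ 4, X 0 ^ 3 + 4 * X 0 * X 1 ^ 3} : Set (MvPolynomial (Fin 2) ℂ))) ∧
    Module.finrank ℂ (MvPolynomial (Fin 2) ℂ ⧸
      Ideal.span ({(3 : MvPolynomial (Fin 2) ℂ) * X 0 ^ 2 * X 1 + X 1 ^ 4, X 0 ^ 3 + 4 * X 0 * X 1 ^ 3} : Set (MvPolynomial (Fin 2) ℂ))) = 12 := by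
  refine ⟨fd, le_antisymm ?_ ?_⟩
  · have := finrank_le_of_span_eq_top (R := ℂ) (v := fun k : Fin 12 => mkq (bp k)) span_top_s8
    simpa using this
  · have hfd := fd
    have h1 : LinearMap.range Lmap = ⊤ := LinearMap.range_eq_top.mpr Lsurj
    have h2 : Module.finrank ℂ (LinearMap.range Lmap) ≤
        Module.finrank ℂ (MvPolynomial (Fin 2) ℂ ⧸ Iz) := LinearMap.finrank_range_le Lmap
    rw [h1, finrank_top] at h2
    simpa [Module.finrank_fintype_fun_eq_card] using h2
end
end

section
/- The quotient ring ℂ[X,Y]/(3X² + Y⁸, 8XY⁷) is a finite-dimensional ℂ-vector space of dimension 22. -/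
open MvPolynomial

noncomputable section

namespace MilnorZ17

open Polynomial

abbrev Rp := Polynomial ℂ
abbrev Pp := Polynomial Rp

def cc : Rp := Polynomial.C (3:ℂ)⁻¹ * Polynomial.X ^ 8

def fp : Pp := Polynomial.X ^ 2 + Polynomial.C cc

def gp : Pp := Polynomial.X * Polynomial.C (Polynomial.X ^ 7 : Rp)

lemma hfmonic : fp.Monic :=
  Polynomial.monic_X_pow_add (lt_of_le_of_lt Polynomial.degree_C_le (by norm_num))

lemma hfdeg : fp.natDegree = 2 := by
  simpa [fp] using Polynomial.natDegree_X_pow_add_C (n := 2) (a := cc)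

abbrev S := AdjoinRoot fp

def θ : S := AdjoinRoot.root fp

def J : Ideal S := Ideal.span {AdjoinRoot.mk fp gp}

lemma root_sq : θ ^ 2 = - AdjoinRoot.of fp cc := by
  have h : AdjoinRoot.mk fp (Polynomial.X ^ 2 + Polynomial.C cc) = 0 := AdjoinRoot.mk_self
  simp only [map_add, map_pow, AdjoinRoot.mk_X, AdjoinRoot.mk_C] at h
  rw [θ]
  exact eq_neg_of_add_eq_zero_left h

def bS : Module.Basis (Fin 2) Rp S :=
  (AdjoinRoot.powerBasis' hfmonic).basis.reindex (finCongr hfdeg)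

lemma bS_apply (i : Fin 2) : bS i = θ ^ (i : ℕ) := by
  simp only [bS, Module.Basis.reindex_apply]
  rw [(AdjoinRoot.powerBasis' hfmonic).basis_eq_pow]
  simp [θ]
  rfl

lemma bS_zero : bS 0 = 1 := by simpa using bS_apply 0
lemma bS_one : bS 1 = θ := by simpa using bS_apply 1

def aa : Fin 2 → Rp := ![Polynomial.X ^ 15, Polynomial.X ^ 7]

lemma mul_g (p q : Rp) :
    (p • (1 : S) + q • θ) * (AdjoinRoot.mk fp gp) =
      (-(q * (Polynomial.C (3:ℂ)⁻¹ * Polynomial.X ^ 15))) • (1 : S)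
        + (p * Polynomial.X ^ 7) • θ := by
  have h : θ ^ 2 = - AdjoinRoot.of fp cc := root_sq
  simp only [gp, cc, map_mul, AdjoinRoot.mk_X, AdjoinRoot.mk_C, Algebra.smul_def, map_neg,
    map_pow, θ, ← AdjoinRoot.algebraMap_eq] at h ⊢
  linear_combination (algebraMap Rp S q * algebraMap Rp S Polynomial.X ^ 7) * h

lemma repr_combo (p q : Rp) (i : Fin 2) :
    bS.repr (p • (1 : S) + q • θ) i = ![p, q] i := by
  rw [← bS_zero, ← bS_one]
  simp only [map_add, map_smul, Module.Basis.repr_self]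
  fin_cases i <;> simp [Finsupp.single_apply]

lemma h3 : Polynomial.C (3:ℂ) * Polynomial.C (3:ℂ)⁻¹ = (1 : Rp) := by
  rw [← Polynomial.C_mul]; norm_num

lemma mem_J_iff (x : S) : x ∈ J ↔ ∀ i : Fin 2, aa i ∣ bS.repr x i := by
  constructor
  · intro hx
    obtain ⟨s, rfl⟩ := Ideal.mem_span_singleton'.mp hx
    have hs : s = bS.repr s 0 • (1 : S) + bS.repr s 1 • θ := by
      conv_lhs => rw [← bS.sum_repr s]
      rw [Fin.sum_univ_two, bS_zero, bS_one]
    rw [hs, mul_g]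
    intro i
    rw [repr_combo]
    fin_cases i
    · exact ⟨-(bS.repr s 1 * Polynomial.C (3:ℂ)⁻¹), by simp [aa]; ring⟩
    · exact ⟨bS.repr s 0, by simp [aa]; ring⟩
  · intro h
    obtain ⟨u, hu⟩ := h 0
    obtain ⟨v, hv⟩ := h 1
    have c0 : -((-(Polynomial.C (3:ℂ) * u)) * (Polynomial.C (3:ℂ)⁻¹ * Polynomial.X ^ 15))
        = bS.repr x 0 := by
      rw [hu]
      simp only [aa, Matrix.cons_val_zero]
      linear_combination (u * Polynomial.X ^ 15) * h3
    have c1 : v * Polynomial.X ^ 7 = bS.repr x 1 := by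
      rw [hv]; simp only [aa, Matrix.cons_val_one, Matrix.head_cons, Matrix.cons_val_zero]; ring
    have hx : (v • (1:S) + (-(Polynomial.C (3:ℂ) * u)) • θ) * (AdjoinRoot.mk fp gp) = x := by
      rw [mul_g, c0, c1]
      conv_rhs => rw [← bS.sum_repr x]
      rw [Fin.sum_univ_two, bS_zero, bS_one]
    exact hx ▸ Ideal.mem_span_singleton'.mpr ⟨_, rfl⟩

end MilnorZ17

namespace MilnorZ17
open Polynomial

lemma hmap : Submodule.map (bS.equivFun : S →ₗ[Rp] (Fin 2 → Rp)) (J.restrictScalars Rp)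
    = Submodule.pi Set.univ (fun i => Ideal.span {aa i}) := by
  ext x
  simp only [Submodule.mem_map, Submodule.mem_pi, Ideal.mem_span_singleton, Set.mem_univ,
    Submodule.restrictScalars_mem, mem_J_iff, forall_true_left, LinearEquiv.coe_coe,
    Module.Basis.equivFun_apply]
  constructor
  · rintro ⟨y, hy, rfl⟩ i
    exact hy i
  · intro h
    refine ⟨bS.equivFun.symm x, fun i => ?_, by ext i; rw [← Module.Basis.equivFun_apply,
      LinearEquiv.apply_symm_apply]⟩
    rw [show bS.repr (bS.equivFun.symm x) i = x i from by
      rw [← Module.Basis.equivFun_apply, LinearEquiv.apply_symm_apply]]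
    exact h i

def E2 : (S ⧸ J) ≃ₗ[Rp] ∀ i : Fin 2, Rp ⧸ Ideal.span {aa i} :=
  (Submodule.Quotient.restrictScalarsEquiv Rp J).symm.trans
    ((Submodule.Quotient.equiv (J.restrictScalars Rp) _ bS.equivFun hmap).trans
      (Submodule.quotientPi _))

lemma finrank_adjoin (n : ℕ) : Module.finrank ℂ (AdjoinRoot ((Polynomial.X : Rp) ^ n)) = n := by
  rw [(AdjoinRoot.powerBasis' (Polynomial.monic_X_pow n)).finrank]
  simp [Polynomial.natDegree_X_pow]

lemma finrank_aux (n : ℕ) : Module.finrank ℂ (Rp ⧸ Ideal.span {(Polynomial.X : Rp) ^ n}) = n :=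
  finrank_adjoin n

instance fd_aux (n : ℕ) : Module.Finite ℂ (Rp ⧸ Ideal.span {(Polynomial.X : Rp) ^ n}) :=
  Module.Finite.of_basis (AdjoinRoot.powerBasis' (Polynomial.monic_X_pow (R := ℂ) n)).basis

end MilnorZ17

namespace MilnorZ17
open Polynomial

def e : MvPolynomial (Fin 2) ℂ ≃ₐ[ℂ] Pp :=
  (MvPolynomial.finSuccEquiv ℂ 1).trans (Polynomial.mapAlgEquiv
    (((MvPolynomial.renameEquiv ℂ (Equiv.equivPUnit.{1} (Fin 1)) :
      MvPolynomial (Fin 1) ℂ ≃ₐ[ℂ] MvPolynomial PUnit.{1} ℂ)).trans (MvPolynomial.pUnitAlgEquiv ℂ)))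

lemma e_X0 : e (X 0) = (Polynomial.X : Pp) := by
  simp [e, MvPolynomial.finSuccEquiv_X_zero, Polynomial.mapAlgEquiv]

lemma e_X1 : e (X 1) = Polynomial.C (Polynomial.X : Rp) := by
  have h1 : (X 1 : MvPolynomial (Fin 2) ℂ) = X (Fin.succ 0) := rfl
  simp [e, h1, MvPolynomial.finSuccEquiv_X_succ, Polynomial.mapAlgEquiv]

end MilnorZ17

namespace MilnorZ17
open Polynomial

lemma h8 : Polynomial.C (8:ℂ) * Polynomial.C (8:ℂ)⁻¹ = (1 : Rp) := by
  rw [← Polynomial.C_mul]; norm_num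

abbrev I0 : Ideal (MvPolynomial (Fin 2) ℂ) :=
  Ideal.span ({(3 : MvPolynomial (Fin 2) ℂ) * X 0 ^ 2 + X 1 ^ 8,
    8 * X 0 * X 1 ^ 7} : Set (MvPolynomial (Fin 2) ℂ))

lemma e_g1 : e ((3 : MvPolynomial (Fin 2) ℂ) * X 0 ^ 2 + X 1 ^ 8)
    = 3 * Polynomial.X ^ 2 + Polynomial.C ((Polynomial.X : Rp) ^ 8) := by
  rw [map_add, map_mul, map_pow, map_pow, e_X0, e_X1, map_ofNat, Polynomial.C_pow]

lemma e_g2 : e ((8 : MvPolynomial (Fin 2) ℂ) * X 0 * X 1 ^ 7)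
    = 8 * Polynomial.X * Polynomial.C ((Polynomial.X : Rp) ^ 7) := by
  rw [map_mul, map_mul, map_pow, e_X0, e_X1, map_ofNat, Polynomial.C_pow]

lemma C3eq : (Polynomial.C (Polynomial.C (3:ℂ)) : Pp) = 3 := by
  rw [map_ofNat, map_ofNat]

lemma C8eq : (Polynomial.C (Polynomial.C (8:ℂ)) : Pp) = 8 := by
  rw [map_ofNat, map_ofNat]

lemma hspan : Ideal.span ({3 * Polynomial.X ^ 2 + Polynomial.C ((Polynomial.X : Rp) ^ 8),
      8 * Polynomial.X * Polynomial.C ((Polynomial.X : Rp) ^ 7)} : Set Pp)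
    = Ideal.span {fp, gp} := by
  have hC : Polynomial.C (Polynomial.C (3:ℂ)⁻¹ * Polynomial.X ^ 8) * Polynomial.C
      (Polynomial.C (3:ℂ)) = (Polynomial.C ((Polynomial.X : Rp) ^ 8) : Pp) := by
    rw [← Polynomial.C_mul]
    congr 1
    rw [mul_comm, ← mul_assoc, h3, one_mul]
  have h3' : Polynomial.C (Polynomial.C (3:ℂ)⁻¹) * 3 = (1 : Pp) := by
    rw [← C3eq, ← Polynomial.C_mul, ← Polynomial.C_mul]
    norm_num
  have h8' : Polynomial.C (Polynomial.C (8:ℂ)⁻¹) * 8 = (1 : Pp) := by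
    rw [← C8eq, ← Polynomial.C_mul, ← Polynomial.C_mul]
    norm_num
  have hcc : Polynomial.C (Polynomial.C (3:ℂ)⁻¹) * Polynomial.C ((Polynomial.X : Rp) ^ 8)
      = (Polynomial.C cc : Pp) := by rw [← Polynomial.C_mul, cc]
  apply le_antisymm <;> rw [Ideal.span_le] <;> rintro z hz <;>
    simp only [Set.mem_insert_iff, Set.mem_singleton_iff] at hz <;>
    rcases hz with rfl | rfl <;> rw [SetLike.mem_coe, Ideal.mem_span_pair]
  · exact ⟨Polynomial.C (Polynomial.C 3), 0, by
      rw [fp, cc, zero_mul, add_zero]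
      linear_combination Polynomial.X ^ 2 * C3eq + hC⟩
  · exact ⟨0, Polynomial.C (Polynomial.C 8), by
      rw [gp, zero_mul, zero_add]
      linear_combination (Polynomial.X * Polynomial.C ((Polynomial.X : Rp) ^ 7)) * C8eq⟩
  · exact ⟨Polynomial.C (Polynomial.C (3:ℂ)⁻¹), 0, by
      rw [fp, zero_mul, add_zero]
      linear_combination Polynomial.X ^ 2 * h3' + hcc⟩
  · exact ⟨0, Polynomial.C (Polynomial.C (8:ℂ)⁻¹), by
      rw [gp, zero_mul, zero_add]
      linear_combination (Polynomial.X * Polynomial.C ((Polynomial.X : Rp) ^ 7)) * h8'⟩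

lemma hI0map : I0.map (e : MvPolynomial (Fin 2) ℂ →+* Pp) = Ideal.span {fp, gp} := by
  rw [Ideal.map_span, Set.image_insert_eq, Set.image_singleton]
  rw [show (e : MvPolynomial (Fin 2) ℂ →+* Pp) ((3 : MvPolynomial (Fin 2) ℂ) * X 0 ^ 2 + X 1 ^ 8)
      = e ((3 : MvPolynomial (Fin 2) ℂ) * X 0 ^ 2 + X 1 ^ 8) from rfl,
    show (e : MvPolynomial (Fin 2) ℂ →+* Pp) ((8 : MvPolynomial (Fin 2) ℂ) * X 0 * X 1 ^ 7)
      = e ((8 : MvPolynomial (Fin 2) ℂ) * X 0 * X 1 ^ 7) from rfl, e_g1, e_g2]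
  exact hspan

lemma hJmap : (Ideal.span {gp}).map (Ideal.Quotient.mkₐ ℂ (Ideal.span {fp})) = J := by
  rw [Ideal.map_span, Set.image_singleton]; rfl

instance twoSided_quot (I : Ideal (Pp ⧸ Ideal.span {fp})) : I.IsTwoSided :=
  ⟨fun b ha => mul_comm b _ ▸ Ideal.mul_mem_left _ b ha⟩

def Jq : Ideal (Pp ⧸ Ideal.span {fp}) := J

lemma hJmap' : (Ideal.span {gp}).map (Ideal.Quotient.mkₐ ℂ (Ideal.span {fp})) = Jq := hJmap

def Efull : (MvPolynomial (Fin 2) ℂ ⧸ I0) ≃ₗ[ℂ] ∀ i : Fin 2, Rp ⧸ Ideal.span {aa i} :=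
  ((((Ideal.quotientEquivAlg I0 (Ideal.span {fp, gp}) e hI0map.symm).trans
    (Ideal.quotientEquivAlgOfEq ℂ (by rw [Ideal.span_insert]))).trans
    (DoubleQuot.quotQuotEquivQuotSupₐ ℂ (Ideal.span {fp}) (Ideal.span {gp})).symm).trans
    (Ideal.quotientEquivAlgOfEq ℂ (A := Pp ⧸ Ideal.span {fp}) hJmap')).toLinearEquiv.trans
    (E2.restrictScalars ℂ)

instance fd_fac (i : Fin 2) : Module.Finite ℂ (Rp ⧸ Ideal.span {aa i}) := by
  fin_cases i
  · exact fd_aux 15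
  · exact fd_aux 7

end MilnorZ17

theorem milnor_ring_Z17T_dim :
    FiniteDimensional ℂ (MvPolynomial (Fin 2) ℂ ⧸
      Ideal.span ({(3 : MvPolynomial (Fin 2) ℂ) * X 0 ^ 2 + X 1 ^ 8, 8 * X 0 * X 1 ^ 7} : Set (MvPolynomial (Fin 2) ℂ))) ∧
    Module.finrank ℂ (MvPolynomial (Fin 2) ℂ ⧸
      Ideal.span ({(3 : MvPolynomial (Fin 2) ℂ) * X 0 ^ 2 + X 1 ^ 8, 8 * X 0 * X 1 ^ 7} : Set (MvPolynomial (Fin 2) ℂ))) = 22 := by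
  constructor
  · exact Module.Finite.equiv MilnorZ17.Efull.symm
  · rw [LinearEquiv.finrank_eq MilnorZ17.Efull, Module.finrank_pi_fintype, Fin.sum_univ_two,
      show MilnorZ17.aa 0 = (Polynomial.X : MilnorZ17.Rp) ^ 15 from rfl,
      show MilnorZ17.aa 1 = (Polynomial.X : MilnorZ17.Rp) ^ 7 from rfl,
      MilnorZ17.finrank_aux, MilnorZ17.finrank_aux]
end
end

section
/- The quotient ring ℂ[X,Y]/(3X² + Y⁹, 9XY⁸) is a finite-dimensional ℂ-vector space of dimension 25. -/
open MvPolynomial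

namespace Z19T

noncomputable section

abbrev P := MvPolynomial (Fin 2) ℂ

def g1 : P := (3 : P) * X 0 ^ 2 + X 1 ^ 9
def g2 : P := 9 * X 0 * X 1 ^ 8

def I : Ideal P := Ideal.span ({g1, g2} : Set P)

/-- normal form of the monomial `x^a y^b` modulo the Jacobian ideal. -/
def nf2 (a b : ℕ) : P :=
  if a % 2 = 0 then
    if b + 9 * (a / 2) < 17 then ((-1/3 : ℂ) ^ (a / 2)) • (X 1 ^ (b + 9 * (a / 2))) else 0
  else
    if b + 9 * (a / 2) < 8 then ((-1/3 : ℂ) ^ (a / 2)) • (X 0 * X 1 ^ (b + 9 * (a / 2))) else 0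

lemma L1 (a b : ℕ) : (3 : ℂ) • nf2 (a + 2) b + nf2 a (b + 9) = 0 := by
  have h1 : (a + 2) % 2 = a % 2 := by omega
  have h2 : (a + 2) / 2 = a / 2 + 1 := by omega
  have h3 : b + 9 * (a / 2 + 1) = (b + 9) + 9 * (a / 2) := by ring
  have hsc : (3 : ℂ) * (-1/3 : ℂ) ^ (a / 2 + 1) + (-1/3 : ℂ) ^ (a / 2) = 0 := by
    rw [pow_succ]; ring
  unfold nf2
  rw [h1, h2, h3]
  split_ifs with hp hc hc <;> simp only [smul_zero, add_zero, zero_add, smul_smul,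
    ← add_smul]
  · rw [hsc, zero_smul]
  · rw [hsc, zero_smul]

lemma L2 (a b : ℕ) : nf2 (a + 1) (b + 8) = 0 := by
  unfold nf2
  split_ifs <;> first | rfl | (exfalso; omega)

lemma hg1 : g1 ∈ I := Ideal.subset_span (by simp)
lemma hg2 : g2 ∈ I := Ideal.subset_span (by simp)

lemma inv_smul_mem {c : ℂ} (hc : c ≠ 0) {p : P} (h : c • p ∈ I) : p ∈ I := by
  have h2 := I.smul_of_tower_mem c⁻¹ h
  rwa [smul_smul, inv_mul_cancel₀ hc, one_smul] at h2

lemma hy17 : (X 1 : P) ^ 17 ∈ I := by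
  apply inv_smul_mem (show (3:ℂ) ≠ 0 by norm_num)
  have h : (3 : ℂ) • ((X 1 : P) ^ 17) = X 1 ^ 8 * g1 * 3 - X 0 * g2 := by
    rw [smul_eq_C_mul, show (C (3:ℂ) : P) = 3 from map_ofNat C 3]; unfold g1 g2; ring
  rw [h]
  exact I.sub_mem (I.mul_mem_right _ (I.mul_mem_left _ hg1)) (I.mul_mem_left _ hg2)

lemma hxy8 : (X 0 : P) * X 1 ^ 8 ∈ I := by
  apply inv_smul_mem (show (9:ℂ) ≠ 0 by norm_num)
  have h : (9 : ℂ) • ((X 0 : P) * X 1 ^ 8) = g2 := by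
    rw [smul_eq_C_mul, show (C (9:ℂ) : P) = 9 from map_ofNat C 9]; unfold g2; ring
  rw [h]; exact hg2

lemma L3 (a : ℕ) : ∀ b, (X 0 : P) ^ a * X 1 ^ b - nf2 a b ∈ I := by
  induction a using Nat.strong_induction_on with
  | _ a IH =>
    obtain _ | _ | k := a <;> intro b
    · by_cases hb : b < 17
      · have : nf2 0 b = X 1 ^ b := by norm_num [nf2, hb]
        rw [this, pow_zero, one_mul, sub_self]; exact I.zero_mem
      · have : nf2 0 b = 0 := by norm_num [nf2, hb]
        rw [this, pow_zero, one_mul, sub_zero]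
        obtain ⟨c, rfl⟩ : ∃ c, b = c + 17 := ⟨b - 17, by omega⟩
        rw [pow_add]; exact I.mul_mem_left _ hy17
    · by_cases hb : b < 8
      · have : nf2 1 b = X 0 * X 1 ^ b := by norm_num [nf2, hb]
        rw [this, pow_one, sub_self]; exact I.zero_mem
      · have : nf2 1 b = 0 := by norm_num [nf2, hb]
        rw [this, sub_zero]
        obtain ⟨c, rfl⟩ : ∃ c, b = c + 8 := ⟨b - 8, by omega⟩
        have h : (X 0 : P) ^ 1 * X 1 ^ (c + 8) = X 1 ^ c * (X 0 * X 1 ^ 8) := by ring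
        rw [h]; exact I.mul_mem_left _ hxy8
    · apply inv_smul_mem (show (3:ℂ) ≠ 0 by norm_num)
      have e1 := L1 k b
      have h2 : (3 : ℂ) • nf2 (k + 2) b = -nf2 k (b + 9) :=
        eq_neg_of_add_eq_zero_left e1
      have key : (3 : ℂ) • ((X 0 : P) ^ (k + 2) * X 1 ^ b - nf2 (k + 2) b)
          = (X 0 ^ k * X 1 ^ b) * g1 - (X 0 ^ k * X 1 ^ (b + 9) - nf2 k (b + 9)) := by
        rw [smul_sub, h2, smul_eq_C_mul, map_ofNat]
        unfold g1; ring
      rw [key]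
      exact I.sub_mem (I.mul_mem_left _ hg1) (IH k (by omega) (b + 9))

def N (m : Fin 2 →₀ ℕ) : P := nf2 (m 0) (m 1)

def ψ : P →ₗ[ℂ] P := (basisMonomials (Fin 2) ℂ).constr ℂ N

lemma monomial_eq_prod (m : Fin 2 →₀ ℕ) (c : ℂ) :
    (monomial m c : P) = c • (X 0 ^ (m 0) * X 1 ^ (m 1)) := by
  have hm : m = Finsupp.single 0 (m 0) + Finsupp.single 1 (m 1) := by
    ext i; fin_cases i <;> simp [Finsupp.single_apply]
  conv_lhs => rw [hm]
  rw [X_pow_eq_monomial, X_pow_eq_monomial, monomial_mul, mul_one,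
    smul_monomial, smul_eq_mul, mul_one]

lemma pow_eq_monomial (a b : ℕ) :
    (X 0 : P) ^ a * X 1 ^ b = monomial (Finsupp.single 0 a + Finsupp.single 1 b) 1 := by
  rw [X_pow_eq_monomial, X_pow_eq_monomial, monomial_mul, mul_one]

lemma ψ_pow (a b : ℕ) : ψ ((X 0 : P) ^ a * X 1 ^ b) = nf2 a b := by
  rw [pow_eq_monomial]
  have h : (monomial (Finsupp.single 0 a + Finsupp.single 1 b) (1:ℂ) : P)
      = (basisMonomials (Fin 2) ℂ) (Finsupp.single 0 a + Finsupp.single 1 b) := by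
    rw [coe_basisMonomials]
  rw [h, ψ, Module.Basis.constr_basis]
  unfold N
  simp [Finsupp.single_apply]

lemma ψ_mul_g1 (p : P) : ψ (p * g1) = 0 := by
  induction p using MvPolynomial.induction_on' with
  | add p q hp hq => rw [add_mul, map_add, hp, hq, add_zero]
  | monomial m c =>
    rw [monomial_eq_prod, smul_mul_assoc, map_smul]
    have h : ((X 0 : P) ^ (m 0) * X 1 ^ (m 1)) * g1
        = (3 : ℂ) • ((X 0 : P) ^ (m 0 + 2) * X 1 ^ (m 1)) + X 0 ^ (m 0) * X 1 ^ (m 1 + 9) := by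
      rw [smul_eq_C_mul, show (C (3:ℂ) : P) = 3 from map_ofNat C 3]; unfold g1; ring
    rw [h, map_add, map_smul, ψ_pow, ψ_pow, L1, smul_zero]

lemma ψ_mul_g2 (p : P) : ψ (p * g2) = 0 := by
  induction p using MvPolynomial.induction_on' with
  | add p q hp hq => rw [add_mul, map_add, hp, hq, add_zero]
  | monomial m c =>
    rw [monomial_eq_prod, smul_mul_assoc, map_smul]
    have h : ((X 0 : P) ^ (m 0) * X 1 ^ (m 1)) * g2
        = (9 : ℂ) • ((X 0 : P) ^ (m 0 + 1) * X 1 ^ (m 1 + 8)) := by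
      rw [smul_eq_C_mul, show (C (9:ℂ) : P) = 9 from map_ofNat C 9]; unfold g2; ring
    rw [h, map_smul, ψ_pow, L2, smul_zero, smul_zero]

lemma ψ_of_mem {p : P} (hp : p ∈ I) : ψ p = 0 := by
  obtain ⟨u, v, rfl⟩ := Ideal.mem_span_pair.mp hp
  rw [map_add, ψ_mul_g1, ψ_mul_g2, add_zero]

lemma ψ_fix (p : P) : p - ψ p ∈ I := by
  induction p using MvPolynomial.induction_on' with
  | add p q hp hq =>
    have h : (p + q) - ψ (p + q) = (p - ψ p) + (q - ψ q) := by
      rw [map_add]; ring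
    rw [h]; exact I.add_mem hp hq
  | monomial m c =>
    rw [monomial_eq_prod, map_smul, ψ_pow, ← smul_sub]
    exact I.smul_of_tower_mem c (L3 (m 0) (m 1))

/-- the 25 exponent vectors `y^k (k<17)`, `x y^(k-17) (17 ≤ k < 25)`. -/
def s (k : Fin 25) : Fin 2 →₀ ℕ :=
  if (k : ℕ) < 17 then Finsupp.single 1 (k : ℕ)
  else Finsupp.single 0 1 + Finsupp.single 1 ((k : ℕ) - 17)

def mono (k : Fin 25) : P := monomial (s k) 1

lemma s_inj : Function.Injective s := by
  intro j k h
  unfold s at h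
  split_ifs at h with hj hk hk <;>
  · have h0 := DFunLike.congr_fun h 0
    have h1 := DFunLike.congr_fun h 1
    simp [Finsupp.single_apply] at h0 h1
    all_goals exact Fin.ext (by omega)

lemma mono_lt {e : ℕ} (h : e < 17) : mono ⟨e, by omega⟩ = (X 1 : P) ^ e := by
  unfold mono s
  rw [if_pos (by exact h), X_pow_eq_monomial]

lemma mono_ge {e : ℕ} (h : e < 8) : mono ⟨e + 17, by omega⟩ = (X 0 : P) * X 1 ^ e := by
  unfold mono s
  rw [if_neg (by show ¬ (e + 17 < 17); omega)]
  have h2 : (X 0 : P) * X 1 ^ e = X 0 ^ 1 * X 1 ^ e := by ring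
  rw [h2, pow_eq_monomial]
  simp

lemma ψ_mono (k : Fin 25) : ψ (mono k) = mono k := by
  by_cases hk : (k : ℕ) < 17
  · have hk25 := k.isLt
    have h : k = ⟨(k : ℕ), by omega⟩ := rfl
    rw [h, mono_lt hk]
    have h2 : (X 1 : P) ^ (k : ℕ) = X 0 ^ 0 * X 1 ^ (k : ℕ) := by
      rw [pow_zero, one_mul]
    rw [h2, ψ_pow]
    norm_num [nf2, hk]
  · have hk25 := k.isLt
    have hk2 : (k : ℕ) - 17 < 8 := by omega
    have h : k = ⟨((k : ℕ) - 17) + 17, by omega⟩ :=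
      Fin.ext (by show (k : ℕ) = (k : ℕ) - 17 + 17; omega)
    rw [h, mono_ge hk2]
    have h2 : (X 0 : P) * X 1 ^ ((k : ℕ) - 17) = X 0 ^ 1 * X 1 ^ ((k : ℕ) - 17) := by ring
    rw [h2, ψ_pow]
    norm_num [nf2, hk2]

def π : P →ₗ[ℂ] (P ⧸ I) := (Ideal.Quotient.mkₐ ℂ I).toLinearMap

lemma π_eq_zero_iff {p : P} : π p = 0 ↔ p ∈ I := by
  show Ideal.Quotient.mkₐ ℂ I p = 0 ↔ p ∈ I
  rw [Ideal.Quotient.mkₐ_eq_mk]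
  exact Ideal.Quotient.eq_zero_iff_mem

lemma mono_li : LinearIndependent ℂ mono := by
  have h := (basisMonomials (Fin 2) ℂ).linearIndependent.comp s s_inj
  have h2 : (⇑(basisMonomials (Fin 2) ℂ) ∘ s) = mono := by
    funext k; simp [mono, Function.comp]
  rwa [h2] at h

lemma indep : LinearIndependent ℂ (fun k => π (mono k)) := by
  rw [Fintype.linearIndependent_iff]
  intro c hc
  set p : P := ∑ k, c k • mono k with hp
  have hπp : π p = 0 := by
    rw [hp, map_sum]
    simpa only [map_smul] using hc
  have hpI : p ∈ I := π_eq_zero_iff.mp hπp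
  have hψp : ψ p = 0 := ψ_of_mem hpI
  have hψp2 : ψ p = p := by
    rw [hp, map_sum]
    exact Finset.sum_congr rfl fun k _ => by rw [map_smul, ψ_mono]
  have hp0 : p = 0 := by rw [← hψp2, hψp]
  exact Fintype.linearIndependent_iff.mp mono_li c (by rw [← hp]; exact hp0)

lemma nf2_mem_span (a b : ℕ) :
    π (nf2 a b) ∈ Submodule.span ℂ (Set.range fun k => π (mono k)) := by
  unfold nf2
  split_ifs with h1 h2 h3
  · rw [map_smul]
    refine Submodule.smul_mem _ _ (Submodule.subset_span ⟨⟨b + 9 * (a / 2), by omega⟩, ?_⟩)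
    show π (mono _) = _
    rw [mono_lt h2]
  · simp
  · rw [map_smul]
    refine Submodule.smul_mem _ _ (Submodule.subset_span
      ⟨⟨(b + 9 * (a / 2)) + 17, by omega⟩, ?_⟩)
    show π (mono _) = _
    rw [mono_ge h3]
  · simp

lemma ψ_mem_span (p : P) :
    π (ψ p) ∈ Submodule.span ℂ (Set.range fun k => π (mono k)) := by
  induction p using MvPolynomial.induction_on' with
  | add p q hp hq => rw [map_add, map_add]; exact Submodule.add_mem _ hp hq
  | monomial m c =>
    rw [monomial_eq_prod, map_smul, ψ_pow, map_smul]
    exact Submodule.smul_mem _ _ (nf2_mem_span (m 0) (m 1))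

lemma spans : ⊤ ≤ Submodule.span ℂ (Set.range fun k => π (mono k)) := by
  rintro q -
  obtain ⟨p, rfl⟩ := Ideal.Quotient.mkₐ_surjective ℂ I q
  have h1 : π p = π (ψ p) := by
    have h := π_eq_zero_iff.mpr (ψ_fix p)
    rw [map_sub] at h
    have := sub_eq_zero.mp h
    exact this
  show π p ∈ _
  rw [h1]
  exact ψ_mem_span p

def bQ : Module.Basis (Fin 25) ℂ (P ⧸ I) := Module.Basis.mk indep spans

theorem main :
    FiniteDimensional ℂ (P ⧸ I) ∧ Module.finrank ℂ (P ⧸ I) = 25 := by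
  refine ⟨Module.Finite.of_basis bQ, ?_⟩
  rw [Module.finrank_eq_card_basis bQ, Fintype.card_fin]

end

end Z19T

theorem milnor_ring_Z19T_dim :
    FiniteDimensional ℂ (MvPolynomial (Fin 2) ℂ ⧸
      Ideal.span ({(3 : MvPolynomial (Fin 2) ℂ) * X 0 ^ 2 + X 1 ^ 9, 9 * X 0 * X 1 ^ 8} : Set (MvPolynomial (Fin 2) ℂ))) ∧
    Module.finrank ℂ (MvPolynomial (Fin 2) ℂ ⧸
      Ideal.span ({(3 : MvPolynomial (Fin 2) ℂ) * X 0 ^ 2 + X 1 ^ 9, 9 * X 0 * X 1 ^ 8} : Set (MvPolynomial (Fin 2) ℂ))) = 25 :=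
  Z19T.main
end

section
/- The quotient ring ℂ[X,Y]/(4X³ + Y⁵, 5XY⁴) is a finite-dimensional ℂ-vector space of dimension 17. -/
open MvPolynomial

namespace W17

noncomputable section

local notation "B" => Polynomial ℂ
local notation "Y" => (Polynomial.X : Polynomial ℂ)
local notation "P2" => Polynomial (Polynomial ℂ)

def f' : P2 := Polynomial.X ^ 3 + Polynomial.C (Polynomial.C (4⁻¹:ℂ) * Y ^ 5)
def g' : P2 := Polynomial.X * Polynomial.C (Y ^ 4)

lemma monic_f' : f'.Monic := by
  have h : (Polynomial.C (Polynomial.C (4⁻¹:ℂ) * Y ^ 5) : P2).degree < (3:ℕ) :=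
    lt_of_le_of_lt Polynomial.degree_C_le (by norm_num)
  simpa [f'] using Polynomial.monic_X_pow_add (n := 3) h

lemma degree_f' : f'.degree = 3 := by
  rw [f']
  compute_degree!

/-- generic: quotient by ideal as ℂ-module equals quotient by restricted scalars -/
def quotRestrict {A : Type*} [CommRing A] [Algebra ℂ A] (I : Ideal A) :
    (A ⧸ Submodule.restrictScalars ℂ I) ≃ₗ[ℂ] (A ⧸ I) := by
  refine LinearEquiv.ofBijective
    (Submodule.liftQ _ (Ideal.Quotient.mkₐ ℂ I).toLinearMap ?hle) ⟨?inj, ?surj⟩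
  case hle =>
    intro x hx
    simpa [LinearMap.mem_ker, Ideal.Quotient.eq_zero_iff_mem] using hx
  case inj =>
    rw [← LinearMap.ker_eq_bot, Submodule.ker_liftQ_eq_bot]
    intro x hx
    simpa [LinearMap.mem_ker, Ideal.Quotient.eq_zero_iff_mem] using hx
  case surj =>
    intro z
    obtain ⟨a, rfl⟩ := Ideal.Quotient.mk_surjective z
    exact ⟨Submodule.Quotient.mk a, rfl⟩

/-- the coefficient-truncation linear map -/
def coeffQuot (k : ℕ) : B →ₗ[ℂ] (Fin k → ℂ) where
  toFun p := fun i => p.coeff i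
  map_add' p q := by ext i; simp
  map_smul' c p := by ext i; simp

lemma ker_coeffQuot (k : ℕ) :
    LinearMap.ker (coeffQuot k) = (Ideal.span {(Y ^ k : B)}).restrictScalars ℂ := by
  ext p
  simp only [LinearMap.mem_ker, Submodule.restrictScalars_mem, Ideal.mem_span_singleton,
    Polynomial.X_pow_dvd_iff, coeffQuot, LinearMap.coe_mk, AddHom.coe_mk]
  constructor
  · intro h d hd
    have := congrFun h ⟨d, hd⟩
    simpa using this
  · intro h
    ext i
    simpa using h i i.2

lemma surj_coeffQuot (k : ℕ) : Function.Surjective (coeffQuot k) := by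
  intro v
  refine ⟨∑ i : Fin k, Polynomial.C (v i) * Y ^ (i : ℕ), ?_⟩
  ext i
  simp only [coeffQuot, LinearMap.coe_mk, AddHom.coe_mk, Polynomial.finset_sum_coeff,
    Polynomial.coeff_C_mul, Polynomial.coeff_X_pow]
  rw [Finset.sum_eq_single i]
  · simp
  · intro j _ hj
    have h : ¬ ((i:ℕ) = (j:ℕ)) := fun h => hj (Fin.ext h).symm
    simp [if_neg h]
  · simp

lemma expand3 (p : P2) (hp : p.degree < 3) :
    p = Polynomial.C (p.coeff 0) + Polynomial.C (p.coeff 1) * Polynomial.X +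
      Polynomial.C (p.coeff 2) * Polynomial.X ^ 2 := by
  ext n
  match n with
  | 0 => simp
  | 1 => simp [Polynomial.coeff_C]
  | 2 => simp [Polynomial.coeff_C]
  | (n+3) =>
    rw [Polynomial.coeff_eq_zero_of_degree_lt (lt_of_lt_of_le hp (by exact_mod_cast Nat.le_add_left 3 n))]
    simp [Polynomial.coeff_C, Polynomial.coeff_X_pow]

lemma deg_lt_three (a b c : B) :
    (Polynomial.C a + Polynomial.C b * Polynomial.X + Polynomial.C c * Polynomial.X ^ 2).degree < 3 := by
  have h : (Polynomial.C a + Polynomial.C b * Polynomial.X + Polynomial.C c * Polynomial.X ^ 2).degree ≤ 2 := by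
    compute_degree
  exact lt_of_le_of_lt h (by norm_num)

lemma mod_eq_of_dvd_sub {p q : P2} (h : f' ∣ (p - q)) : p %ₘ f' = q %ₘ f' := by
  have h0 := (Polynomial.modByMonic_eq_zero_iff_dvd monic_f').mpr h
  rw [Polynomial.sub_modByMonic, sub_eq_zero] at h0
  exact h0

lemma mod_self_of_deg (p : P2) (hp : p.degree < 3) : p %ₘ f' = p :=
  (Polynomial.modByMonic_eq_self_iff monic_f').mpr (by rw [degree_f']; exact hp)

lemma mod_mul_f' (u : P2) : (u * f') %ₘ f' = 0 :=
  (Polynomial.modByMonic_eq_zero_iff_dvd monic_f').mpr ⟨u, mul_comm u f'⟩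

lemma mod_mul_g' (v : P2) :
    (v * g') %ₘ f' =
      Polynomial.C (-(Y ^ 4 * ((v %ₘ f').coeff 2 * (Polynomial.C (4⁻¹:ℂ) * Y ^ 5))))
      + Polynomial.C (Y ^ 4 * (v %ₘ f').coeff 0) * Polynomial.X
      + Polynomial.C (Y ^ 4 * (v %ₘ f').coeff 1) * Polynomial.X ^ 2 := by
  have hv : v %ₘ f' + f' * (v /ₘ f') = v := Polynomial.modByMonic_add_div v f'
  have hexp := expand3 (v %ₘ f')
    (lt_of_lt_of_le (Polynomial.degree_modByMonic_lt v monic_f') (le_of_eq degree_f'))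
  have hdvd : f' ∣ (v * g' -
      (Polynomial.C (-(Y ^ 4 * ((v %ₘ f').coeff 2 * (Polynomial.C (4⁻¹:ℂ) * Y ^ 5))))
      + Polynomial.C (Y ^ 4 * (v %ₘ f').coeff 0) * Polynomial.X
      + Polynomial.C (Y ^ 4 * (v %ₘ f').coeff 1) * Polynomial.X ^ 2)) := by
    refine ⟨Polynomial.C (Y ^ 4) * (Polynomial.X * (v /ₘ f') + Polynomial.C ((v %ₘ f').coeff 2)), ?_⟩
    simp only [f', g', map_mul, map_neg, map_pow] at hv hexp ⊢
    linear_combination (Polynomial.X * Polynomial.C Polynomial.X ^ 4) * hv.symm +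
      (Polynomial.X * Polynomial.C Polynomial.X ^ 4) * hexp
  rw [mod_eq_of_dvd_sub hdvd, mod_self_of_deg _ (deg_lt_three _ _ _)]

def modL : P2 →ₗ[ℂ] P2 := (Polynomial.modByMonicHom f').restrictScalars ℂ
def coefL (i : ℕ) : P2 →ₗ[ℂ] B := (Polynomial.lcoeff (Polynomial ℂ) i).restrictScalars ℂ

def Ψ : P2 →ₗ[ℂ] (Fin 9 → ℂ) × (Fin 4 → ℂ) × (Fin 4 → ℂ) :=
  (coeffQuot 9 ∘ₗ coefL 0 ∘ₗ modL).prod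
    ((coeffQuot 4 ∘ₗ coefL 1 ∘ₗ modL).prod (coeffQuot 4 ∘ₗ coefL 2 ∘ₗ modL))

lemma Ψ_apply (p : P2) :
    Ψ p = (coeffQuot 9 ((p %ₘ f').coeff 0),
      coeffQuot 4 ((p %ₘ f').coeff 1), coeffQuot 4 ((p %ₘ f').coeff 2)) := rfl

lemma coeffQuot_eq_zero_of_dvd {k : ℕ} {b : B} (h : Y ^ k ∣ b) : coeffQuot k b = 0 := by
  have hb : b ∈ LinearMap.ker (coeffQuot k) := by
    rw [ker_coeffQuot]
    simpa [Ideal.mem_span_singleton] using h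
  exact hb

lemma dvd_of_coeffQuot_eq_zero {k : ℕ} {b : B} (h : coeffQuot k b = 0) : Y ^ k ∣ b := by
  have hb : b ∈ LinearMap.ker (coeffQuot k) := h
  rw [ker_coeffQuot] at hb
  simpa [Ideal.mem_span_singleton] using hb

lemma coeff3_0 (a b c : B) :
    (Polynomial.C a + Polynomial.C b * Polynomial.X + Polynomial.C c * Polynomial.X ^ 2).coeff 0 = a := by
  simp [Polynomial.coeff_C]

lemma coeff3_1 (a b c : B) :
    (Polynomial.C a + Polynomial.C b * Polynomial.X + Polynomial.C c * Polynomial.X ^ 2).coeff 1 = b := by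
  simp [Polynomial.coeff_C]

lemma coeff3_2 (a b c : B) :
    (Polynomial.C a + Polynomial.C b * Polynomial.X + Polynomial.C c * Polynomial.X ^ 2).coeff 2 = c := by
  simp [Polynomial.coeff_C]

lemma h4 : (Polynomial.C (Polynomial.C (4⁻¹:ℂ)) : P2) * 4 = 1 := by
  rw [← map_ofNat (Polynomial.C : Polynomial ℂ →+* P2) 4,
    ← map_ofNat (Polynomial.C : ℂ →+* Polynomial ℂ) 4, ← map_mul, ← map_mul]
  norm_num

lemma ker_Ψ : LinearMap.ker Ψ = (Ideal.span {f', g'}).restrictScalars ℂ := by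
  ext p
  simp only [LinearMap.mem_ker, Submodule.restrictScalars_mem]
  constructor
  · intro hp
    rw [Ψ_apply, Prod.mk_eq_zero, Prod.mk_eq_zero] at hp
    obtain ⟨h0, h1, h2⟩ := hp
    obtain ⟨a, ha⟩ := dvd_of_coeffQuot_eq_zero h0
    obtain ⟨b, hb⟩ := dvd_of_coeffQuot_eq_zero h1
    obtain ⟨c, hc⟩ := dvd_of_coeffQuot_eq_zero h2
    set r := p %ₘ f' with hr_def
    set d := p /ₘ f' with hd_def
    have hv : r + f' * d = p := Polynomial.modByMonic_add_div p f'
    have hexp : r = Polynomial.C (r.coeff 0) + Polynomial.C (r.coeff 1) * Polynomial.X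
        + Polynomial.C (r.coeff 2) * Polynomial.X ^ 2 := expand3 r
      (lt_of_lt_of_le (Polynomial.degree_modByMonic_lt p monic_f') (le_of_eq degree_f'))
    refine Ideal.mem_span_pair.mpr
      ⟨d + Polynomial.C a * 4 * Polynomial.C (Y ^ 4),
        -(Polynomial.C a * 4 * Polynomial.X ^ 2) + Polynomial.C b + Polynomial.C c * Polynomial.X,
        ?_⟩
    have hca : (Polynomial.C (r.coeff 0) : P2) = Polynomial.C Polynomial.X ^ 9 * Polynomial.C a := by
      rw [ha, map_mul, map_pow]
    have hcb : (Polynomial.C (r.coeff 1) : P2) = Polynomial.C Polynomial.X ^ 4 * Polynomial.C b := by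
      rw [hb, map_mul, map_pow]
    have hcc : (Polynomial.C (r.coeff 2) : P2) = Polynomial.C Polynomial.X ^ 4 * Polynomial.C c := by
      rw [hc, map_mul, map_pow]
    simp only [f', g', map_mul, map_pow] at hv ⊢
    linear_combination hv - hexp - hca - Polynomial.X * hcb - Polynomial.X ^ 2 * hcc +
      (Polynomial.C a * Polynomial.C Polynomial.X ^ 9) * h4
  · intro hp
    obtain ⟨u, v, rfl⟩ := Ideal.mem_span_pair.mp hp
    rw [map_add]
    have hu : Ψ (u * f') = 0 := by
      rw [Ψ_apply, mod_mul_f']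
      simp [map_zero]
    have hv : Ψ (v * g') = 0 := by
      rw [Ψ_apply, mod_mul_g']
      rw [Prod.mk_eq_zero, Prod.mk_eq_zero, coeff3_0, coeff3_1, coeff3_2]
      refine ⟨coeffQuot_eq_zero_of_dvd ⟨-(Polynomial.C (4⁻¹:ℂ) * (v %ₘ f').coeff 2), by ring⟩,
        coeffQuot_eq_zero_of_dvd ⟨(v %ₘ f').coeff 0, by ring⟩,
        coeffQuot_eq_zero_of_dvd ⟨(v %ₘ f').coeff 1, by ring⟩⟩
    rw [hu, hv, add_zero]

lemma surj_Ψ : Function.Surjective Ψ := by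
  rintro ⟨u, v, w⟩
  obtain ⟨p0, hp0⟩ := surj_coeffQuot 9 u
  obtain ⟨p1, hp1⟩ := surj_coeffQuot 4 v
  obtain ⟨p2, hp2⟩ := surj_coeffQuot 4 w
  refine ⟨Polynomial.C p0 + Polynomial.C p1 * Polynomial.X + Polynomial.C p2 * Polynomial.X ^ 2, ?_⟩
  rw [Ψ_apply, mod_self_of_deg _ (deg_lt_three _ _ _)]
  simp [Polynomial.coeff_C, Polynomial.coeff_X_pow, hp0, hp1, hp2]

def u1 : MvPolynomial (Fin 1) ℂ ≃ₐ[ℂ] Polynomial ℂ :=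
  (finSuccEquiv ℂ 0).trans (Polynomial.mapAlgEquiv (isEmptyAlgEquiv ℂ (Fin 0)))

def e2 : MvPolynomial (Fin 2) ℂ ≃ₐ[ℂ] P2 :=
  (finSuccEquiv ℂ 1).trans (Polynomial.mapAlgEquiv u1)

lemma u1_X0 : u1 (X 0) = Polynomial.X := by
  rw [u1, AlgEquiv.trans_apply, finSuccEquiv_X_zero]
  simp [Polynomial.coe_mapAlgEquiv]

lemma e2_X0 : e2 (X 0) = Polynomial.X := by
  rw [e2, AlgEquiv.trans_apply, finSuccEquiv_X_zero]
  simp [Polynomial.coe_mapAlgEquiv]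

lemma e2_X1 : e2 (X 1) = Polynomial.C Y := by
  have h1 : (X 1 : MvPolynomial (Fin 2) ℂ) = X (Fin.succ 0) := rfl
  rw [e2, AlgEquiv.trans_apply, h1, finSuccEquiv_X_succ]
  simp [Polynomial.coe_mapAlgEquiv, u1_X0]

lemma h5 : (Polynomial.C (Polynomial.C (5⁻¹:ℂ)) : P2) * 5 = 1 := by
  rw [← map_ofNat (Polynomial.C : Polynomial ℂ →+* P2) 5,
    ← map_ofNat (Polynomial.C : ℂ →+* Polynomial ℂ) 5, ← map_mul, ← map_mul]
  norm_num

lemma span_eq :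
    Ideal.span ({f', g'} : Set P2) =
      (Ideal.span ({4 * X 0 ^ 3 + X 1 ^ 5, 5 * X 0 * X 1 ^ 4} :
        Set (MvPolynomial (Fin 2) ℂ))).map (e2 : MvPolynomial (Fin 2) ℂ →+* P2) := by
  rw [Ideal.map_span, Set.image_insert_eq, Set.image_singleton]
  have hF : (e2 : MvPolynomial (Fin 2) ℂ →+* P2) (4 * X 0 ^ 3 + X 1 ^ 5)
      = 4 * Polynomial.X ^ 3 + Polynomial.C Y ^ 5 := by
    simp [map_add, map_mul, map_pow, map_ofNat, e2_X0, e2_X1]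
  have hG : (e2 : MvPolynomial (Fin 2) ℂ →+* P2) (5 * X 0 * X 1 ^ 4)
      = 5 * Polynomial.X * Polynomial.C Y ^ 4 := by
    simp [map_mul, map_pow, map_ofNat, e2_X0, e2_X1]
  rw [hF, hG]
  apply le_antisymm <;> rw [Ideal.span_le] <;> rintro x (rfl | rfl)
  · have hf : f' = Polynomial.C (Polynomial.C (4⁻¹:ℂ)) *
        (4 * Polynomial.X ^ 3 + Polynomial.C Y ^ 5) := by
      simp only [f', map_mul, map_pow]
      linear_combination (- Polynomial.X ^ 3) * h4
    rw [hf]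
    exact Ideal.mul_mem_left _ _ (Ideal.subset_span (by simp))
  · have hg : g' = Polynomial.C (Polynomial.C (5⁻¹:ℂ)) *
        (5 * Polynomial.X * Polynomial.C Y ^ 4) := by
      simp only [g', map_pow]
      linear_combination (- Polynomial.X * Polynomial.C Polynomial.X ^ 4) * h5
    rw [hg]
    exact Ideal.mul_mem_left _ _ (Ideal.subset_span (by simp))
  · have hf : 4 * Polynomial.X ^ 3 + Polynomial.C Y ^ 5 = 4 * f' := by
      simp only [f', map_mul, map_pow]
      linear_combination (- Polynomial.C Polynomial.X ^ 5) * h4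
    rw [hf]
    exact Ideal.mul_mem_left _ _ (Ideal.subset_span (by simp))
  · have hg : 5 * Polynomial.X * Polynomial.C Y ^ 4 = 5 * g' := by
      simp only [g', map_pow]; ring
    rw [hg]
    exact Ideal.mul_mem_left _ _ (Ideal.subset_span (by simp))

end
end W17

theorem milnor_ring_W17_dim :
    FiniteDimensional ℂ (MvPolynomial (Fin 2) ℂ ⧸
      Ideal.span ({(4 : MvPolynomial (Fin 2) ℂ) * X 0 ^ 3 + X 1 ^ 5, 5 * X 0 * X 1 ^ 4} : Set (MvPolynomial (Fin 2) ℂ))) ∧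
    Module.finrank ℂ (MvPolynomial (Fin 2) ℂ ⧸
      Ideal.span ({(4 : MvPolynomial (Fin 2) ℂ) * X 0 ^ 3 + X 1 ^ 5, 5 * X 0 * X 1 ^ 4} : Set (MvPolynomial (Fin 2) ℂ))) = 17 := by
  have E1 := Ideal.quotientEquivAlg (R₁ := ℂ)
    (Ideal.span ({(4 : MvPolynomial (Fin 2) ℂ) * X 0 ^ 3 + X 1 ^ 5, 5 * X 0 * X 1 ^ 4} :
      Set (MvPolynomial (Fin 2) ℂ)))
    (Ideal.span ({W17.f', W17.g'} : Set (Polynomial (Polynomial ℂ)))) W17.e2 W17.span_eq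
  have E : (MvPolynomial (Fin 2) ℂ ⧸
      Ideal.span ({(4 : MvPolynomial (Fin 2) ℂ) * X 0 ^ 3 + X 1 ^ 5, 5 * X 0 * X 1 ^ 4} :
        Set (MvPolynomial (Fin 2) ℂ))) ≃ₗ[ℂ] ((Fin 9 → ℂ) × (Fin 4 → ℂ) × (Fin 4 → ℂ)) :=
    E1.toLinearEquiv.trans ((W17.quotRestrict _).symm.trans
      ((Submodule.quotEquivOfEq _ _ W17.ker_Ψ.symm).trans
        (W17.Ψ.quotKerEquivOfSurjective W17.surj_Ψ)))
  constructor
  · exact Module.Finite.equiv E.symm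
  · rw [E.finrank_eq, Module.finrank_prod, Module.finrank_prod,
      Module.finrank_fin_fun, Module.finrank_fin_fun]
end

section
/- The quotient ring ℂ[X,Y,Z]/(6X⁵Z, Z² + 2Y, X⁶ + 2YZ) is a finite-dimensional ℂ-vector space of dimension 21. -/
open MvPolynomial

namespace MilnorS17T

noncomputable section

abbrev R3 : Type := MvPolynomial (Fin 3) ℂ

def g1 : R3 := (6 : R3) * X 0 ^ 5 * X 2
def g2 : R3 := X 2 ^ 2 + 2 * X 1
def g3 : R3 := X 0 ^ 6 + 2 * X 1 * X 2

def Iid : Ideal R3 := Ideal.span {g1, g2, g3}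

abbrev Q : Type := R3 ⧸ Iid

abbrev π : R3 →+* Q := Ideal.Quotient.mk Iid

lemma comb_mem (c1 c2 c3 : R3) : c1 * g1 + c2 * g2 + c3 * g3 ∈ Iid := by
  refine add_mem (add_mem ?_ ?_) ?_ <;>
    exact Ideal.mul_mem_left _ _ (Ideal.subset_span (by simp [g1, g2, g3]))

lemma hC6 : (C (6⁻¹ : ℂ) : R3) * 6 = 1 := by
  rw [show (6 : R3) = C (6 : ℂ) from (map_ofNat C 6).symm, ← C_mul]
  norm_num

lemma hC2 : (C (2⁻¹ : ℂ) : R3) * 2 = 1 := by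
  rw [show (2 : R3) = C (2 : ℂ) from (map_ofNat C 2).symm, ← C_mul]
  norm_num

lemma hx5z : (X 0 ^ 5 * X 2 : R3) ∈ Iid := by
  have h := comb_mem (C (6⁻¹ : ℂ)) 0 0
  have e : C (6⁻¹ : ℂ) * g1 + 0 * g2 + 0 * g3 = (X 0 ^ 5 * X 2 : R3) := by
    rw [g1, g2, g3]; linear_combination (X 0 ^ 5 * X 2 : R3) * hC6
  rwa [e] at h

lemma hx6z3 : (X 0 ^ 6 - X 2 ^ 3 : R3) ∈ Iid := by
  have h := comb_mem 0 (-(X 2)) 1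
  have e : 0 * g1 + -(X 2) * g2 + 1 * g3 = (X 0 ^ 6 - X 2 ^ 3 : R3) := by
    rw [g1, g2, g3]; ring
  rwa [e] at h

lemma hz4 : (X 2 ^ 4 : R3) ∈ Iid := by
  have h := comb_mem (C (6⁻¹ : ℂ) * X 0) (X 2 ^ 2) (-(X 2))
  have e : C (6⁻¹ : ℂ) * X 0 * g1 + X 2 ^ 2 * g2 + -(X 2) * g3 = (X 2 ^ 4 : R3) := by
    rw [g1, g2, g3]; linear_combination (X 0 ^ 6 * X 2 : R3) * hC6
  rwa [e] at h

lemma hyrel : (X 1 + C (2⁻¹ : ℂ) * X 2 ^ 2 : R3) ∈ Iid := by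
  have h := comb_mem 0 (C (2⁻¹ : ℂ)) 0
  have e : 0 * g1 + C (2⁻¹ : ℂ) * g2 + 0 * g3 = (X 1 + C (2⁻¹ : ℂ) * X 2 ^ 2 : R3) := by
    rw [g1, g2, g3]; linear_combination (X 1 : R3) * hC2
  rwa [e] at h


lemma smul_mk (a : ℂ) (p : R3) : a • (π p) = π (C a * p) := by
  rw [← smul_eq_C_mul]
  exact (Submodule.Quotient.mk_smul Iid a p).symm

def idxa (n : Fin 21) : ℕ := if (n : ℕ) = 20 then 5 else (n : ℕ) / 4
def idxb (n : Fin 21) : ℕ := if (n : ℕ) = 20 then 0 else (n : ℕ) % 4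

def v (n : Fin 21) : Q := π (X 0 ^ idxa n * X 2 ^ idxb n)

def S : Submodule ℂ Q := Submodule.span ℂ (Set.range v)

lemma key : ∀ i k : ℕ, π (X 0 ^ i * X 2 ^ k) ∈ S := by
  intro i
  induction i using Nat.strong_induction_on with
  | _ i ih =>
    intro k
    by_cases hk : 4 ≤ k
    · have e : (X 0 ^ i * X 2 ^ k : R3) = X 0 ^ i * X 2 ^ (k - 4) * X 2 ^ 4 := by
        rw [mul_assoc, ← pow_add]; congr 2; omega
      have : π (X 0 ^ i * X 2 ^ k) = 0 := by
        rw [e, map_mul, Ideal.Quotient.eq_zero_iff_mem.2 hz4, mul_zero]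
      rw [this]; exact zero_mem _
    · push_neg at hk
      rcases lt_or_ge i 5 with hi | hi
      · refine Submodule.subset_span ⟨⟨4 * i + k, by omega⟩, ?_⟩
        have ha : idxa ⟨4 * i + k, by omega⟩ = i := by
          simp only [idxa]; rw [if_neg (by omega)]; omega
        have hb : idxb ⟨4 * i + k, by omega⟩ = k := by
          simp only [idxb]; rw [if_neg (by omega)]; omega
        rw [v, ha, hb]
      · rcases lt_or_ge i 6 with hi6 | hi6
        · have hi5 : i = 5 := by omega
          subst hi5
          rcases Nat.eq_zero_or_pos k with hk0 | hkpos
          · subst hk0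
            refine Submodule.subset_span ⟨⟨20, by omega⟩, ?_⟩
            rw [v]; rfl
          · have e : (X 0 ^ 5 * X 2 ^ k : R3) = X 0 ^ 5 * X 2 * X 2 ^ (k - 1) := by
              rw [mul_assoc, ← pow_succ']; congr 2; omega
            have : π (X 0 ^ 5 * X 2 ^ k) = 0 := by
              rw [e, map_mul, Ideal.Quotient.eq_zero_iff_mem.2 hx5z, zero_mul]
            rw [this]; exact zero_mem _
        · have e : π (X 0 ^ i * X 2 ^ k) = π (X 0 ^ (i - 6) * X 2 ^ (k + 3)) := by
            refine (Ideal.Quotient.mk_eq_mk_iff_sub_mem _ _).2 ?_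
            have memb := Ideal.mul_mem_left Iid (X 0 ^ (i - 6) * X 2 ^ k) hx6z3
            have e2 : (X 0 ^ (i - 6) * X 2 ^ k * (X 0 ^ 6 - X 2 ^ 3) : R3) =
                X 0 ^ i * X 2 ^ k - X 0 ^ (i - 6) * X 2 ^ (k + 3) := by
              rw [show i = i - 6 + 6 by omega]
              simp only [Nat.add_sub_cancel]
              ring
            rwa [e2] at memb
          rw [e]; exact ih (i - 6) (by omega) (k + 3)

lemma mono_mem (m : Fin 3 →₀ ℕ) : π (monomial m 1) ∈ S := by
  have hm : (monomial m (1 : ℂ) : R3) = X 0 ^ m 0 * X 1 ^ m 1 * X 2 ^ m 2 := by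
    rw [← prod_X_pow_eq_monomial,
      Finset.prod_subset (Finset.subset_univ m.support)
        (fun x _ hx => by rw [Finsupp.notMem_support_iff.1 hx, pow_zero]),
      Fin.prod_univ_three]
  have hy : π (X 1) = π (C (-2⁻¹ : ℂ) * X 2 ^ 2) := by
    refine (Ideal.Quotient.mk_eq_mk_iff_sub_mem _ _).2 ?_
    have e : (X 1 - C (-2⁻¹ : ℂ) * X 2 ^ 2 : R3) = X 1 + C (2⁻¹ : ℂ) * X 2 ^ 2 := by
      rw [show ((-2⁻¹ : ℂ)) = -(2⁻¹ : ℂ) by norm_num, map_neg]; ring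
    rw [e]; exact hyrel
  have step : π (X 0 ^ m 0 * X 1 ^ m 1 * X 2 ^ m 2)
      = ((-2⁻¹ : ℂ) ^ m 1) • π (X 0 ^ m 0 * X 2 ^ (2 * m 1 + m 2)) := by
    simp only [map_mul, map_pow]
    rw [hy]
    simp only [← map_pow, ← map_mul]
    rw [smul_mk]
    congr 1
    rw [show C ((-2⁻¹ : ℂ) ^ m 1) = (C (-2⁻¹ : ℂ) : R3) ^ m 1 from map_pow C _ _]
    ring
  rw [hm, step]
  exact S.smul_mem _ (key _ _)

lemma span_top : S = ⊤ := by
  rw [eq_top_iff]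
  rintro q -
  obtain ⟨p, rfl⟩ := Ideal.Quotient.mk_surjective q
  induction p using MvPolynomial.induction_on' with
  | monomial m a =>
    have e : (monomial m a : R3) = C a * monomial m 1 := by
      rw [C_mul_monomial, mul_one]
    rw [e, ← smul_mk]
    exact S.smul_mem _ (mono_mem m)
  | add p q hp hq => rw [map_add]; exact add_mem hp hq


/-! ### Matrix representation for the lower bound -/

section MatrixPart
open Matrix

def Mx : Matrix (Fin 21) (Fin 21) ℤ := Matrix.of fun i j =>
  if (j.val < 16 ∧ i.val = j.val + 4) ∨ (j.val = 16 ∧ i.val = 20) ∨ (j.val = 20 ∧ i.val = 3) then 1 else 0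
def Mz : Matrix (Fin 21) (Fin 21) ℤ := Matrix.of fun i j =>
  if (j.val < 20 ∧ j.val % 4 < 3 ∧ i.val = j.val + 1) then 1 else 0

def powVec (M : Matrix (Fin 21) (Fin 21) ℤ) : ℕ → (Fin 21 → ℤ) → (Fin 21 → ℤ)
  | 0, w => w
  | n + 1, w => powVec M n (M *ᵥ w)

set_option maxHeartbeats 2000000 in
set_option maxRecDepth 20000 in
lemma d1 : ∀ j : Fin 21, Mx *ᵥ (Mz *ᵥ Pi.single j 1) = Mz *ᵥ (Mx *ᵥ Pi.single j 1) := by decide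
set_option maxHeartbeats 2000000 in
set_option maxRecDepth 20000 in
lemma d2 : ∀ j : Fin 21, powVec Mx 5 (Mz *ᵥ Pi.single j 1) = 0 := by decide
set_option maxHeartbeats 2000000 in
set_option maxRecDepth 20000 in
lemma d3 : ∀ j : Fin 21, powVec Mx 6 (Pi.single j 1) = powVec Mz 3 (Pi.single j 1) := by decide
set_option maxHeartbeats 2000000 in
set_option maxRecDepth 20000 in
lemma d4 : ∀ n : Fin 21,
    powVec Mx (idxa n) (powVec Mz (idxb n) (Pi.single 0 1)) = Pi.single n 1 := by decide

lemma powVec_eq (M : Matrix (Fin 21) (Fin 21) ℤ) : ∀ (k : ℕ) (w : Fin 21 → ℤ),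
    (M ^ k) *ᵥ w = powVec M k w
  | 0, w => by simp [powVec]
  | k + 1, w => by
    rw [pow_succ, ← Matrix.mulVec_mulVec, powVec_eq M k (M *ᵥ w)]; rfl

lemma col_ext {A B : Matrix (Fin 21) (Fin 21) ℤ}
    (h : ∀ j, A *ᵥ Pi.single j 1 = B *ᵥ Pi.single j 1) : A = B := by
  ext i j
  have := congrFun (h j) i
  simpa using this

lemma hcommZ : Mx * Mz = Mz * Mx := by
  refine col_ext fun j => ?_
  rw [← Matrix.mulVec_mulVec, ← Matrix.mulVec_mulVec, d1 j]

lemma hx5zZ : Mx ^ 5 * Mz = 0 := by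
  refine col_ext fun j => ?_
  rw [← Matrix.mulVec_mulVec, powVec_eq, d2 j, Matrix.zero_mulVec]

lemma hx6z3Z : Mx ^ 6 = Mz ^ 3 := by
  refine col_ext fun j => ?_
  rw [powVec_eq, powVec_eq, d3 j]

/-! ### complex matrices -/

def ic : ℤ →+* ℂ := Int.castRingHom ℂ

def MxC : Matrix (Fin 21) (Fin 21) ℂ := Mx.map ic
def MzC : Matrix (Fin 21) (Fin 21) ℂ := Mz.map ic
def MyC : Matrix (Fin 21) (Fin 21) ℂ := (-2⁻¹ : ℂ) • (MzC * MzC)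

lemma map_mulZ (A B : Matrix (Fin 21) (Fin 21) ℤ) :
    ((A * B).map ic : Matrix (Fin 21) (Fin 21) ℂ) = A.map ic * B.map ic :=
  Matrix.map_mul

lemma map_powZ (A : Matrix (Fin 21) (Fin 21) ℤ) (k : ℕ) :
    ((A ^ k).map ic : Matrix (Fin 21) (Fin 21) ℂ) = (A.map ic) ^ k := by
  simpa [RingHom.mapMatrix_apply] using
    (map_pow (ic.mapMatrix : Matrix (Fin 21) (Fin 21) ℤ →+* Matrix (Fin 21) (Fin 21) ℂ) A k)

lemma hcommC : MxC * MzC = MzC * MxC := by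
  rw [MxC, MzC, ← map_mulZ, ← map_mulZ, hcommZ]

lemma hX5ZC : MxC ^ 5 * MzC = 0 := by
  rw [MxC, MzC, ← map_powZ, ← map_mulZ, hx5zZ]
  exact Matrix.map_zero _ ic.map_zero

lemma hX6Z3C : MxC ^ 6 = MzC ^ 3 := by
  rw [MxC, MzC, ← map_powZ, ← map_powZ, hx6z3Z]

lemma comm_xy : MxC * MyC = MyC * MxC := by
  rw [MyC, mul_smul_comm, Matrix.smul_mul, ← mul_assoc, hcommC, mul_assoc, hcommC, mul_assoc]

lemma comm_yz : MyC * MzC = MzC * MyC := by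
  rw [MyC, mul_smul_comm, Matrix.smul_mul, mul_assoc]

def sgen : Set (Matrix (Fin 21) (Fin 21) ℂ) := {MxC, MyC, MzC}

lemma hcommSet : ∀ a ∈ sgen, ∀ b ∈ sgen, a * b = b * a := by
  intro a ha b hb
  simp only [sgen, Set.mem_insert_iff, Set.mem_singleton_iff] at ha hb
  rcases ha with rfl | rfl | rfl <;> rcases hb with rfl | rfl | rfl <;>
    first
      | rfl
      | exact comm_xy
      | exact comm_xy.symm
      | exact comm_yz
      | exact comm_yz.symm
      | exact hcommC
      | exact hcommC.symm

theorem exists_rho : ∃ ρ : R3 →ₐ[ℂ] Matrix (Fin 21) (Fin 21) ℂ,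
    ρ (X 0) = MxC ∧ ρ (X 1) = MyC ∧ ρ (X 2) = MzC := by
  letI : CommRing (Algebra.adjoin ℂ sgen) := Algebra.adjoinCommRingOfComm ℂ hcommSet
  let f3 : Fin 3 → Algebra.adjoin ℂ sgen :=
    ![⟨MxC, Algebra.subset_adjoin (by simp [sgen])⟩,
      ⟨MyC, Algebra.subset_adjoin (by simp [sgen])⟩,
      ⟨MzC, Algebra.subset_adjoin (by simp [sgen])⟩]
  refine ⟨(Algebra.adjoin ℂ sgen).val.comp (MvPolynomial.aeval f3), ?_, ?_, ?_⟩ <;>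
    simp [f3]

def ρ : R3 →ₐ[ℂ] Matrix (Fin 21) (Fin 21) ℂ := exists_rho.choose

lemma hρx : ρ (X 0) = MxC := exists_rho.choose_spec.1
lemma hρy : ρ (X 1) = MyC := exists_rho.choose_spec.2.1
lemma hρz : ρ (X 2) = MzC := exists_rho.choose_spec.2.2

lemma h2MyC : (2 : Matrix (Fin 21) (Fin 21) ℂ) * MyC = -(MzC * MzC) := by
  rw [MyC, mul_smul_comm, two_mul, smul_add, ← add_smul]
  norm_num

lemma hρg1 : ρ g1 = 0 := by
  rw [g1, _root_.map_mul, _root_.map_mul, _root_.map_pow, map_ofNat, hρx, hρz,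
    mul_assoc, hX5ZC, mul_zero]

lemma hρg2 : ρ g2 = 0 := by
  rw [g2, map_add, _root_.map_pow, _root_.map_mul, map_ofNat, hρy, hρz, h2MyC, sq,
    add_neg_cancel]

lemma hρg3 : ρ g3 = 0 := by
  rw [g3, map_add, _root_.map_pow, _root_.map_mul, _root_.map_mul, map_ofNat, hρx, hρy, hρz,
    hX6Z3C, mul_assoc, ← mul_assoc (2 : Matrix (Fin 21) (Fin 21) ℂ), h2MyC, neg_mul,
    mul_assoc, pow_succ, pow_two, mul_assoc, add_neg_cancel]

lemma hkill : ∀ a ∈ Iid, ρ a = 0 := by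
  have hle : Iid ≤ RingHom.ker (ρ : R3 →+* Matrix (Fin 21) (Fin 21) ℂ) := by
    rw [Iid, Ideal.span_le]
    rintro p hp
    simp only [Set.mem_insert_iff, Set.mem_singleton_iff] at hp
    rcases hp with rfl | rfl | rfl
    · exact RingHom.mem_ker.2 hρg1
    · exact RingHom.mem_ker.2 hρg2
    · exact RingHom.mem_ker.2 hρg3
  exact fun a ha => RingHom.mem_ker.1 (hle ha)

def e0C : Fin 21 → ℂ := Pi.single 0 1

def ε : Matrix (Fin 21) (Fin 21) ℂ →ₗ[ℂ] (Fin 21 → ℂ) where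
  toFun M := M *ᵥ e0C
  map_add' A B := Matrix.add_mulVec A B e0C
  map_smul' c A := by simp [Matrix.smul_mulVec]

def ρbar : Q →ₐ[ℂ] Matrix (Fin 21) (Fin 21) ℂ := Ideal.Quotient.liftₐ Iid ρ hkill

def L : Q →ₗ[ℂ] (Fin 21 → ℂ) := ε.comp ρbar.toLinearMap

lemma L_mk (p : R3) : L (π p) = ρ p *ᵥ e0C := by
  simp [L, ρbar, ε, Ideal.Quotient.liftₐ_apply]
  exact congrArg (· *ᵥ e0C) (Ideal.Quotient.lift_mk _ _ _)

def castVec (w : Fin 21 → ℤ) : Fin 21 → ℂ := fun i => (w i : ℂ)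

lemma cast_mulVec (M : Matrix (Fin 21) (Fin 21) ℤ) (w : Fin 21 → ℤ) :
    (M.map ic) *ᵥ castVec w = castVec (M *ᵥ w) := by
  funext i
  exact (RingHom.map_mulVec ic M w i).symm

lemma cast_powVec (M : Matrix (Fin 21) (Fin 21) ℤ) : ∀ (k : ℕ) (w : Fin 21 → ℤ),
    ((M.map ic) ^ k) *ᵥ castVec w = castVec (powVec M k w)
  | 0, w => by simp [powVec, Matrix.one_mulVec]
  | k + 1, w => by
    rw [pow_succ, ← Matrix.mulVec_mulVec, cast_mulVec, cast_powVec M k (M *ᵥ w)]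
    rfl

lemma cast_single (j : Fin 21) : castVec (Pi.single j 1) = Pi.single j 1 := by
  funext i
  simp [castVec, Pi.single_apply, apply_ite (Int.cast : ℤ → ℂ)]

lemma L_v (n : Fin 21) : L (v n) = Pi.single n 1 := by
  rw [v, L_mk]
  have e : ρ (X 0 ^ idxa n * X 2 ^ idxb n) = MxC ^ idxa n * MzC ^ idxb n := by
    rw [_root_.map_mul, _root_.map_pow, _root_.map_pow, hρx, hρz]
  rw [e, ← Matrix.mulVec_mulVec,
    show e0C = castVec (Pi.single 0 1) from (cast_single 0).symm, MzC, cast_powVec,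
    MxC, cast_powVec, d4 n, cast_single]

lemma L_range : LinearMap.range L = ⊤ := by
  rw [eq_top_iff, ← (Pi.basisFun ℂ (Fin 21)).span_eq, Submodule.span_le]
  rintro w ⟨n, rfl⟩
  rw [Pi.basisFun_apply]
  exact ⟨v n, L_v n⟩

end MatrixPart

theorem findim : FiniteDimensional ℂ Q :=
  ⟨⟨(Set.finite_range v).toFinset, by
    rw [Set.Finite.coe_toFinset]; exact span_top⟩⟩

theorem rank21 : Module.finrank ℂ Q = 21 := by
  haveI := findim
  have upper : Module.finrank ℂ Q ≤ 21 := by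
    have h := finrank_range_le_card (R := ℂ) v
    have h' : Module.finrank ℂ ↥(Submodule.span ℂ (Set.range v)) ≤ 21 := by
      simpa [Set.finrank] using h
    rw [show Submodule.span ℂ (Set.range v) = ⊤ from span_top, finrank_top] at h'
    exact h'
  have lower : 21 ≤ Module.finrank ℂ Q := by
    have h := LinearMap.finrank_range_le L
    rw [L_range, finrank_top, Module.finrank_pi] at h
    simpa using h
  omega

end

end MilnorS17T

open MvPolynomial

theorem milnor_ring_S17T_dim :
    FiniteDimensional ℂ (MvPolynomial (Fin 3) ℂ ⧸
      Ideal.span ({(6 : MvPolynomial (Fin 3) ℂ) * X 0 ^ 5 * X 2, X 2 ^ 2 + 2 * X 1, X 0 ^ 6 + 2 * X 1 * X 2} : Set (MvPolynomial (Fin 3) ℂ))) ∧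
    Module.finrank ℂ (MvPolynomial (Fin 3) ℂ ⧸
      Ideal.span ({(6 : MvPolynomial (Fin 3) ℂ) * X 0 ^ 5 * X 2, X 2 ^ 2 + 2 * X 1, X 0 ^ 6 + 2 * X 1 * X 2} : Set (MvPolynomial (Fin 3) ℂ))) = 21 := by
  exact ⟨MilnorS17T.findim, MilnorS17T.rank21⟩
end

section
/- For every b ∈ ℂ with 4b³ + 27 ≠ 0, the quotient ring ℂ[x,y]/(3x² + 2bxy³, 3bx²y² + 9y⁸) is a finite-dimensional ℂ-vector space of dimension 16. -/
open MvPolynomial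

noncomputable section MilnorJ30

abbrev S2 : Type := MvPolynomial (Fin 2) ℂ
def mexp (a c : ℕ) : Fin 2 →₀ ℕ := Finsupp.single 0 a + Finsupp.single 1 c

lemma mexp_apply0 (a c : ℕ) : (mexp a c) 0 = a := by
  simp [mexp, Finsupp.single_apply]

lemma mexp_apply1 (a c : ℕ) : (mexp a c) 1 = c := by
  simp [mexp, Finsupp.single_apply]

lemma mexp_eq_iff {a c a' c' : ℕ} : mexp a c = mexp a' c' ↔ a = a' ∧ c = c' := by
  constructor
  · intro h
    have h0 := DFunLike.congr_fun h (0 : Fin 2)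
    have h1 := DFunLike.congr_fun h (1 : Fin 2)
    rw [mexp_apply0, mexp_apply0] at h0
    rw [mexp_apply1, mexp_apply1] at h1
    exact ⟨h0, h1⟩
  · rintro ⟨rfl, rfl⟩; rfl

lemma Xpow_eq (a c : ℕ) : (X 0 ^ a * X 1 ^ c : S2) = monomial (mexp a c) 1 := by
  rw [X_pow_eq_monomial, X_pow_eq_monomial, monomial_mul, one_mul]
  rfl

lemma coeff_mexp (a' c' a c : ℕ) :
    coeff (mexp a' c') (X 0 ^ a * X 1 ^ c : S2) = if a = a' ∧ c = c' then 1 else 0 := by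
  rw [Xpow_eq, coeff_monomial]
  simp [mexp_eq_iff]


def T (b : ℂ) (i j : ℕ) : S2 :=
    (b ^ 2 * ((Nat.descFactorial 10 j * Nat.descFactorial 0 i : ℕ) : ℂ)) •
      (X 0 ^ (0 - i) * X 1 ^ (10 - j))
  + ((3240 : ℂ) * ((Nat.descFactorial 7 j * Nat.descFactorial 1 i : ℕ) : ℂ)) •
      (X 0 ^ (1 - i) * X 1 ^ (7 - j))
  + ((-226800 : ℂ) * b * ((Nat.descFactorial 4 j * Nat.descFactorial 2 i : ℕ) : ℂ)) •
      (X 0 ^ (2 - i) * X 1 ^ (4 - j))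
  + ((1209600 : ℂ) * b ^ 2 * ((Nat.descFactorial 1 j * Nat.descFactorial 3 i : ℕ) : ℂ)) •
      (X 0 ^ (3 - i) * X 1 ^ (1 - j))
lemma T_eq_zero (b : ℂ) (i j : ℕ)
    (h1 : Nat.descFactorial 10 j * Nat.descFactorial 0 i = 0)
    (h2 : Nat.descFactorial 7 j * Nat.descFactorial 1 i = 0)
    (h3 : Nat.descFactorial 4 j * Nat.descFactorial 2 i = 0)
    (h4 : Nat.descFactorial 1 j * Nat.descFactorial 3 i = 0) : T b i j = 0 := by
  simp [T, h1, h2, h3, h4]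

lemma TfZero (b : ℂ) (i j : ℕ) : (3:ℂ) • T b (i+2) j + (2*b) • T b (i+1) (j+3) = 0 := by
  rcases Nat.lt_or_ge i 2 with hi | hi
  · rcases Nat.lt_or_ge j 5 with hj | hj
    · interval_cases i <;> interval_cases j <;>
        (simp only [T, Nat.descFactorial]; norm_num; try module)
    · rw [T_eq_zero, T_eq_zero] <;>
        first
        | (simp only [Nat.mul_eq_zero, Nat.descFactorial_eq_zero_iff_lt] <;> omega)
        | simp
  · rw [T_eq_zero, T_eq_zero] <;>
      first
        | (simp only [Nat.mul_eq_zero, Nat.descFactorial_eq_zero_iff_lt] <;> omega)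
        | simp

lemma TgZero (b : ℂ) (i j : ℕ) : (3*b) • T b (i+2) (j+2) + (9:ℂ) • T b i (j+8) = 0 := by
  rcases Nat.lt_or_ge i 1 with hi | hi
  · rcases Nat.lt_or_ge j 3 with hj | hj
    · interval_cases i <;> interval_cases j <;>
        (simp only [T, Nat.descFactorial]; norm_num; try module)
    · rw [T_eq_zero, T_eq_zero] <;>
        first
        | (simp only [Nat.mul_eq_zero, Nat.descFactorial_eq_zero_iff_lt] <;> omega)
        | simp
  · rw [T_eq_zero, T_eq_zero] <;>
      first
        | (simp only [Nat.mul_eq_zero, Nat.descFactorial_eq_zero_iff_lt] <;> omega)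
        | simp

def fP (b : ℂ) : S2 := 3 * X 0 ^ 2 + 2 * C b * X 0 * X 1 ^ 3
def gP (b : ℂ) : S2 := 3 * C b * X 0 ^ 2 * X 1 ^ 2 + 9 * X 1 ^ 8
def Ib (b : ℂ) : Ideal S2 := Ideal.span {fP b, gP b}

lemma monomial_mexp (a c : ℕ) (r : ℂ) :
    (monomial (mexp a c) r : S2) = C r * (X 0 ^ a * X 1 ^ c) := by
  rw [Xpow_eq, C_mul_monomial, mul_one]

lemma fP_eq (b : ℂ) : fP b = monomial (mexp 2 0) 3 + monomial (mexp 1 3) (2*b) := by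
  rw [monomial_mexp, monomial_mexp]
  simp only [fP, map_mul, map_ofNat]
  ring

lemma gP_eq (b : ℂ) : gP b = monomial (mexp 2 2) (3*b) + monomial (mexp 0 8) 9 := by
  rw [monomial_mexp, monomial_mexp]
  simp only [gP, map_mul, map_ofNat]
  ring

def L (b : ℂ) : S2 →ₗ[ℂ] S2 :=
  (basisMonomials (Fin 2) ℂ).constr ℂ (fun d => T b (d 0) (d 1))

lemma L_monomial (b : ℂ) (d : Fin 2 →₀ ℕ) (c : ℂ) :
    L b (monomial d c) = c • T b (d 0) (d 1) := by
  have h : (monomial d c : S2) = c • (basisMonomials (Fin 2) ℂ d) := by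
    rw [coe_basisMonomials]
    simp [smul_monomial]
  rw [h, map_smul, L, Module.Basis.constr_basis]

lemma L_mul_f (b : ℂ) (p : S2) : L b (p * fP b) = 0 := by
  induction p using MvPolynomial.induction_on' with
  | monomial d c =>
      rw [fP_eq, mul_add, monomial_mul, monomial_mul, map_add, L_monomial, L_monomial]
      simp only [Finsupp.add_apply, mexp_apply0, mexp_apply1]
      have h := TfZero b (d 0) (d 1)
      calc (c * 3) • T b (d 0 + 2) (d 1 + 0) + (c * (2*b)) • T b (d 0 + 1) (d 1 + 3)
          = c • ((3:ℂ) • T b (d 0 + 2) (d 1) + (2*b) • T b (d 0 + 1) (d 1 + 3)) := by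
            simp [smul_smul, add_zero]
        _ = 0 := by rw [h, smul_zero]
  | add p q hp hq => rw [add_mul, map_add, hp, hq, add_zero]

lemma L_mul_g (b : ℂ) (p : S2) : L b (p * gP b) = 0 := by
  induction p using MvPolynomial.induction_on' with
  | monomial d c =>
      rw [gP_eq, mul_add, monomial_mul, monomial_mul, map_add, L_monomial, L_monomial]
      simp only [Finsupp.add_apply, mexp_apply0, mexp_apply1]
      have h := TgZero b (d 0) (d 1)
      calc (c * (3*b)) • T b (d 0 + 2) (d 1 + 2) + (c * 9) • T b (d 0 + 0) (d 1 + 8)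
          = c • ((3*b) • T b (d 0 + 2) (d 1 + 2) + (9:ℂ) • T b (d 0) (d 1 + 8)) := by
            simp [smul_smul, add_zero]
        _ = 0 := by rw [h, smul_zero]
  | add p q hp hq => rw [add_mul, map_add, hp, hq, add_zero]

lemma L_ann (b : ℂ) {p : S2} (hp : p ∈ Ib b) : L b p = 0 := by
  rcases Ideal.mem_span_pair.mp hp with ⟨u, v, rfl⟩
  rw [map_add, L_mul_f, L_mul_g, add_zero]

lemma hfI (b : ℂ) : fP b ∈ Ib b := Ideal.subset_span (by simp)
lemma hgI (b : ℂ) : gP b ∈ Ib b := Ideal.subset_span (by simp)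

lemma mem_of_C_mul (b : ℂ) {c : ℂ} (hc : c ≠ 0) {p : S2} (h : C c * p ∈ Ib b) : p ∈ Ib b := by
  have h2 := Ideal.mul_mem_left (Ib b) (C c⁻¹) h
  rwa [← mul_assoc, ← map_mul, inv_mul_cancel₀ hc, map_one, one_mul] at h2

lemma mem_xy8 (b : ℂ) (hb : 4 * b ^ 3 + 27 ≠ 0) : (X 0 * X 1 ^ 8 : S2) ∈ Ib b := by
  apply mem_of_C_mul b hb
  have key : C (4 * b ^ 3 + 27) * (X 0 * X 1 ^ 8 : S2) =
      (2 * C b ^ 2 * X 1 ^ 5 - 3 * C b * X 0 * X 1 ^ 2) * fP b + (3 * X 0) * gP b := by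
    simp only [fP, gP, map_add, map_mul, map_pow, map_ofNat]
    ring
  rw [key]
  exact Ideal.add_mem _ (Ideal.mul_mem_left _ _ (hfI b)) (Ideal.mul_mem_left _ _ (hgI b))

lemma mem_xy8plus (b : ℂ) (hb : 4 * b ^ 3 + 27 ≠ 0) (k : ℕ) :
    (X 0 * X 1 ^ (8 + k) : S2) ∈ Ib b := by
  have h : (X 0 * X 1 ^ (8 + k) : S2) = X 1 ^ k * (X 0 * X 1 ^ 8) := by ring
  rw [h]
  exact Ideal.mul_mem_left _ _ (mem_xy8 b hb)

lemma mem_x2yplus (b : ℂ) (hb : 4 * b ^ 3 + 27 ≠ 0) (k : ℕ) :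
    (X 0 ^ 2 * X 1 ^ (5 + k) : S2) ∈ Ib b := by
  apply mem_of_C_mul b (c := 3) (by norm_num)
  have key : C (3:ℂ) * (X 0 ^ 2 * X 1 ^ (5 + k) : S2) =
      X 1 ^ (5 + k) * fP b - 2 * C b * (X 1 ^ k * (X 0 * X 1 ^ 8)) := by
    simp only [fP, map_ofNat]
    ring
  rw [key]
  refine Ideal.sub_mem _ (Ideal.mul_mem_left _ _ (hfI b)) ?_
  exact Ideal.mul_mem_left _ _ (Ideal.mul_mem_left _ _ (mem_xy8 b hb))

def mkA (b : ℂ) : S2 →ₐ[ℂ] (S2 ⧸ Ib b) := Ideal.Quotient.mkₐ ℂ (Ib b)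

lemma mkA_C_mul (b : ℂ) (c : ℂ) (p : S2) : mkA b (C c * p) = c • mkA b p := by
  rw [← smul_eq_C_mul, map_smul]

def vB (b : ℂ) : Fin 2 × Fin 8 → (S2 ⧸ Ib b) :=
  fun k => mkA b (X 0 ^ (k.1 : ℕ) * X 1 ^ (k.2 : ℕ))

lemma red2 (b : ℂ) {p q : S2} {c₁ c₂ : ℂ} (hc : c₁ ≠ 0)
    (h : C c₁ * p - C c₂ * q ∈ Ib b) {M : Submodule ℂ (S2 ⧸ Ib b)}
    (hq : mkA b q ∈ M) : mkA b p ∈ M := by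
  have e : mkA b (C c₁ * p) = mkA b (C c₂ * q) := by
    simp only [mkA, Ideal.Quotient.mkₐ_eq_mk]
    exact Ideal.Quotient.eq.mpr h
  rw [mkA_C_mul, mkA_C_mul] at e
  have : mkA b p = c₁⁻¹ • (c₂ • mkA b q) := by
    rw [← e, smul_smul, inv_mul_cancel₀ hc, one_smul]
  rw [this]
  exact Submodule.smul_mem _ _ (Submodule.smul_mem _ _ hq)

lemma mkA_zero_of_mem (b : ℂ) {p : S2} (h : p ∈ Ib b) : mkA b p = 0 := by
  simp only [mkA, Ideal.Quotient.mkₐ_eq_mk]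
  exact Ideal.Quotient.eq_zero_iff_mem.mpr h

lemma Mmono (b : ℂ) (hb : 4 * b ^ 3 + 27 ≠ 0) (a c : ℕ) (ha : a ≤ 2) (hc : c ≤ 8) :
    mkA b (X 0 ^ a * X 1 ^ c) ∈ Submodule.span ℂ (Set.range (vB b)) := by
  set M := Submodule.span ℂ (Set.range (vB b)) with hM
  have hv : ∀ (a' c' : ℕ), a' < 2 → c' < 8 → mkA b (X 0 ^ a' * X 1 ^ c') ∈ M := by
    intro a' c' ha' hc'
    exact Submodule.subset_span ⟨(⟨a', ha'⟩, ⟨c', hc'⟩), rfl⟩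
  rcases Nat.lt_or_ge c 8 with hc8 | hc8
  · rcases Nat.lt_or_ge a 2 with ha2 | ha2
    · exact hv a c ha2 hc8
    · have ha2' : a = 2 := by omega
      subst ha2'
      rcases Nat.lt_or_ge c 5 with hc5 | hc5
      · -- reduction x² y^c  →  x y^{c+3}
        refine red2 b (c₁ := 3) (c₂ := -(2*b)) (by norm_num) ?_ (hv 1 (c + 3) (by norm_num) (by omega))
        have key : C (3:ℂ) * (X 0 ^ 2 * X 1 ^ c) - C (-(2*b)) * (X 0 ^ 1 * X 1 ^ (c + 3))
            = X 1 ^ c * fP b := by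
          simp only [fP, map_ofNat, map_neg, map_mul]
          ring
        rw [key]
        exact Ideal.mul_mem_left _ _ (hfI b)
      · -- c ∈ {5,6,7} : x² y^c ∈ I
        have hc' : c = 5 + (c - 5) := by omega
        rw [hc', mkA_zero_of_mem b (mem_x2yplus b hb (c - 5))]
        exact Submodule.zero_mem M
  · have hc8' : c = 8 := by omega
    subst hc8'
    interval_cases a
    · -- y⁸ reduction
      rw [pow_zero, one_mul]
      refine red2 b (c₁ := 9) (c₂ := 2*b^2) (by norm_num) ?_ (hv 1 5 (by norm_num) (by norm_num))
      have key : C (9:ℂ) * (X 1 ^ 8 : S2) - C (2*b^2) * (X 0 ^ 1 * X 1 ^ 5)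
          = gP b - C b * X 1 ^ 2 * fP b := by
        simp only [fP, gP, map_ofNat, map_mul, map_pow]
        ring
      rw [key]
      exact Ideal.sub_mem _ (hgI b) (Ideal.mul_mem_left _ _ (hfI b))
    · rw [mkA_zero_of_mem b (by simpa using mem_xy8plus b hb 0)]
      · exact Submodule.zero_mem M
    · have h : (X 0 ^ 2 * X 1 ^ 8 : S2) = X 1 ^ 3 * (X 0 ^ 2 * X 1 ^ (5 + 0)) := by ring
      rw [h, mkA_zero_of_mem b (Ideal.mul_mem_left _ _ (mem_x2yplus b hb 0))]
      exact Submodule.zero_mem M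

lemma span_top_s16 (b : ℂ) (hb : 4 * b ^ 3 + 27 ≠ 0) :
    ⊤ ≤ Submodule.span ℂ (Set.range (vB b)) := by
  set M := Submodule.span ℂ (Set.range (vB b)) with hM
  intro z hz
  obtain ⟨p, rfl⟩ := Ideal.Quotient.mkₐ_surjective ℂ (Ib b) z
  clear hz
  show mkA b p ∈ M
  induction p using MvPolynomial.induction_on with
  | C a =>
      have h1 : (C a : S2) = C a * (X 0 ^ 0 * X 1 ^ 0) := by simp
      rw [h1, mkA_C_mul]
      exact Submodule.smul_mem _ _ (Mmono b hb 0 0 (by norm_num) (by norm_num))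
  | add p q hp hq => rw [map_add]; exact Submodule.add_mem _ hp hq
  | mul_X p n hp =>
      rw [map_mul]
      have hmul : ∀ m ∈ M, m * mkA b (X n) ∈ M := by
        intro m hm
        refine Submodule.span_induction ?_ ?_ ?_ ?_ hm
        · rintro x ⟨⟨i, j⟩, rfl⟩
          show vB b (i, j) * mkA b (X n) ∈ M
          have : vB b (i, j) * mkA b (X n) = mkA b ((X 0 ^ (i:ℕ) * X 1 ^ (j:ℕ)) * X n) := by
            rw [map_mul]; rfl
          rw [this]
          have hn : n = 0 ∨ n = 1 := by omega
          rcases hn with rfl | rfl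
          · have h2 : ((X 0 ^ (i:ℕ) * X 1 ^ (j:ℕ)) * X 0 : S2) = X 0 ^ ((i:ℕ)+1) * X 1 ^ (j:ℕ) := by
              ring
            rw [h2]
            exact Mmono b hb _ _ (by omega) (by omega)
          · have h2 : ((X 0 ^ (i:ℕ) * X 1 ^ (j:ℕ)) * X 1 : S2) = X 0 ^ (i:ℕ) * X 1 ^ ((j:ℕ)+1) := by
              ring
            rw [h2]
            exact Mmono b hb _ _ (by omega) (by omega)
        · simp
        · intro x y _ _ hx hy
          rw [add_mul]; exact Submodule.add_mem _ hx hy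
        · intro r x _ hx
          rw [smul_mul_assoc]; exact Submodule.smul_mem _ _ hx
      exact hmul _ hp


lemma cmA (α γ ce : ℕ) : coeff (mexp α γ) (X 1 ^ ce : S2) = if 0 = α ∧ ce = γ then 1 else 0 := by
  rw [show (X 1 ^ ce : S2) = X 0 ^ 0 * X 1 ^ ce by rw [pow_zero, one_mul], coeff_mexp]

lemma cmB (α γ a : ℕ) : coeff (mexp α γ) (X 0 ^ a : S2) = if a = α ∧ 0 = γ then 1 else 0 := by
  rw [show (X 0 ^ a : S2) = X 0 ^ a * X 1 ^ 0 by rw [pow_zero, mul_one], coeff_mexp]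

lemma cmC (α γ ce : ℕ) : coeff (mexp α γ) (X 0 * X 1 ^ ce : S2) = if 1 = α ∧ ce = γ then 1 else 0 := by
  rw [show (X 0 * X 1 ^ ce : S2) = X 0 ^ 1 * X 1 ^ ce by rw [pow_one], coeff_mexp]

lemma cmD (α γ a : ℕ) : coeff (mexp α γ) (X 0 ^ a * X 1 : S2) = if a = α ∧ 1 = γ then 1 else 0 := by
  rw [show (X 0 ^ a * X 1 : S2) = X 0 ^ a * X 1 ^ 1 by rw [pow_one], coeff_mexp]

lemma cmE (α γ : ℕ) : coeff (mexp α γ) (X 0 : S2) = if 1 = α ∧ 0 = γ then 1 else 0 := by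
  rw [show (X 0 : S2) = X 0 ^ 1 * X 1 ^ 0 by rw [pow_one, pow_zero, mul_one], coeff_mexp]

lemma cmF (α γ : ℕ) : coeff (mexp α γ) (X 1 : S2) = if 0 = α ∧ 1 = γ then 1 else 0 := by
  rw [show (X 1 : S2) = X 0 ^ 0 * X 1 ^ 1 by rw [pow_one, pow_zero, one_mul], coeff_mexp]

lemma cmG (α γ : ℕ) : coeff (mexp α γ) (X 0 * X 1 : S2) = if 1 = α ∧ 1 = γ then 1 else 0 := by
  rw [show (X 0 * X 1 : S2) = X 0 ^ 1 * X 1 ^ 1 by rw [pow_one, pow_one], coeff_mexp]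

lemma cmH (α γ : ℕ) : coeff (mexp α γ) (1 : S2) = if 0 = α ∧ 0 = γ then 1 else 0 := by
  rw [show (1 : S2) = X 0 ^ 0 * X 1 ^ 0 by rw [pow_zero, pow_zero, one_mul], coeff_mexp]

lemma fv2_0 : ((0 : Fin 2) : ℕ) = 0 := rfl
lemma fv2_1 : ((1 : Fin 2) : ℕ) = 1 := rfl
lemma fv8_0 : ((0 : Fin 8) : ℕ) = 0 := rfl
lemma fv8_1 : ((1 : Fin 8) : ℕ) = 1 := rfl
lemma fv8_2 : ((2 : Fin 8) : ℕ) = 2 := rfl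
lemma fv8_3 : ((3 : Fin 8) : ℕ) = 3 := rfl
lemma fv8_4 : ((4 : Fin 8) : ℕ) = 4 := rfl
lemma fv8_5 : ((5 : Fin 8) : ℕ) = 5 := rfl
lemma fv8_6 : ((6 : Fin 8) : ℕ) = 6 := rfl
lemma fv8_7 : ((7 : Fin 8) : ℕ) = 7 := rfl

lemma przero : (0 : Fin 2 × Fin 8) = (0, 0) := rfl
lemma prone : (1 : Fin 2 × Fin 8) = (1, 1) := rfl

set_option maxHeartbeats 2000000 in
lemma lin_indep (b : ℂ) (hb : 4 * b ^ 3 + 27 ≠ 0) : LinearIndependent ℂ (vB b) := by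
  rw [Fintype.linearIndependent_iff]
  intro c hc
  have hP : (∑ k : Fin 2 × Fin 8, C (c k) * (X 0 ^ (k.1:ℕ) * X 1 ^ (k.2:ℕ)) : S2) ∈ Ib b := by
    rw [← Ideal.Quotient.eq_zero_iff_mem, map_sum]
    have he : ∀ k : Fin 2 × Fin 8, (Ideal.Quotient.mk (Ib b)) (C (c k) * (X 0 ^ (k.1:ℕ) * X 1 ^ (k.2:ℕ)))
        = c k • vB b k := by
      intro k
      rw [show ((Ideal.Quotient.mk (Ib b)) (C (c k) * (X 0 ^ (k.1:ℕ) * X 1 ^ (k.2:ℕ))))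
          = mkA b (C (c k) * (X 0 ^ (k.1:ℕ) * X 1 ^ (k.2:ℕ))) from rfl, mkA_C_mul]
      rfl
    simp only [he]
    exact hc
  have hL := L_ann b hP
  rw [map_sum] at hL
  have hterm : ∀ k : Fin 2 × Fin 8,
      L b (C (c k) * (X 0 ^ (k.1:ℕ) * X 1 ^ (k.2:ℕ))) = c k • T b (k.1:ℕ) (k.2:ℕ) := by
    intro k
    rw [Xpow_eq, C_mul_monomial, mul_one, L_monomial, mexp_apply0, mexp_apply1]
  simp only [hterm] at hL
  have probe : ∀ α γ : ℕ, ∑ k : Fin 2 × Fin 8, c k * coeff (mexp α γ) (T b (k.1:ℕ) (k.2:ℕ)) = 0 := by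
    intro α γ
    have h2 := congrArg (coeff (mexp α γ)) hL
    rw [coeff_sum] at h2
    simpa [coeff_smul, smul_eq_mul] using h2
  have E17 := probe 1 7
  simp [Fintype.sum_prod_type, Fin.sum_univ_eight, T, coeff_add, coeff_smul, coeff_mexp,
    cmA, cmB, cmC, cmD, cmE, cmF, cmG, cmH, fv2_0, fv2_1, fv8_0, fv8_1, fv8_2, fv8_3, fv8_4,
    fv8_5, fv8_6, fv8_7, Nat.descFactorial] at E17
  have E16 := probe 1 6
  simp [Fintype.sum_prod_type, Fin.sum_univ_eight, T, coeff_add, coeff_smul, coeff_mexp,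
    cmA, cmB, cmC, cmD, cmE, cmF, cmG, cmH, fv2_0, fv2_1, fv8_0, fv8_1, fv8_2, fv8_3, fv8_4,
    fv8_5, fv8_6, fv8_7, Nat.descFactorial] at E16
  have E15 := probe 1 5
  simp [Fintype.sum_prod_type, Fin.sum_univ_eight, T, coeff_add, coeff_smul, coeff_mexp,
    cmA, cmB, cmC, cmD, cmE, cmF, cmG, cmH, fv2_0, fv2_1, fv8_0, fv8_1, fv8_2, fv8_3, fv8_4,
    fv8_5, fv8_6, fv8_7, Nat.descFactorial] at E15
  have E02 := probe 0 2
  simp [Fintype.sum_prod_type, Fin.sum_univ_eight, T, coeff_add, coeff_smul, coeff_mexp,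
    cmA, cmB, cmC, cmD, cmE, cmF, cmG, cmH, fv2_0, fv2_1, fv8_0, fv8_1, fv8_2, fv8_3, fv8_4,
    fv8_5, fv8_6, fv8_7, Nat.descFactorial] at E02
  have E01 := probe 0 1
  simp [Fintype.sum_prod_type, Fin.sum_univ_eight, T, coeff_add, coeff_smul, coeff_mexp,
    cmA, cmB, cmC, cmD, cmE, cmF, cmG, cmH, fv2_0, fv2_1, fv8_0, fv8_1, fv8_2, fv8_3, fv8_4,
    fv8_5, fv8_6, fv8_7, Nat.descFactorial] at E01
  have E00 := probe 0 0
  simp [Fintype.sum_prod_type, Fin.sum_univ_eight, T, coeff_add, coeff_smul, coeff_mexp,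
    cmA, cmB, cmC, cmD, cmE, cmF, cmG, cmH, fv2_0, fv2_1, fv8_0, fv8_1, fv8_2, fv8_3, fv8_4,
    fv8_5, fv8_6, fv8_7, Nat.descFactorial] at E00
  have P7a := probe 0 7
  simp [Fintype.sum_prod_type, Fin.sum_univ_eight, T, coeff_add, coeff_smul, coeff_mexp,
    cmA, cmB, cmC, cmD, cmE, cmF, cmG, cmH, fv2_0, fv2_1, fv8_0, fv8_1, fv8_2, fv8_3, fv8_4,
    fv8_5, fv8_6, fv8_7, Nat.descFactorial] at P7a
  have P7b := probe 1 4
  simp [Fintype.sum_prod_type, Fin.sum_univ_eight, T, coeff_add, coeff_smul, coeff_mexp,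
    cmA, cmB, cmC, cmD, cmE, cmF, cmG, cmH, fv2_0, fv2_1, fv8_0, fv8_1, fv8_2, fv8_3, fv8_4,
    fv8_5, fv8_6, fv8_7, Nat.descFactorial] at P7b
  have P6a := probe 0 6
  simp [Fintype.sum_prod_type, Fin.sum_univ_eight, T, coeff_add, coeff_smul, coeff_mexp,
    cmA, cmB, cmC, cmD, cmE, cmF, cmG, cmH, fv2_0, fv2_1, fv8_0, fv8_1, fv8_2, fv8_3, fv8_4,
    fv8_5, fv8_6, fv8_7, Nat.descFactorial] at P6a
  have P6b := probe 1 3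
  simp [Fintype.sum_prod_type, Fin.sum_univ_eight, T, coeff_add, coeff_smul, coeff_mexp,
    cmA, cmB, cmC, cmD, cmE, cmF, cmG, cmH, fv2_0, fv2_1, fv8_0, fv8_1, fv8_2, fv8_3, fv8_4,
    fv8_5, fv8_6, fv8_7, Nat.descFactorial] at P6b
  have P5a := probe 0 5
  simp [Fintype.sum_prod_type, Fin.sum_univ_eight, T, coeff_add, coeff_smul, coeff_mexp,
    cmA, cmB, cmC, cmD, cmE, cmF, cmG, cmH, fv2_0, fv2_1, fv8_0, fv8_1, fv8_2, fv8_3, fv8_4,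
    fv8_5, fv8_6, fv8_7, Nat.descFactorial] at P5a
  have P5b := probe 1 2
  simp [Fintype.sum_prod_type, Fin.sum_univ_eight, T, coeff_add, coeff_smul, coeff_mexp,
    cmA, cmB, cmC, cmD, cmE, cmF, cmG, cmH, fv2_0, fv2_1, fv8_0, fv8_1, fv8_2, fv8_3, fv8_4,
    fv8_5, fv8_6, fv8_7, Nat.descFactorial] at P5b
  have P4a := probe 0 4
  simp [Fintype.sum_prod_type, Fin.sum_univ_eight, T, coeff_add, coeff_smul, coeff_mexp,
    cmA, cmB, cmC, cmD, cmE, cmF, cmG, cmH, fv2_0, fv2_1, fv8_0, fv8_1, fv8_2, fv8_3, fv8_4,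
    fv8_5, fv8_6, fv8_7, Nat.descFactorial] at P4a
  have P4b := probe 1 1
  simp [Fintype.sum_prod_type, Fin.sum_univ_eight, T, coeff_add, coeff_smul, coeff_mexp,
    cmA, cmB, cmC, cmD, cmE, cmF, cmG, cmH, fv2_0, fv2_1, fv8_0, fv8_1, fv8_2, fv8_3, fv8_4,
    fv8_5, fv8_6, fv8_7, Nat.descFactorial] at P4b
  have P3a := probe 0 3
  simp [Fintype.sum_prod_type, Fin.sum_univ_eight, T, coeff_add, coeff_smul, coeff_mexp,
    cmA, cmB, cmC, cmD, cmE, cmF, cmG, cmH, fv2_0, fv2_1, fv8_0, fv8_1, fv8_2, fv8_3, fv8_4,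
    fv8_5, fv8_6, fv8_7, Nat.descFactorial] at P3a
  have P3b := probe 1 0
  simp [Fintype.sum_prod_type, Fin.sum_univ_eight, T, coeff_add, coeff_smul, coeff_mexp,
    cmA, cmB, cmC, cmD, cmE, cmF, cmG, cmH, fv2_0, fv2_1, fv8_0, fv8_1, fv8_2, fv8_3, fv8_4,
    fv8_5, fv8_6, fv8_7, Nat.descFactorial] at P3b
  have hnz : ∀ z : ℂ, (4 * b ^ 3 + 27) * z = 0 → z = 0 := by
    intro z h
    rcases mul_eq_zero.mp h with h' | h'
    · exact absurd h' hb
    · exact h'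
  have h03 : c (0, 3) = 0 := hnz _ (by linear_combination (b/180) * P7a + ((1:ℂ)/25200) * P7b)
  have h10 : c (1, 0) = 0 := hnz _ (by linear_combination ((1:ℂ)/120) * P7a - (b^2/113400) * P7b)
  have h04 : c (0, 4) = 0 := hnz _ (by linear_combination (b/1260) * P6a + ((1:ℂ)/100800) * P6b)
  have h11 : c (1, 1) = 0 := hnz _ (by linear_combination ((1:ℂ)/840) * P6a - (b^2/453600) * P6b)
  have h05 : c (0, 5) = 0 := hnz _ (by linear_combination (b/7560) * P5a + ((1:ℂ)/302400) * P5b)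
  have h12 : c (1, 2) = 0 := hnz _ (by linear_combination ((1:ℂ)/5040) * P5a - (b^2/1360800) * P5b)
  have h06 : c (0, 6) = 0 := hnz _ (by linear_combination (b/37800) * P4a + ((1:ℂ)/604800) * P4b)
  have h13 : c (1, 3) = 0 := hnz _ (by linear_combination ((1:ℂ)/25200) * P4a - (b^2/2721600) * P4b)
  have h07 : c (0, 7) = 0 := hnz _ (by linear_combination (b/151200) * P3a + ((1:ℂ)/604800) * P3b)
  have h14 : c (1, 4) = 0 := hnz _ (by linear_combination ((1:ℂ)/100800) * P3a - (b^2/2721600) * P3b)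
  intro k
  fin_cases k
  · exact E17
  · exact E16
  · exact E15
  · exact h03
  · exact h04
  · exact h05
  · exact h06
  · exact h07
  · exact h10
  · exact h11
  · exact h12
  · exact h13
  · exact h14
  · exact E02
  · exact E01
  · exact E00

end MilnorJ30

/-- For every `b` with `4b³ + 27 ≠ 0`, the Milnor ring
`ℂ[x,y]/(3x² + 2bxy³, 3bx²y² + 9y⁸)` of `J₃,₀ = x³ + bx²y³ + y⁹` has dimension 16. -/
theorem milnor_ring_J30_dim (b : ℂ) (hb : 4 * b ^ 3 + 27 ≠ 0) :
    FiniteDimensional ℂ (MvPolynomial (Fin 2) ℂ ⧸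
      Ideal.span ({(3 : MvPolynomial (Fin 2) ℂ) * X 0 ^ 2 + 2 * C b * X 0 * X 1 ^ 3,
        3 * C b * X 0 ^ 2 * X 1 ^ 2 + 9 * X 1 ^ 8} : Set (MvPolynomial (Fin 2) ℂ))) ∧
    Module.finrank ℂ (MvPolynomial (Fin 2) ℂ ⧸
      Ideal.span ({(3 : MvPolynomial (Fin 2) ℂ) * X 0 ^ 2 + 2 * C b * X 0 * X 1 ^ 3,
        3 * C b * X 0 ^ 2 * X 1 ^ 2 + 9 * X 1 ^ 8} : Set (MvPolynomial (Fin 2) ℂ))) = 16 := by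
  show FiniteDimensional ℂ (S2 ⧸ Ib b) ∧ Module.finrank ℂ (S2 ⧸ Ib b) = 16
  have BB : Module.Basis (Fin 2 × Fin 8) ℂ (S2 ⧸ Ib b) := Module.Basis.mk (lin_indep b hb) (span_top_s16 b hb)
  have fd : FiniteDimensional ℂ (S2 ⧸ Ib b) := Module.Finite.of_basis BB
  refine ⟨fd, ?_⟩
  rw [Module.finrank_eq_card_basis BB]
  simp
end
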